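/- arXiv:2209.13186 — 7 statements merged into one kernel-verified Lean document; each statement's English description precedes it below -/
import Mathlib

section
/- Let b be a prime, k a positive integer with NRT weight μ_1(k) = c, and k' a positive integer also with μ_1(k') = c. Fix n ≥ c. Among all n×n lower-triangular matrices L over F_b with nonzero diagonal entries, the proportion of L with L^T k⃗ = k⃗' (where k⃗ denotes the length-n digit vector of k) is exactly 1 / ((b-1) b^{c-1}). -/
/-- The `i`-th base-`b` digit of `k`, viewed in `F_b`. -/
def digitVec (b k i : ℕ) : ZMod b := ((Nat.digits b k).getD i 0 : ZMod b)

/-- The NRT weight `μ₁(k)`. -/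
def nrtWeight (b k : ℕ) : ℕ := (Nat.digits b k).length

/-- Fix row `m` of `L` so that the transpose-mulVec constraint holds. -/
def fixM {b n : ℕ} (c : ℕ) (d d' : Fin n → ZMod b) (m : Fin n)
    (L : Matrix (Fin n) (Fin n) (ZMod b)) : Matrix (Fin n) (Fin n) (ZMod b) :=
  fun i j => if i = m ∧ (j : ℕ) ≤ c - 1 then
    (d' j - ∑ r ∈ Finset.univ.erase m, L r j * d r) * (d m)⁻¹ else L i j

lemma fixM_apply {b n : ℕ} (c : ℕ) (d d' : Fin n → ZMod b) (m : Fin n)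
    (L : Matrix (Fin n) (Fin n) (ZMod b)) (i j : Fin n) :
    fixM c d d' m L i j = if i = m ∧ (j : ℕ) ≤ c - 1 then
      (d' j - ∑ r ∈ Finset.univ.erase m, L r j * d r) * (d m)⁻¹ else L i j := rfl

/-- Replace row `m` (columns `< c`) of `M` by given data. -/
def replM {b n : ℕ} (c : ℕ) (m : Fin n) (M : Matrix (Fin n) (Fin n) (ZMod b))
    (u : ZMod b) (v : Fin (c - 1) → ZMod b) : Matrix (Fin n) (Fin n) (ZMod b) :=
  fun i j => if h : i = m ∧ (j : ℕ) < c - 1 then v ⟨j, h.2⟩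
    else if i = m ∧ j = m then u else M i j

lemma replM_apply {b n : ℕ} (c : ℕ) (m : Fin n) (M : Matrix (Fin n) (Fin n) (ZMod b))
    (u : ZMod b) (v : Fin (c - 1) → ZMod b) (i j : Fin n) :
    replM c m M u v i j = if h : i = m ∧ (j : ℕ) < c - 1 then v ⟨j, h.2⟩
      else if i = m ∧ j = m then u else M i j := rfl

lemma card_aux (b n c : ℕ) (hb : b.Prime) (hc : 0 < c) (hn : c ≤ n)
    (d d' : Fin n → ZMod b)
    (hd0 : ∀ j : Fin n, c ≤ (j : ℕ) → d j = 0)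
    (hd'0 : ∀ j : Fin n, c ≤ (j : ℕ) → d' j = 0)
    (hdm : d ⟨c - 1, by omega⟩ ≠ 0)
    (hd'm : d' ⟨c - 1, by omega⟩ ≠ 0) :
    Nat.card {L : Matrix (Fin n) (Fin n) (ZMod b) //
        (∀ i j : Fin n, (i : ℕ) < (j : ℕ) → L i j = 0) ∧ (∀ i, L i i ≠ 0)}
      = Nat.card {L : Matrix (Fin n) (Fin n) (ZMod b) //
        (∀ i j : Fin n, (i : ℕ) < (j : ℕ) → L i j = 0) ∧ (∀ i, L i i ≠ 0) ∧
        L.transpose.mulVec d = d'} * ((b - 1) * b ^ (c - 1)) := by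
  haveI : Fact b.Prime := ⟨hb⟩
  set m : Fin n := ⟨c - 1, by omega⟩ with hm
  have hmv : (m : ℕ) = c - 1 := rfl
  have hsum : ∀ (L : Matrix (Fin n) (Fin n) (ZMod b)) (j : Fin n),
      L.transpose.mulVec d j = ∑ r : Fin n, L r j * d r := by
    intro L j
    simp [Matrix.mulVec, Matrix.transpose_apply, dotProduct]
  -- fixM of a good matrix lands in the constrained set
  have key : ∀ (L : Matrix (Fin n) (Fin n) (ZMod b)),
      (∀ i j : Fin n, (i : ℕ) < (j : ℕ) → L i j = 0) →
      (∀ i, L i i ≠ 0) →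
      (∀ i j : Fin n, (i : ℕ) < (j : ℕ) → fixM c d d' m L i j = 0) ∧
        (∀ i, fixM c d d' m L i i ≠ 0) ∧
        (fixM c d d' m L).transpose.mulVec d = d' := by
    intro L hlo hdiag
    refine ⟨?_, ?_, ?_⟩
    · intro i j hij
      rw [fixM_apply, if_neg, hlo i j hij]
      rintro ⟨hi, h2⟩
      rw [hi] at hij
      omega
    · intro i
      by_cases hi : i = m
      · rw [fixM_apply, if_pos ⟨hi, by rw [hi, hmv]⟩]
        have hz : ∑ r ∈ Finset.univ.erase m, L r i * d r = 0 := by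
          apply Finset.sum_eq_zero
          intro r hr
          simp only [Finset.mem_erase] at hr
          by_cases hrc : c ≤ (r : ℕ)
          · rw [hd0 r hrc, mul_zero]
          · have : (r : ℕ) < (i : ℕ) := by
              have h1 : (r : ℕ) ≠ c - 1 := fun h => hr.1 (Fin.ext (h.trans hmv.symm))
              have : (i : ℕ) = c - 1 := by rw [hi, hmv]
              omega
            rw [hlo r i this, zero_mul]
        rw [hz, sub_zero, hi]
        exact mul_ne_zero hd'm (inv_ne_zero hdm)
      · rw [fixM_apply, if_neg (by tauto)]
        exact hdiag i
    · funext j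
      rw [hsum]
      by_cases hj : (j : ℕ) ≤ c - 1
      · have hrw : ∀ r ∈ Finset.univ.erase m, fixM c d d' m L r j * d r = L r j * d r := by
          intro r hr
          simp only [Finset.mem_erase] at hr
          rw [fixM_apply, if_neg (by tauto)]
        rw [← Finset.sum_erase_add _ _ (Finset.mem_univ m), Finset.sum_congr rfl hrw,
          fixM_apply, if_pos ⟨rfl, hj⟩]
        rw [mul_assoc, inv_mul_cancel₀ hdm, mul_one]
        ring
      · rw [hd'0 j (by omega)]
        apply Finset.sum_eq_zero
        intro r _
        by_cases hrc : c ≤ (r : ℕ)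
        · rw [hd0 r hrc, mul_zero]
        · have hrj : (r : ℕ) < (j : ℕ) := by omega
          rw [fixM_apply, if_neg (by omega), hlo r j hrj, zero_mul]
  -- the equivalence
  let e : {L : Matrix (Fin n) (Fin n) (ZMod b) //
        (∀ i j : Fin n, (i : ℕ) < (j : ℕ) → L i j = 0) ∧ (∀ i, L i i ≠ 0)} ≃
      {L : Matrix (Fin n) (Fin n) (ZMod b) //
        (∀ i j : Fin n, (i : ℕ) < (j : ℕ) → L i j = 0) ∧ (∀ i, L i i ≠ 0) ∧
        L.transpose.mulVec d = d'} × ({x : ZMod b // x ≠ 0} × (Fin (c - 1) → ZMod b)) :=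
    { toFun := fun L => ⟨⟨fixM c d d' m L.1, key L.1 L.2.1 L.2.2⟩,
        ⟨L.1 m m, L.2.2 m⟩, fun j => L.1 m ⟨j, by omega⟩⟩
      invFun := fun P => ⟨replM c m P.1.1 P.2.1.1 P.2.2, by
        obtain ⟨⟨M, hMlo, hMd, _⟩, ⟨u, hu⟩, v⟩ := P
        constructor
        · intro i j hij
          show replM c m M u v i j = 0
          rw [replM_apply, dif_neg, if_neg, hMlo i j hij]
          · rintro ⟨hi, hj⟩
            rw [hi] at hij; rw [hj] at hij; omega
          · rintro ⟨hi, h2⟩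
            rw [hi] at hij
            omega
        · intro i
          show replM c m M u v i i ≠ 0
          by_cases hi : i = m
          · rw [replM_apply, dif_neg, if_pos ⟨hi, hi⟩]
            · exact hu
            · rintro ⟨hi2, h2⟩
              rw [hi] at h2
              simp only [hmv] at h2
              omega
          · rw [replM_apply, dif_neg (by tauto), if_neg (by tauto)]
            exact hMd i⟩
      left_inv := by
        rintro ⟨L, hlo, hdiag⟩
        apply Subtype.ext
        funext i j
        show replM c m (fixM c d d' m L) (L m m) (fun j => L m ⟨j, by omega⟩) i j = L i j
        rw [replM_apply]
        by_cases h1 : i = m ∧ (j : ℕ) < c - 1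
        · rw [dif_pos h1]
          obtain ⟨rfl, hj⟩ := h1
          exact congrArg (L m) (Fin.ext rfl)
        · rw [dif_neg h1]
          by_cases h2 : i = m ∧ j = m
          · rw [if_pos h2, h2.1, h2.2]
          · rw [if_neg h2, fixM_apply, if_neg]
            rintro ⟨rfl, hj⟩
            rcases lt_or_eq_of_le hj with h | h
            · exact h1 ⟨rfl, h⟩
            · exact h2 ⟨rfl, Fin.ext (h.trans hmv.symm)⟩
      right_inv := by
        rintro ⟨⟨M, hMlo, hMd, hMc⟩, ⟨u, hu⟩, v⟩
        refine Prod.ext ?_ (Prod.ext ?_ ?_)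
        · apply Subtype.ext
          funext i j
          show fixM c d d' m (replM c m M u v) i j = M i j
          rw [fixM_apply]
          by_cases h1 : i = m ∧ (j : ℕ) ≤ c - 1
          · rw [if_pos h1]
            have hMcj : ∑ r : Fin n, M r j * d r = d' j := by
              rw [← hsum]; rw [hMc]
            have herase : ∀ r ∈ Finset.univ.erase m,
                replM c m M u v r j * d r = M r j * d r := by
              intro r hr
              simp only [Finset.mem_erase] at hr
              rw [replM_apply, dif_neg (by tauto), if_neg (by tauto)]
            rw [Finset.sum_congr rfl herase]
            have heq : ∑ r ∈ Finset.univ.erase m, M r j * d r = d' j - M m j * d m := by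
              have h2 := Finset.sum_erase_add Finset.univ (fun r => M r j * d r)
                (Finset.mem_univ m)
              rw [hMcj] at h2
              exact eq_sub_of_add_eq h2
            rw [heq, h1.1]
            rw [sub_sub_cancel, mul_assoc, mul_inv_cancel₀ hdm, mul_one]
          · rw [if_neg h1, replM_apply, dif_neg, if_neg]
            · rintro ⟨rfl, rfl⟩
              exact h1 ⟨rfl, le_refl _⟩
            · rintro ⟨rfl, h2⟩
              exact h1 ⟨rfl, by omega⟩
        · apply Subtype.ext
          show replM c m M u v m m = u
          rw [replM_apply, dif_neg (by rintro ⟨_, h2⟩; simp only [hmv] at h2; omega),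
            if_pos ⟨rfl, rfl⟩]
        · funext j
          show replM c m M u v m ⟨j, by omega⟩ = v j
          rw [replM_apply, dif_pos ⟨rfl, j.2⟩]
      }
  rw [Nat.card_congr e, Nat.card_prod, Nat.card_prod]
  congr 1
  congr 1
  · rw [Nat.card_eq_fintype_card]
    have : Fintype.card {x : ZMod b // x ≠ 0}
        = Fintype.card (ZMod b) - Fintype.card {x : ZMod b // x = 0} := by
      classical
      exact Fintype.card_subtype_compl _
    rw [this, ZMod.card, Fintype.card_subtype_eq (0 : ZMod b)]
  · rw [Nat.card_eq_fintype_card, Fintype.card_fun, ZMod.card, Fintype.card_fin]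

/-- Among lower-triangular `n × n` matrices `L` over `F_b` with nonzero diagonal,
the proportion of those with `Lᵀ k⃗ = k⃗'` (digit vectors of length `n`), for
positive integers `k, k'` of equal NRT weight `c ≤ n`, is exactly
`1 / ((b-1) b^(c-1))`. -/
theorem stmt_9 (b : ℕ) (hb : b.Prime) (n c k k' : ℕ)
    (hk : 0 < k) (hk' : 0 < k')
    (hkc : nrtWeight b k = c) (hk'c : nrtWeight b k' = c) (hn : c ≤ n) :
    ({L : Matrix (Fin n) (Fin n) (ZMod b) |
        (∀ i j : Fin n, (i : ℕ) < (j : ℕ) → L i j = 0) ∧ (∀ i, L i i ≠ 0) ∧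
        L.transpose.mulVec (fun i : Fin n => digitVec b k i) =
          (fun i : Fin n => digitVec b k' i)}.ncard : ℝ) /
      ({L : Matrix (Fin n) (Fin n) (ZMod b) |
        (∀ i j : Fin n, (i : ℕ) < (j : ℕ) → L i j = 0) ∧ (∀ i, L i i ≠ 0)}.ncard : ℝ)
      = 1 / (((b : ℝ) - 1) * (b : ℝ) ^ (c - 1)) := by
  haveI : Fact b.Prime := ⟨hb⟩
  have hb2 : 2 ≤ b := hb.two_le
  -- basic digit facts
  have hc : 0 < c := by
    rw [← hkc]
    unfold nrtWeight
    exact List.length_pos_iff.mpr (Nat.digits_ne_nil_iff_ne_zero.mpr hk.ne')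
  have hdig : ∀ (j : ℕ) (kk : ℕ), 0 < kk → nrtWeight b kk = c → c ≤ j →
      digitVec b kk j = 0 := by
    intro j kk hkk hkkc hj
    unfold digitVec
    rw [List.getD_eq_default]
    · exact Nat.cast_zero
    · unfold nrtWeight at hkkc; omega
  have hlast : ∀ (kk : ℕ), 0 < kk → nrtWeight b kk = c → digitVec b kk (c - 1) ≠ 0 := by
    intro kk hkk hkkc
    unfold digitVec
    unfold nrtWeight at hkkc
    have hne : Nat.digits b kk ≠ [] := Nat.digits_ne_nil_iff_ne_zero.mpr hkk.ne'
    have hlen : c - 1 < (Nat.digits b kk).length := by omega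
    rw [List.getD_eq_getElem _ _ hlen]
    have hgl : (Nat.digits b kk)[c-1] = (Nat.digits b kk).getLast hne := by
      rw [List.getLast_eq_getElem]
      congr 1
      omega
    have hne0 : (Nat.digits b kk)[c-1] ≠ 0 := by
      rw [hgl]
      exact Nat.getLast_digit_ne_zero b hkk.ne'
    have hlt : (Nat.digits b kk)[c-1] < b :=
      Nat.digits_lt_base hb2 (List.getElem_mem hlen)
    intro hcast
    rw [ZMod.natCast_eq_zero_iff] at hcast
    have := Nat.le_of_dvd (by omega) hcast
    omega
  set d : Fin n → ZMod b := fun i : Fin n => digitVec b k i with hd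
  set d' : Fin n → ZMod b := fun i : Fin n => digitVec b k' i with hd'
  have hd0 : ∀ j : Fin n, c ≤ (j : ℕ) → d j = 0 := fun j hj => hdig j k hk hkc hj
  have hd'0 : ∀ j : Fin n, c ≤ (j : ℕ) → d' j = 0 := fun j hj => hdig j k' hk' hk'c hj
  have hdm : d ⟨c - 1, by omega⟩ ≠ 0 := hlast k hk hkc
  have hd'm : d' ⟨c - 1, by omega⟩ ≠ 0 := hlast k' hk' hk'c
  have hcard := card_aux b n c hb hc hn d d' hd0 hd'0 hdm hd'm
  have h1 : ({L : Matrix (Fin n) (Fin n) (ZMod b) |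
        (∀ i j : Fin n, (i : ℕ) < (j : ℕ) → L i j = 0) ∧ (∀ i, L i i ≠ 0) ∧
        L.transpose.mulVec d = d'}).ncard
      = Nat.card {L : Matrix (Fin n) (Fin n) (ZMod b) //
        (∀ i j : Fin n, (i : ℕ) < (j : ℕ) → L i j = 0) ∧ (∀ i, L i i ≠ 0) ∧
        L.transpose.mulVec d = d'} := rfl
  have h2 : ({L : Matrix (Fin n) (Fin n) (ZMod b) |
        (∀ i j : Fin n, (i : ℕ) < (j : ℕ) → L i j = 0) ∧ (∀ i, L i i ≠ 0)}).ncard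
      = Nat.card {L : Matrix (Fin n) (Fin n) (ZMod b) //
        (∀ i j : Fin n, (i : ℕ) < (j : ℕ) → L i j = 0) ∧ (∀ i, L i i ≠ 0)} := rfl
  rw [h1, h2, hcard]
  -- positivity
  have hSpos : 0 < Nat.card {L : Matrix (Fin n) (Fin n) (ZMod b) //
        (∀ i j : Fin n, (i : ℕ) < (j : ℕ) → L i j = 0) ∧ (∀ i, L i i ≠ 0)} := by
    have : Nonempty {L : Matrix (Fin n) (Fin n) (ZMod b) //
        (∀ i j : Fin n, (i : ℕ) < (j : ℕ) → L i j = 0) ∧ (∀ i, L i i ≠ 0)} := by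
      refine ⟨⟨(1 : Matrix (Fin n) (Fin n) (ZMod b)), ?_, ?_⟩⟩
      · intro i j hij
        have hne : i ≠ j := by
          rintro rfl
          exact lt_irrefl _ hij
        exact Matrix.one_apply_ne hne
      · intro i
        rw [Matrix.one_apply_eq]
        exact one_ne_zero
    exact Nat.card_pos
  set t := Nat.card {L : Matrix (Fin n) (Fin n) (ZMod b) //
        (∀ i j : Fin n, (i : ℕ) < (j : ℕ) → L i j = 0) ∧ (∀ i, L i i ≠ 0) ∧
        L.transpose.mulVec d = d'} with hts
  rw [hcard] at hSpos
  have hTpos : 0 < t := by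
    rcases Nat.eq_zero_or_pos t with h | h
    · rw [h, zero_mul] at hSpos
      exact absurd hSpos (lt_irrefl 0)
    · exact h
  have ht : (0 : ℝ) < (t : ℝ) := by exact_mod_cast hTpos
  have hbR : (1 : ℝ) < (b : ℝ) := by exact_mod_cast hb.one_lt
  have hb1 : ((b - 1 : ℕ) : ℝ) = (b : ℝ) - 1 := by
    push_cast [Nat.cast_sub hb.one_le]
    ring
  have hpos1 : (0 : ℝ) < ((b : ℝ) - 1) * (b : ℝ) ^ (c - 1) := by
    have hb0 : (0 : ℝ) < (b : ℝ) - 1 := by linarith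
    positivity
  push_cast [hb1]
  rw [div_eq_div_iff (mul_pos ht hpos1).ne' hpos1.ne']
  ring
end

section
/- Let P be a digital (t,m,s)-net in base b (b prime), and for nonempty u ⊆ {1,...,s} let the projection P_u be a digital (t_u, m, |u|)-net. For c_u = (c_j)_{j∈u} ∈ ℕ^{|u|} with |c_u|_1 = ∑_{j∈u} c_j, the number of vectors k = (k_1,...,k_s) in the dual net P^⊥ with μ_1(k_j) = c_j for j ∈ u and k_j = 0 otherwise is at most: 0 if |c_u|_1 ≤ m - t_u; (b-1)^{|c_u|_1 - (m-t_u)} if m - t_u < |c_u|_1 ≤ m - t_u + |u|; and (b-1)^{|u|} b^{|c_u|_1 - (m - t_u + |u|)} if |c_u|_1 > m - t_u + |u|. In all cases the count is at most ((b-1)/b) b^{|c_u|_1 - (m - t_u)}. -/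
lemma digit_getD {b : ℕ} (hb : 1 < b) (k i : ℕ) :
    (Nat.digits b k).getD i 0 = k / b ^ i % b := by
  induction i generalizing k with
  | zero =>
    rcases Nat.eq_zero_or_pos k with rfl | hk
    · simp
    · rw [Nat.digits_def' hb hk]; simp
  | succ i ih =>
    rcases Nat.eq_zero_or_pos k with rfl | hk
    · simp
    · rw [Nat.digits_def' hb hk, List.getD_cons_succ, ih,
        Nat.div_div_eq_div_mul, ← pow_succ']

lemma digitVec_eq {b : ℕ} (hb : 1 < b) (k i : ℕ) :
    digitVec b k i = ((k / b ^ i % b : ℕ) : ZMod b) := by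
  rw [digitVec, digit_getD hb]

lemma len_le_iff {b : ℕ} (hb : 1 < b) (k c : ℕ) :
    (Nat.digits b k).length ≤ c ↔ k < b ^ c := by
  constructor
  · intro h
    exact lt_of_lt_of_le (Nat.lt_base_pow_length_digits hb)
      (Nat.pow_le_pow_right (le_of_lt hb) h)
  · intro h
    by_contra hlen
    push_neg at hlen
    have hk : k ≠ 0 := by
      rintro rfl; simp at hlen
    have h1 : b ^ (Nat.digits b k).length ≤ b * k :=
      Nat.base_pow_length_digits_le b k hb hk
    have h2 : b ^ (c + 1) ≤ b ^ (Nat.digits b k).length :=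
      Nat.pow_le_pow_right (le_of_lt hb) hlen
    rw [pow_succ'] at h2
    have h3 := le_trans h2 h1
    have h4 : b ^ c ≤ k := Nat.le_of_mul_le_mul_left h3 (by omega)
    omega

lemma sum_digit_eq {b : ℕ} (hb : 1 < b) :
    ∀ (c k : ℕ), k < b ^ c → ∑ i ∈ Finset.range c, (k / b ^ i % b) * b ^ i = k := by
  intro c
  induction c with
  | zero => intro k h; simp at h ⊢; omega
  | succ c ih =>
    intro k h
    have hb0 : 0 < b := by omega
    have hdiv : k / b < b ^ c := by
      rw [Nat.div_lt_iff_lt_mul hb0]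
      calc k < b ^ (c + 1) := h
        _ = b ^ c * b := pow_succ b c
    calc ∑ i ∈ Finset.range (c + 1), k / b ^ i % b * b ^ i
        = (∑ i ∈ Finset.range c, k / b ^ (i + 1) % b * b ^ (i + 1)) + k / b ^ 0 % b * b ^ 0 :=
          Finset.sum_range_succ' _ c
      _ = (∑ i ∈ Finset.range c, b * ((k / b) / b ^ i % b * b ^ i)) + k % b := by
          simp only [pow_zero, Nat.div_one, mul_one]
          congr 1
          refine Finset.sum_congr rfl fun i _ => ?_
          have h5 : k / b ^ (i + 1) = k / b / b ^ i := by
            rw [Nat.div_div_eq_div_mul, ← pow_succ']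
          rw [h5, pow_succ]
          ring
      _ = b * (k / b) + k % b := by rw [← Finset.mul_sum, ih _ hdiv]
      _ = k := Nat.div_add_mod k b

lemma dig_sum {b : ℕ} (hb : 1 < b) :
    ∀ (i c : ℕ) (a : ℕ → ℕ), (∀ i', a i' < b) → i < c →
      (∑ i' ∈ Finset.range c, a i' * b ^ i') / b ^ i % b = a i := by
  intro i
  induction i with
  | zero =>
    intro c a ha hi
    obtain ⟨c', rfl⟩ : ∃ c', c = c' + 1 := ⟨c - 1, by omega⟩
    rw [Finset.sum_range_succ']
    simp only [pow_zero, mul_one, Nat.div_one]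
    have h1 : ∀ i' ∈ Finset.range c', a (i' + 1) * b ^ (i' + 1) = b * (a (i' + 1) * b ^ i') := by
      intro i' _; rw [pow_succ']; ring
    rw [Finset.sum_congr rfl h1, ← Finset.mul_sum, Nat.mul_add_mod]
    exact Nat.mod_eq_of_lt (ha 0)
  | succ i ih =>
    intro c a ha hi
    obtain ⟨c', rfl⟩ : ∃ c', c = c' + 1 := ⟨c - 1, by omega⟩
    rw [Finset.sum_range_succ']
    simp only [pow_zero, mul_one, Nat.div_one]
    have h1 : ∀ i' ∈ Finset.range c', a (i' + 1) * b ^ (i' + 1) = b * (a (i' + 1) * b ^ i') := by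
      intro i' _; rw [pow_succ']; ring
    rw [Finset.sum_congr rfl h1, ← Finset.mul_sum]
    have hb0 : 0 < b := by omega
    have h2 : (b * ∑ i' ∈ Finset.range c', a (i' + 1) * b ^ i' + a 0) / b ^ (i + 1)
        = (∑ i' ∈ Finset.range c', a (i' + 1) * b ^ i') / b ^ i := by
      rw [pow_succ', ← Nat.div_div_eq_div_mul, Nat.mul_add_div hb0,
        Nat.div_eq_of_lt (ha 0), add_zero]
    rw [h2]
    exact ih c' (fun i' => a (i' + 1)) (fun i' => ha (i' + 1)) (by omega)

lemma sum_lt_pow {b : ℕ} (hb : 1 < b) (a : ℕ → ℕ) (ha : ∀ i, a i < b) (c : ℕ) :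
    ∑ i ∈ Finset.range c, a i * b ^ i < b ^ c := by
  induction c with
  | zero => simp
  | succ c ih =>
    rw [Finset.sum_range_succ]
    have h1 : a c * b ^ c ≤ (b - 1) * b ^ c :=
      Nat.mul_le_mul_right _ (by have := ha c; omega)
    have h2 : b ^ c + (b - 1) * b ^ c = b ^ (c + 1) := by
      have hb1 : b - 1 + 1 = b := by omega
      calc b ^ c + (b - 1) * b ^ c = ((b - 1) + 1) * b ^ c := by ring
        _ = b * b ^ c := by rw [hb1]
        _ = b ^ (c + 1) := (pow_succ' b c).symm
    omega

lemma digitVec_zero_of_le {b : ℕ} (hb : 1 < b) {k c : ℕ} (hk : k < b ^ c)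
    {i : ℕ} (hi : c ≤ i) : digitVec b k i = 0 := by
  rw [digitVec_eq hb]
  have : k < b ^ i := lt_of_lt_of_le hk (Nat.pow_le_pow_right (by omega) hi)
  rw [Nat.div_eq_of_lt this]
  simp

lemma exists_le_sum {α : Type*} [DecidableEq α] (u : Finset α) (e : α → ℕ) :
    ∀ N, N ≤ ∑ j ∈ u, e j → ∃ f : α → ℕ, (∀ j ∈ u, f j ≤ e j) ∧ ∑ j ∈ u, f j = N := by
  induction u using Finset.induction with
  | empty => intro N hN; simp at hN; exact ⟨fun _ => 0, by simp, by simp [hN]⟩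
  | @insert a s ha ih =>
    intro N hN
    rw [Finset.sum_insert ha] at hN
    obtain ⟨f, hf, hfs⟩ := ih (N - min N (e a)) (by omega)
    refine ⟨fun j => if j = a then min N (e a) else f j, ?_, ?_⟩
    · intro j hj
      rcases Finset.mem_insert.mp hj with rfl | hj'
      · simp
      · show (if j = a then min N (e a) else f j) ≤ e j
        rw [if_neg (by rintro rfl; exact ha hj')]
        exact hf j hj'
    · rw [Finset.sum_insert ha]
      have h1 : ∀ j ∈ s, (if j = a then min N (e a) else f j) = f j :=
        fun j hj => if_neg (by rintro rfl; exact ha hj)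
      show (if a = a then min N (e a) else f a) + _ = N
      rw [if_pos rfl, Finset.sum_congr rfl h1, hfs]
      omega
/-- The dual net of the digital net over `F_b` with generating matrices
`C j ∈ F_b^{n×m}`: all `k ∈ ℕ₀^s` with `∑_j (C j)ᵀ tr_n(k⃗_j) = 0 ∈ F_b^m`. -/
def dualNet {b s m n : ℕ} (C : Fin s → Matrix (Fin n) (Fin m) (ZMod b)) :
    Set (Fin s → ℕ) :=
  {k | ∑ j, (C j).transpose.mulVec (fun i : Fin n => digitVec b (k j) i) = 0}

lemma master (b s m n : ℕ) (hb : b.Prime)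
    (C : Fin s → Matrix (Fin n) (Fin m) (ZMod b))
    (u : Finset (Fin s)) (tu : ℕ)
    (hnet : ∀ k : Fin s → ℕ, k ∈ dualNet C → k ≠ 0 → (∀ j, j ∉ u → k j = 0) →
      m - tu + 1 ≤ ∑ j, nrtWeight b (k j))
    (c : Fin s → ℕ)
    (d : Fin s → ℕ) (hd : ∀ j ∈ u, d j ≤ c j) (hsum : ∑ j ∈ u, d j ≤ m - tu) :
    {k : Fin s → ℕ | k ∈ dualNet C ∧ (∀ j ∈ u, nrtWeight b (k j) = c j) ∧
        ∀ j, j ∉ u → k j = 0}.ncard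
      ≤ ∏ j ∈ u, (if d j < c j then (b - 1) * b ^ (c j - d j - 1) else 1) := by
  classical
  haveI := Fact.mk hb
  haveI : NeZero b := ⟨hb.ne_zero⟩
  have hb1 : 1 < b := hb.one_lt
  set S := {k : Fin s → ℕ | k ∈ dualNet C ∧ (∀ j ∈ u, nrtWeight b (k j) = c j) ∧
      ∀ j, j ∉ u → k j = 0} with hSdef
  have hlt : ∀ k ∈ S, ∀ j, k j < b ^ c j := by
    intro k hk j
    by_cases hj : j ∈ u
    · exact (len_le_iff hb1 _ _).mp (le_of_eq (hk.2.1 j hj))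
    · rw [hk.2.2 j hj]; exact Nat.pow_pos (by omega)
  have htop : ∀ k ∈ S, ∀ j ∈ u, 0 < c j → digitVec b (k j) (c j - 1) ≠ 0 := by
    intro k hk j hj hc
    have hlen : (Nat.digits b (k j)).length = c j := hk.2.1 j hj
    have hk0 : k j ≠ 0 := by
      intro h0
      rw [h0] at hlen; simp at hlen; omega
    have hnil : Nat.digits b (k j) ≠ [] := Nat.digits_ne_nil_iff_ne_zero.mpr hk0
    have hlast := Nat.getLast_digit_ne_zero b hk0
    have hgd : (Nat.digits b (k j)).getD (c j - 1) 0 = (Nat.digits b (k j)).getLast hnil := by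
      rw [List.getLast_eq_getElem, List.getD_eq_getElem _ _ (by rw [hlen]; omega)]
      congr 1
      omega
    intro hzero
    rw [digitVec] at hzero
    have hdig_lt : (Nat.digits b (k j)).getD (c j - 1) 0 < b := by
      rw [digit_getD hb1]; exact Nat.mod_lt _ (by omega)
    have hdvd := (ZMod.natCast_eq_zero_iff _ _).mp hzero
    have h0 : (Nat.digits b (k j)).getD (c j - 1) 0 = 0 :=
      Nat.eq_zero_of_dvd_of_lt hdvd hdig_lt
    rw [hgd] at h0
    exact hlast h0
  have key : ∀ k ∈ S, ∀ k' ∈ S,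
      (∀ j ∈ u, ∀ i, d j ≤ i → i < c j → digitVec b (k j) i = digitVec b (k' j) i) →
      k = k' := by
    intro k hk k' hk' hagree
    set a : Fin s → ℕ → ZMod b := fun j i => digitVec b (k j) i - digitVec b (k' j) i with ha
    set w : Fin s → ℕ := fun j => ∑ i ∈ Finset.range (c j), (a j i).val * b ^ i with hw
    have hval_lt : ∀ j i, (a j i).val < b := fun j i => ZMod.val_lt _
    have hwlt : ∀ j, w j < b ^ c j := fun j => sum_lt_pow hb1 _ (hval_lt j) _
    have hdigw : ∀ j, ∀ i, i < c j → digitVec b (w j) i = a j i := by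
      intro j i hi
      rw [digitVec_eq hb1, hw]
      simp only
      rw [dig_sum hb1 i (c j) _ (hval_lt j) hi]
      simp [ZMod.natCast_val, ZMod.cast_id]
    have hdigw' : ∀ j i, digitVec b (w j) i = a j i := by
      intro j i
      by_cases hi : i < c j
      · exact hdigw j i hi
      · push_neg at hi
        rw [digitVec_zero_of_le hb1 (hwlt j) hi, ha]
        simp only
        rw [digitVec_zero_of_le hb1 (hlt k hk j) hi,
          digitVec_zero_of_le hb1 (hlt k' hk' j) hi, sub_zero]
    have hwd : w ∈ dualNet C := by
      show ∑ j, (C j).transpose.mulVec (fun i : Fin n => digitVec b (w j) i) = 0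
      have hfun : ∀ j, (fun i : Fin n => digitVec b (w j) i)
          = (fun i : Fin n => digitVec b (k j) i) - (fun i : Fin n => digitVec b (k' j) i) := by
        intro j; funext i
        rw [hdigw' j i]; rfl
      have h1 : k ∈ dualNet C := hk.1
      have h2 : k' ∈ dualNet C := hk'.1
      simp only [dualNet, Set.mem_setOf_eq] at h1 h2
      calc ∑ j, (C j).transpose.mulVec (fun i : Fin n => digitVec b (w j) i)
          = ∑ j, ((C j).transpose.mulVec (fun i : Fin n => digitVec b (k j) i)
              - (C j).transpose.mulVec (fun i : Fin n => digitVec b (k' j) i)) := by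
            refine Finset.sum_congr rfl fun j _ => ?_
            rw [hfun j, Matrix.mulVec_sub]
        _ = 0 := by rw [Finset.sum_sub_distrib, h1, h2, sub_zero]
    have hwu : ∀ j, j ∉ u → w j = 0 := by
      intro j hj
      have hz : ∀ i, a j i = 0 := by
        intro i; rw [ha]; simp only
        rw [hk.2.2 j hj, hk'.2.2 j hj, sub_self]
      simp [hw, hz]
    have hwzero : w = 0 := by
      by_contra hw0
      have h1 := hnet w hwd hw0 hwu
      have h2 : ∑ j ∈ u, nrtWeight b (w j) = ∑ j, nrtWeight b (w j) := by
        refine Finset.sum_subset (Finset.subset_univ u) ?_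
        intro j _ hj
        rw [hwu j hj]; simp [nrtWeight]
      have h3 : ∀ j ∈ u, nrtWeight b (w j) ≤ d j := by
        intro j hj
        have hzero : ∀ i ∈ Finset.range (c j), i ∉ Finset.range (d j) →
            (a j i).val * b ^ i = 0 := by
          intro i hi hi'
          simp only [Finset.mem_range] at hi hi'
          have hz : a j i = 0 := by
            rw [ha]; simp only
            rw [hagree j hj i (by omega) hi, sub_self]
          rw [hz]; simp
        have hsub : w j = ∑ i ∈ Finset.range (d j), (a j i).val * b ^ i := by
          rw [hw]; simp only
          exact (Finset.sum_subset (Finset.range_subset_range.mpr (hd j hj)) hzero).symm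
        have hwj : w j < b ^ d j := by
          rw [hsub]; exact sum_lt_pow hb1 _ (hval_lt j) _
        exact (len_le_iff hb1 _ _).mpr hwj
      have h4 : ∑ j ∈ u, nrtWeight b (w j) ≤ ∑ j ∈ u, d j := Finset.sum_le_sum h3
      omega
    funext j
    have hdig_eq : ∀ i, i < c j → digitVec b (k j) i = digitVec b (k' j) i := by
      intro i hi
      have hwj : w j = 0 := congrFun hwzero j
      rw [hw] at hwj; simp only at hwj
      have hterm := (Finset.sum_eq_zero_iff).mp hwj i (Finset.mem_range.mpr hi)
      have hbpos : 0 < b ^ i := Nat.pow_pos (by omega)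
      have hv : (a j i).val = 0 := by
        rcases Nat.mul_eq_zero.mp hterm with h | h
        · exact h
        · omega
      have hz : a j i = 0 := (ZMod.val_eq_zero _).mp hv
      rw [ha] at hz
      simp only at hz
      exact sub_eq_zero.mp hz
    have hnat : ∀ i, i < c j → k j / b ^ i % b = k' j / b ^ i % b := by
      intro i hi
      have hcast := hdig_eq i hi
      rw [digitVec_eq hb1, digitVec_eq hb1] at hcast
      have e1 : k j / b ^ i % b = ((k j / b ^ i % b : ℕ) : ZMod b).val :=
        (ZMod.val_cast_of_lt (Nat.mod_lt _ (by omega))).symm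
      rw [e1, hcast, ZMod.val_cast_of_lt (Nat.mod_lt _ (by omega))]
    rw [← sum_digit_eq hb1 (c j) (k j) (hlt k hk j),
      ← sum_digit_eq hb1 (c j) (k' j) (hlt k' hk' j)]
    exact Finset.sum_congr rfl fun i hi => by
      rw [hnat i (Finset.mem_range.mp hi)]
  have hcard_sub : ∀ (P : Prop) (_ : Decidable P), Nat.card {x : ZMod b // P → x ≠ 0} = if P then b - 1 else b := by
    intro P hdec
    by_cases hP : P
    · rw [if_pos hP]
      have e : {x : ZMod b // P → x ≠ 0} ≃ {x : ZMod b // ¬ x = 0} :=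
        Equiv.subtypeEquivRight (fun x => by simp [hP])
      rw [Nat.card_congr e, Nat.card_eq_fintype_card, Fintype.card_subtype_compl,
        Fintype.card_subtype_eq (0 : ZMod b), ZMod.card]
    · rw [if_neg hP,
        Nat.card_congr (Equiv.subtypeUnivEquiv (fun x hx => absurd hx hP)), Nat.card_zmod]
  have hprod_fin : ∀ N : ℕ, (∏ i : Fin N, if (i : ℕ) = N - 1 then b - 1 else b)
      = if 0 < N then (b - 1) * b ^ (N - 1) else 1 := by
    intro N
    cases N with
    | zero => simp
    | succ N' =>
      rw [if_pos (Nat.succ_pos _), Fin.prod_univ_castSucc]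
      have hlast : ((Fin.last N' : Fin (N' + 1)) : ℕ) = N' + 1 - 1 := by simp
      rw [if_pos hlast]
      have hrest : (∏ i : Fin N',
          if ((Fin.castSucc i : Fin (N' + 1)) : ℕ) = N' + 1 - 1 then b - 1 else b)
          = ∏ _i : Fin N', b := by
        refine Finset.prod_congr rfl fun i _ => if_neg ?_
        have := i.2
        simp only [Fin.coe_castSucc]
        omega
      rw [hrest, Finset.prod_const, Finset.card_univ, Fintype.card_fin]
      simp [mul_comm]
  let T := (j : {x // x ∈ u}) → (i : Fin (c j.1 - d j.1)) →
      {x : ZMod b // (i : ℕ) = c j.1 - d j.1 - 1 → x ≠ 0}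
  have hcardT : Nat.card T = ∏ j ∈ u, (if d j < c j then (b - 1) * b ^ (c j - d j - 1) else 1) := by
    have h1 : Nat.card T = ∏ j : {x // x ∈ u}, ∏ i : Fin (c j.1 - d j.1),
        Nat.card {x : ZMod b // (i : ℕ) = c j.1 - d j.1 - 1 → x ≠ 0} := by
      rw [Nat.card_pi]
      exact Finset.prod_congr rfl fun j _ => Nat.card_pi
    rw [h1]
    rw [Finset.prod_coe_sort u (fun j => ∏ i : Fin (c j - d j),
      Nat.card {x : ZMod b // (i : ℕ) = c j - d j - 1 → x ≠ 0})]
    refine Finset.prod_congr rfl fun j hj => ?_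
    have h2 : (∏ i : Fin (c j - d j),
        Nat.card {x : ZMod b // (i : ℕ) = c j - d j - 1 → x ≠ 0})
        = ∏ i : Fin (c j - d j), (if (i : ℕ) = c j - d j - 1 then b - 1 else b) :=
      Finset.prod_congr rfl fun i _ => hcard_sub _ _
    rw [h2, hprod_fin]
    by_cases hcd : d j < c j
    · rw [if_pos hcd, if_pos (by omega)]
    · rw [if_neg hcd, if_neg (by omega)]
  have hΦ : ∃ Φ : S → T, Function.Injective Φ := by
    refine ⟨fun k j i => ⟨digitVec b (k.1 j.1) (d j.1 + i.1), ?_⟩, ?_⟩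
    · intro hi
      have hi2 := i.2
      have hdj := hd j.1 j.2
      have hc : 0 < c j.1 := by omega
      have hidx : d j.1 + i.1 = c j.1 - 1 := by omega
      rw [hidx]
      exact htop k.1 k.2 j.1 j.2 hc
    · intro k k' h
      apply Subtype.ext
      apply key k.1 k.2 k'.1 k'.2
      intro j hj i hdi hic
      have hmem : i - d j < c j - d j := by omega
      have h0 := congrFun (congrFun h ⟨j, hj⟩) ⟨i - d j, hmem⟩
      have hval := congrArg Subtype.val h0
      simp only at hval
      have hidx : d j + (i - d j) = i := by omega
      rwa [hidx] at hval
  obtain ⟨Φ, hΦinj⟩ := hΦ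
  haveI : Finite T := by
    have : ∀ (j : {x // x ∈ u}) (i : Fin (c j.1 - d j.1)),
        Finite {x : ZMod b // (i : ℕ) = c j.1 - d j.1 - 1 → x ≠ 0} := by
      intro j i; infer_instance
    infer_instance
  calc S.ncard = Nat.card S := (Nat.card_coe_set_eq S).symm
    _ ≤ Nat.card T := Nat.card_le_card_of_injective Φ hΦinj
    _ = _ := hcardT
/-- Counting bound for dual-net elements of prescribed NRT weights.
The hypothesis `hnet` states (via the dual-net characterization of the
`t`-value) that the projection of the net onto the coordinates in `u` is a
digital `(t_u, m, |u|)`-net in base `b`: every nonzero dual element supported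
on `u` has total NRT weight at least `m - t_u + 1`. -/
theorem stmt_10 (b s m n : ℕ) (hb : b.Prime) (hm : 0 < m)
    (C : Fin s → Matrix (Fin n) (Fin m) (ZMod b))
    (u : Finset (Fin s)) (hu : u.Nonempty) (tu : ℕ) (htu : tu ≤ m)
    (hnet : ∀ k : Fin s → ℕ, k ∈ dualNet C → k ≠ 0 → (∀ j, j ∉ u → k j = 0) →
      m - tu + 1 ≤ ∑ j, nrtWeight b (k j))
    (c : Fin s → ℕ) (hc : ∀ j ∈ u, 1 ≤ c j) :
    ((∑ j ∈ u, c j) ≤ m - tu →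
      {k : Fin s → ℕ | k ∈ dualNet C ∧ (∀ j ∈ u, nrtWeight b (k j) = c j) ∧
        ∀ j, j ∉ u → k j = 0}.ncard = 0) ∧
    (m - tu < (∑ j ∈ u, c j) → (∑ j ∈ u, c j) ≤ m - tu + u.card →
      ({k : Fin s → ℕ | k ∈ dualNet C ∧ (∀ j ∈ u, nrtWeight b (k j) = c j) ∧
          ∀ j, j ∉ u → k j = 0}.ncard : ℝ)
        ≤ ((b : ℝ) - 1) ^ ((∑ j ∈ u, c j) - (m - tu))) ∧
    (m - tu + u.card < (∑ j ∈ u, c j) →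
      ({k : Fin s → ℕ | k ∈ dualNet C ∧ (∀ j ∈ u, nrtWeight b (k j) = c j) ∧
          ∀ j, j ∉ u → k j = 0}.ncard : ℝ)
        ≤ ((b : ℝ) - 1) ^ u.card * (b : ℝ) ^ ((∑ j ∈ u, c j) - (m - tu + u.card))) ∧
    ({k : Fin s → ℕ | k ∈ dualNet C ∧ (∀ j ∈ u, nrtWeight b (k j) = c j) ∧
        ∀ j, j ∉ u → k j = 0}.ncard : ℝ)
      ≤ (((b : ℝ) - 1) / b) * (b : ℝ) ^ ((∑ j ∈ u, c j) - (m - tu)) := by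
  classical
  have hb1 : 1 < b := hb.one_lt
  set S := {k : Fin s → ℕ | k ∈ dualNet C ∧ (∀ j ∈ u, nrtWeight b (k j) = c j) ∧
      ∀ j, j ∉ u → k j = 0} with hSdef
  set L := ∑ j ∈ u, c j with hLdef
  have hb1le : 1 ≤ b := le_of_lt hb1
  -- Part 1
  have part1 : L ≤ m - tu → S.ncard = 0 := by
    intro hL
    have hempty : S = ∅ := by
      rw [Set.eq_empty_iff_forall_notMem]
      rintro k ⟨h1, h2, h3⟩
      obtain ⟨j0, hj0⟩ := hu
      have hk0 : k j0 ≠ 0 := by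
        intro h0
        have hh := h2 j0 hj0
        rw [h0] at hh
        simp [nrtWeight] at hh
        have := hc j0 hj0
        omega
      have hkne : k ≠ 0 := fun h => hk0 (congrFun h j0)
      have hge := hnet k h1 hkne h3
      have heq : ∑ j ∈ u, nrtWeight b (k j) = ∑ j, nrtWeight b (k j) := by
        refine Finset.sum_subset (Finset.subset_univ u) ?_
        intro j _ hj
        rw [h3 j hj]; simp [nrtWeight]
      have heq2 : ∑ j ∈ u, nrtWeight b (k j) = L := Finset.sum_congr rfl h2
      omega
    rw [hempty]; exact Set.ncard_empty _
  -- Part 2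
  have part2 : m - tu < L → L ≤ m - tu + u.card →
      (S.ncard : ℝ) ≤ ((b : ℝ) - 1) ^ (L - (m - tu)) := by
    intro hL1 hL2
    obtain ⟨v, hvsub, hvcard⟩ := Finset.exists_subset_card_eq (s := u) (n := L - (m - tu)) (by omega)
    set d : Fin s → ℕ := fun j => if j ∈ v then c j - 1 else c j with hddef
    have hd1 : ∀ j ∈ u, d j ≤ c j := by
      intro j hj; rw [hddef]; simp only
      split <;> omega
    have hindsum : ∑ j ∈ u, (if j ∈ v then 1 else 0) = v.card := by
      rw [Finset.sum_ite_mem, Finset.inter_eq_right.mpr hvsub]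
      simp
    have hsum_d : ∑ j ∈ u, d j + v.card = L := by
      have hpt : ∀ j ∈ u, d j + (if j ∈ v then 1 else 0) = c j := by
        intro j hj
        rw [hddef]; simp only
        by_cases hjv : j ∈ v
        · rw [if_pos hjv, if_pos hjv]
          have := hc j hj; omega
        · rw [if_neg hjv, if_neg hjv, add_zero]
      calc ∑ j ∈ u, d j + v.card
          = ∑ j ∈ u, (d j + if j ∈ v then 1 else 0) := by
            rw [Finset.sum_add_distrib, hindsum]
        _ = ∑ j ∈ u, c j := Finset.sum_congr rfl hpt
    have hsum : ∑ j ∈ u, d j ≤ m - tu := by omega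
    have hprod : (∏ j ∈ u, if d j < c j then (b - 1) * b ^ (c j - d j - 1) else 1)
        = (b - 1) ^ (L - (m - tu)) := by
      have hcg : ∀ j ∈ u, (if d j < c j then (b - 1) * b ^ (c j - d j - 1) else 1)
          = (if j ∈ v then b - 1 else 1) := by
        intro j hj
        by_cases hjv : j ∈ v
        · have hcj := hc j hj
          have hdj : d j = c j - 1 := by rw [hddef]; simp [hjv]
          rw [if_pos hjv, if_pos (by omega)]
          have he : c j - d j - 1 = 0 := by omega
          rw [he, pow_zero, mul_one]
        · have hdj : d j = c j := by rw [hddef]; simp [hjv]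
          rw [if_neg hjv, if_neg (by omega)]
      rw [Finset.prod_congr rfl hcg, Finset.prod_ite_mem,
        Finset.inter_eq_right.mpr hvsub, Finset.prod_const, hvcard]
    have hnat := master b s m n hb C u tu hnet c d hd1 hsum
    rw [hprod] at hnat
    calc (S.ncard : ℝ) ≤ (((b - 1) ^ (L - (m - tu)) : ℕ) : ℝ) := Nat.cast_le.mpr hnat
      _ = ((b : ℝ) - 1) ^ (L - (m - tu)) := by
          rw [Nat.cast_pow, Nat.cast_sub hb1le, Nat.cast_one]
  -- Part 3
  have part3 : m - tu + u.card < L →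
      (S.ncard : ℝ) ≤ ((b : ℝ) - 1) ^ u.card * (b : ℝ) ^ (L - (m - tu + u.card)) := by
    intro hL
    have hsum1 : ∑ j ∈ u, (c j - 1) + u.card = L := by
      rw [Finset.card_eq_sum_ones u, ← Finset.sum_add_distrib]
      refine Finset.sum_congr rfl fun j hj => ?_
      have := hc j hj; omega
    obtain ⟨d, hd1, hd2⟩ := exists_le_sum u (fun j => c j - 1) (m - tu)
      (by show m - tu ≤ ∑ j ∈ u, (c j - 1); omega)
    have hd1 : ∀ j ∈ u, d j ≤ c j - 1 := hd1
    have hdlt : ∀ j ∈ u, d j < c j := by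
      intro j hj
      have h1 := hd1 j hj
      have h2 := hc j hj
      omega
    have hd1' : ∀ j ∈ u, d j ≤ c j := fun j hj => le_of_lt (hdlt j hj)
    have hexp : ∑ j ∈ u, (c j - d j - 1) = L - (m - tu) - u.card := by
      have h1 : ∑ j ∈ u, (c j - d j - 1) + ∑ j ∈ u, d j + u.card = L := by
        rw [Finset.card_eq_sum_ones u, ← Finset.sum_add_distrib, ← Finset.sum_add_distrib]
        refine Finset.sum_congr rfl fun j hj => ?_
        have := hdlt j hj; omega
      omega
    have hprod : (∏ j ∈ u, if d j < c j then (b - 1) * b ^ (c j - d j - 1) else 1)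
        = (b - 1) ^ u.card * b ^ (L - (m - tu) - u.card) := by
      have hcg : ∀ j ∈ u, (if d j < c j then (b - 1) * b ^ (c j - d j - 1) else 1)
          = (b - 1) * b ^ (c j - d j - 1) := fun j hj => if_pos (hdlt j hj)
      rw [Finset.prod_congr rfl hcg, Finset.prod_mul_distrib, Finset.prod_const,
        Finset.prod_pow_eq_pow_sum, hexp]
    have hee : L - (m - tu) - u.card = L - (m - tu + u.card) := by omega
    have hnat := master b s m n hb C u tu hnet c d hd1' (le_of_eq hd2)
    rw [hprod] at hnat
    calc (S.ncard : ℝ)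
        ≤ (((b - 1) ^ u.card * b ^ (L - (m - tu) - u.card) : ℕ) : ℝ) := Nat.cast_le.mpr hnat
      _ = ((b : ℝ) - 1) ^ u.card * (b : ℝ) ^ (L - (m - tu + u.card)) := by
          rw [Nat.cast_mul, Nat.cast_pow, Nat.cast_pow,
            Nat.cast_sub hb1le, Nat.cast_one, hee]
  refine ⟨part1, part2, part3, ?_⟩
  -- Part 4
  have hbR : (1 : ℝ) < (b : ℝ) := by exact_mod_cast hb1
  have hbpos : (0 : ℝ) < (b : ℝ) := by linarith
  by_cases h1 : L ≤ m - tu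
  · rw [part1 h1, Nat.cast_zero]
    exact mul_nonneg (div_nonneg (by linarith) (by linarith))
      (pow_nonneg (by linarith) _)
  · push_neg at h1
    by_cases h2 : L ≤ m - tu + u.card
    · refine le_trans (part2 h1 h2) ?_
      obtain ⟨E, hE⟩ : ∃ E, L - (m - tu) = E + 1 := ⟨L - (m - tu) - 1, by omega⟩
      rw [hE]
      have hstep : ((b : ℝ) - 1) ^ (E + 1) ≤ ((b : ℝ) - 1) * (b : ℝ) ^ E := by
        rw [pow_succ]
        have := pow_le_pow_left₀ (by linarith : (0:ℝ) ≤ (b:ℝ) - 1)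
          (by linarith : (b:ℝ) - 1 ≤ (b:ℝ)) E
        nlinarith
      refine le_trans hstep (le_of_eq ?_)
      rw [pow_succ]
      field_simp
    · push_neg at h2
      refine le_trans (part3 h2) ?_
      obtain ⟨A, hA⟩ : ∃ A, u.card = A + 1 := ⟨u.card - 1, by have := hu.card_pos; omega⟩
      have hexp2 : L - (m - tu) = A + (L - (m - tu + u.card)) + 1 := by omega
      have hstep : ((b : ℝ) - 1) ^ u.card ≤ ((b : ℝ) - 1) * (b : ℝ) ^ A := by
        rw [hA, pow_succ]
        have := pow_le_pow_left₀ (by linarith : (0:ℝ) ≤ (b:ℝ) - 1)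
          (by linarith : (b:ℝ) - 1 ≤ (b:ℝ)) A
        nlinarith
      have hrhs : (((b : ℝ) - 1) / b) * (b : ℝ) ^ (L - (m - tu))
          = ((b : ℝ) - 1) * (b : ℝ) ^ A * (b : ℝ) ^ (L - (m - tu + u.card)) := by
        rw [hexp2, pow_succ, pow_add]
        field_simp
      rw [hrhs]
      have hpow : (0 : ℝ) ≤ (b : ℝ) ^ (L - (m - tu + u.card)) := pow_nonneg (by linarith) _
      exact mul_le_mul_of_nonneg_right hstep hpow
end

section
/- Let b be a prime, m, n positive integers with n ≥ m, and C_1,...,C_s ∈ F_b^{m×m} generating matrices of a digital net P such that each projection P_u is a digital (t_u, m, |u|)-net. For any nonzero k = (k_1,...,k_s) ∈ ℕ_0^s with k_j < b^m for all j, letting u = {j : k_j ≠ 0}, the probability that k lies in the dual net of the linearly scrambled net P(L_1 C_1, ..., L_s C_s), when L_1,...,L_s are drawn independently and uniformly from the set of m×m (or larger, with n rows) lower-triangular matrices over F_b with nonzero diagonals, is at most (b/(b-1))^{|u|-1} · b^{-m + t_u}. -/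
/-- An `n × m` matrix over `F_b` (with `m ≤ n`) is lower triangular with
nonzero diagonal entries. -/
def IsLowTri {b n m : ℕ} (L : Matrix (Fin n) (Fin m) (ZMod b)) : Prop :=
  (∀ (i : Fin n) (j : Fin m), (i : ℕ) < (j : ℕ) → L i j = 0) ∧
  ∀ (i : Fin n) (j : Fin m), (i : ℕ) = (j : ℕ) → L i j ≠ 0



open Finset

lemma getD_digits_ofDigits {b : ℕ} (hb : 1 < b) :
    ∀ (L : List ℕ), (∀ x ∈ L, x < b) → ∀ i,
      (Nat.digits b (Nat.ofDigits b L)).getD i 0 = L.getD i 0 := by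
  intro L
  induction L with
  | nil => intro _ i; simp
  | cons x t IH =>
    intro hlt i
    have hx : x < b := hlt x (by simp)
    have ht : ∀ y ∈ t, y < b := fun y hy => hlt y (by simp [hy])
    have hco : (Nat.ofDigits b (x :: t) : ℕ) = x + b * Nat.ofDigits b t :=
      by simp [Nat.ofDigits_cons]
    by_cases h0 : (Nat.ofDigits b (x :: t) : ℕ) = 0
    · have hx0 : x = 0 := by omega
      have hto : (Nat.ofDigits b t : ℕ) = 0 := by
        have hb0 : 0 < b := by omega
        nlinarith [hco ▸ h0]
      rw [h0]
      cases i with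
      | zero => simp [hx0]
      | succ i =>
        have h2 := IH ht i
        rw [hto] at h2
        simp only [Nat.digits_zero, List.getD_nil] at h2
        simpa using h2
    · rw [hco] at h0 ⊢
      rw [Nat.digits_def' hb (Nat.pos_of_ne_zero h0)]
      have hmod : (x + b * Nat.ofDigits b t) % b = x := by
        rw [Nat.add_mul_mod_self_left, Nat.mod_eq_of_lt hx]
      have hdiv : (x + b * Nat.ofDigits b t) / b = Nat.ofDigits b t := by
        rw [Nat.add_mul_div_left _ _ (by omega : 0 < b), Nat.div_eq_of_lt hx]; omega
      cases i with
      | zero => simp [hmod]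
      | succ i =>
        have h2 := IH ht i
        simpa [hdiv] using h2

lemma digits_len_le_of_lt_pow {b k c : ℕ} (hb : 1 < b) (h : k < b ^ c) :
    (Nat.digits b k).length ≤ c := by
  rcases Nat.eq_zero_or_pos k with rfl | hk
  · simp
  · rw [Nat.digits_len b k hb hk.ne']
    have := Nat.log_lt_of_lt_pow hk.ne' h
    omega




def numOf {b m : ℕ} (w : Fin m → ZMod b) : ℕ :=
  Nat.ofDigits b (List.ofFn fun a => (w a).val)

lemma ofDigits_eq_zero_of_all_zero {b : ℕ} :
    ∀ l : List ℕ, (∀ x ∈ l, x = 0) → Nat.ofDigits b l = 0 := by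
  intro l
  induction l with
  | nil => intro; rfl
  | cons x t IH =>
    intro h
    have hx : x = 0 := h x (by simp)
    have ht := IH fun y hy => h y (by simp [hy])
    have : (Nat.ofDigits b (x :: t) : ℕ) = x + b * Nat.ofDigits b t := by
      simp [Nat.ofDigits_cons]
    rw [this, hx, ht]; simp

section
variable {b m : ℕ} [NeZero b] (hb : 1 < b)

lemma numOf_mem_lt (w : Fin m → ZMod b) :
    ∀ x ∈ List.ofFn (fun a => (w a).val), x < b := by
  intro x hx
  rw [List.mem_ofFn] at hx
  obtain ⟨a, rfl⟩ := hx
  exact ZMod.val_lt _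

include hb in
lemma digitVec_numOf (w : Fin m → ZMod b) (i : ℕ) :
    digitVec b (numOf w) i = if h : i < m then w ⟨i, h⟩ else 0 := by
  unfold digitVec numOf
  rw [getD_digits_ofDigits hb _ (numOf_mem_lt w) i]
  by_cases h : i < m
  · rw [dif_pos h, List.getD_eq_getElem _ _ (by simpa using h)]
    simp only [List.getElem_ofFn]
    exact ZMod.natCast_rightInverse _
  · rw [dif_neg h, List.getD_eq_default _ _ (by simpa using le_of_not_gt h)]
    simp

include hb in
lemma numOf_lt_pow (w : Fin m → ZMod b) {c : ℕ} (hcm : c ≤ m)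
    (hc : ∀ a : Fin m, c ≤ (a : ℕ) → w a = 0) : numOf w < b ^ c := by
  unfold numOf
  have hsplit : List.ofFn (fun a => (w a).val) =
      (List.ofFn (fun a : Fin m => (w a).val)).take c ++
      (List.ofFn (fun a : Fin m => (w a).val)).drop c := (List.take_append_drop _ _).symm
  rw [hsplit, Nat.ofDigits_append]
  have hdrop : Nat.ofDigits b ((List.ofFn (fun a : Fin m => (w a).val)).drop c) = 0 := by
    apply ofDigits_eq_zero_of_all_zero
    intro x hx
    rw [List.mem_drop_iff_getElem] at hx
    obtain ⟨i, hi, rfl⟩ := hx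
    simp only [List.getElem_drop, List.getElem_ofFn]
    rw [hc _ (by simp)]
    simp
  rw [hdrop, mul_zero, add_zero]
  have hlen : ((List.ofFn (fun a : Fin m => (w a).val)).take c).length = c := by
    simp [hcm]
  calc Nat.ofDigits b ((List.ofFn (fun a : Fin m => (w a).val)).take c)
      < b ^ ((List.ofFn (fun a : Fin m => (w a).val)).take c).length :=
        Nat.ofDigits_lt_base_pow_length hb
          (fun x hx => numOf_mem_lt w x (List.mem_of_mem_take hx))
    _ = b ^ c := by rw [hlen]

include hb in
lemma numOf_eq_zero_iff (w : Fin m → ZMod b) : numOf w = 0 ↔ w = 0 := by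
  constructor
  · intro h
    funext a
    have := digitVec_numOf hb w a
    rw [h, dif_pos a.isLt] at this
    unfold digitVec at this
    simpa using this.symm
  · intro h
    subst h
    apply ofDigits_eq_zero_of_all_zero
    intro x hx
    rw [List.mem_ofFn] at hx
    obtain ⟨a, rfl⟩ := hx
    simp

end


open Finset Matrix
open scoped Classical

lemma lowtri_mulVec_apply {b n m : ℕ} {c : ℕ} (hc1 : 0 < c) (hcm : c ≤ m) (hmn : m ≤ n)
    (M : Matrix (Fin n) (Fin m) (ZMod b))
    (hM : ∀ (i : Fin n) (j : Fin m), (i:ℕ) < (j:ℕ) → M i j = 0)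
    (v : Fin n → ZMod b) (hv0 : ∀ i : Fin n, c ≤ (i:ℕ) → v i = 0) :
    (∀ a : Fin m, c ≤ (a:ℕ) → M.transpose.mulVec v a = 0) ∧
    M.transpose.mulVec v ⟨c-1, by omega⟩ =
      M ⟨c-1, by omega⟩ ⟨c-1, by omega⟩ * v ⟨c-1, by omega⟩ := by
  have hexp : ∀ a : Fin m, M.transpose.mulVec v a = ∑ i : Fin n, M i a * v i := by
    intro a
    simp [Matrix.mulVec, dotProduct, Matrix.transpose_apply]
  constructor
  · intro a ha
    rw [hexp]
    apply Finset.sum_eq_zero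
    intro i _
    by_cases hi : (i:ℕ) < (a:ℕ)
    · rw [hM i a hi, zero_mul]
    · rw [hv0 i (by omega), mul_zero]
  · rw [hexp]
    apply Finset.sum_eq_single_of_mem (⟨c-1, by omega⟩ : Fin n) (mem_univ _)
    intro i _ hne
    have hne' : (i:ℕ) ≠ c - 1 := fun h => hne (Fin.ext h)
    by_cases hi : (i:ℕ) < c
    · rw [hM i _ (by simp; omega), zero_mul]
    · rw [hv0 i (by omega), mul_zero]

lemma fiber_mul_card {b n m : ℕ} [NeZero b] (hb : b.Prime) (hmn : m ≤ n) {c : ℕ}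
    (hc1 : 0 < c) (hcm : c ≤ m)
    (v : Fin n → ZMod b) (hvtop : v ⟨c-1, by omega⟩ ≠ 0)
    (hv0 : ∀ i : Fin n, c ≤ (i:ℕ) → v i = 0)
    (w : Fin m → ZMod b) (hwtop : w ⟨c-1, by omega⟩ ≠ 0)
    (hw0 : ∀ a : Fin m, c ≤ (a:ℕ) → w a = 0) :
    (Finset.univ.filter fun L : Matrix (Fin n) (Fin m) (ZMod b) =>
        IsLowTri L ∧ L.transpose.mulVec v = w).card *
      (Finset.univ.filter fun x : Fin m → ZMod b =>
        x ⟨c-1, by omega⟩ ≠ 0 ∧ ∀ a : Fin m, c ≤ (a:ℕ) → x a = 0).card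
    = (Finset.univ.filter fun L : Matrix (Fin n) (Fin m) (ZMod b) => IsLowTri L).card := by
  haveI : Fact b.Prime := ⟨hb⟩
  set i0 : Fin n := ⟨c-1, by omega⟩ with hi0
  set a0 : Fin m := ⟨c-1, by omega⟩ with ha0
  set Ex : Finset (Fin m → ZMod b) :=
    Finset.univ.filter (fun x : Fin m → ZMod b =>
      x a0 ≠ 0 ∧ ∀ a : Fin m, c ≤ (a:ℕ) → x a = 0) with hEx
  set fib : (Fin m → ZMod b) → Finset (Matrix (Fin n) (Fin m) (ZMod b)) :=
    fun x => Finset.univ.filter (fun L => IsLowTri L ∧ L.transpose.mulVec v = x) with hfib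
  -- translation moves fibers to fibers
  have hmove : ∀ w1 w2 : Fin m → ZMod b, w1 ∈ Ex → w2 ∈ Ex →
      ∀ L : Matrix (Fin n) (Fin m) (ZMod b), IsLowTri L ∧ L.transpose.mulVec v = w1 →
      IsLowTri (L + Matrix.of fun (i : Fin n) (a : Fin m) => if (i:ℕ) = c-1 ∧ (a:ℕ) ≤ c-1
          then (w2 a - w1 a) * (v i0)⁻¹ else 0) ∧
      (L + Matrix.of fun (i : Fin n) (a : Fin m) => if (i:ℕ) = c-1 ∧ (a:ℕ) ≤ c-1
          then (w2 a - w1 a) * (v i0)⁻¹ else 0).transpose.mulVec v = w2 := by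
    intro w1 w2 hw1 hw2 L hL
    rw [hEx, mem_filter] at hw1 hw2
    set D : Matrix (Fin n) (Fin m) (ZMod b) := Matrix.of fun (i : Fin n) (a : Fin m) =>
      if (i:ℕ) = c-1 ∧ (a:ℕ) ≤ c-1 then (w2 a - w1 a) * (v i0)⁻¹ else 0 with hD
    have hM1 : ∀ (i : Fin n) (a : Fin m), (i:ℕ) < (a:ℕ) → (L + D) i a = 0 := by
      intro i a hia
      have : D i a = 0 := by
        rw [hD]
        have h2 : ¬((i:ℕ) = c-1 ∧ (a:ℕ) ≤ c-1) := by omega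
        simp [Matrix.of_apply, h2]
      simp [Matrix.add_apply, this, hL.1.1 i a hia]
    have hDv : ∀ a : Fin m, D.transpose.mulVec v a =
        (if (a:ℕ) ≤ c-1 then w2 a - w1 a else 0) := by
      intro a
      have hexp : D.transpose.mulVec v a = ∑ i : Fin n, D i a * v i := by
        simp [Matrix.mulVec, dotProduct, Matrix.transpose_apply]
      rw [hexp]
      rw [Finset.sum_eq_single_of_mem i0 (mem_univ _)]
      · by_cases hac : (a:ℕ) ≤ c-1
        · have hDia : D i0 a = (w2 a - w1 a) * (v i0)⁻¹ := by
            rw [hD]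
            have : ((i0:ℕ) = c-1 ∧ (a:ℕ) ≤ c-1) := ⟨rfl, hac⟩
            simp [Matrix.of_apply, this]
          rw [hDia, if_pos hac, mul_assoc, inv_mul_cancel₀ hvtop, mul_one]
        · have hDia : D i0 a = 0 := by
            rw [hD]
            have h2 : ¬((i0:ℕ) = c-1 ∧ (a:ℕ) ≤ c-1) := by
              intro h; exact hac h.2
            rw [Matrix.of_apply, if_neg h2]
          rw [hDia, if_neg hac, zero_mul]
      · intro i _ hne
        have : D i a = 0 := by
          rw [hD]
          have hne' : (i:ℕ) ≠ c - 1 := fun h => hne (Fin.ext h)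
          simp [Matrix.of_apply, hne']
        rw [this, zero_mul]
    have hsum : (L + D).transpose.mulVec v = w2 := by
      funext a
      have : (L + D).transpose.mulVec v a = L.transpose.mulVec v a + D.transpose.mulVec v a := by
        rw [Matrix.transpose_add, Matrix.add_mulVec, Pi.add_apply]
      rw [this, hL.2, hDv a]
      by_cases hac : (a:ℕ) ≤ c-1
      · rw [if_pos hac]; ring
      · rw [if_neg hac, hw1.2.2 a (by omega), hw2.2.2 a (by omega), add_zero]
    refine ⟨⟨hM1, ?_⟩, hsum⟩
    intro i a hia
    by_cases hac : (a:ℕ) = c-1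
    · have ha' : a = a0 := Fin.ext (by rw [ha0]; exact hac)
      have hi' : i = i0 := Fin.ext (by rw [hi0]; omega)
      have hVal : (L + D).transpose.mulVec v a0 = (L + D) i0 a0 * v i0 :=
        (lowtri_mulVec_apply hc1 hcm hmn (L + D) hM1 v hv0).2
      rw [hsum] at hVal
      have hw2top : w2 a0 ≠ 0 := hw2.2.1
      rw [ha', hi']
      intro h0
      rw [h0, zero_mul] at hVal
      exact hw2top hVal
    · have hD0 : D i a = 0 := by
        rw [hD]
        have : ¬((i:ℕ) = c-1 ∧ (a:ℕ) ≤ c-1) := by omega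
        simp [this]
      have : (L + D) i a = L i a := by simp [Matrix.add_apply, hD0]
      rw [this]
      exact hL.1.2 i a hia
  -- equal fibers
  have hstep : ∀ w1 w2 : Fin m → ZMod b, w1 ∈ Ex → w2 ∈ Ex →
      (fib w1).card = (fib w2).card := by
    intro w1 w2 hw1 hw2
    apply Finset.card_bij'
      (i := fun L _ => L + Matrix.of fun (i : Fin n) (a : Fin m) => if (i:ℕ) = c-1 ∧ (a:ℕ) ≤ c-1
          then (w2 a - w1 a) * (v i0)⁻¹ else 0)
      (j := fun L _ => L + Matrix.of fun (i : Fin n) (a : Fin m) => if (i:ℕ) = c-1 ∧ (a:ℕ) ≤ c-1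
          then (w1 a - w2 a) * (v i0)⁻¹ else 0)
    · intro L hL
      rw [hfib, mem_filter] at hL ⊢
      exact ⟨mem_univ _, hmove w1 w2 hw1 hw2 L hL.2⟩
    · intro L hL
      rw [hfib, mem_filter] at hL ⊢
      exact ⟨mem_univ _, hmove w2 w1 hw2 hw1 L hL.2⟩
    · intro L _
      funext i a
      simp only [Matrix.add_apply, Matrix.of_apply]
      split_ifs <;> ring
    · intro L _
      funext i a
      simp only [Matrix.add_apply, Matrix.of_apply]
      split_ifs <;> ring
  -- partition
  have himg : ∀ L ∈ (Finset.univ.filter fun L : Matrix (Fin n) (Fin m) (ZMod b) =>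
      IsLowTri L), L.transpose.mulVec v ∈ Ex := by
    intro L hL
    rw [mem_filter] at hL
    have hA := lowtri_mulVec_apply hc1 hcm hmn L hL.2.1 v hv0
    rw [hEx, mem_filter]
    refine ⟨mem_univ _, ?_, fun a ha => hA.1 a ha⟩
    have hA2 : L.transpose.mulVec v a0 = L i0 a0 * v i0 := hA.2
    rw [hA2]
    exact mul_ne_zero (hL.2.2 i0 a0 rfl) hvtop
  have hpart : (Finset.univ.filter fun L : Matrix (Fin n) (Fin m) (ZMod b) =>
      IsLowTri L).card = ∑ x ∈ Ex, (fib x).card := by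
    rw [Finset.card_eq_sum_card_fiberwise himg]
    apply Finset.sum_congr rfl
    intro x _
    congr 1
    rw [hfib, Finset.filter_filter]
  have hwEx : w ∈ Ex := by
    rw [hEx, mem_filter]
    exact ⟨mem_univ _, hwtop, hw0⟩
  have hfw : Finset.univ.filter (fun L : Matrix (Fin n) (Fin m) (ZMod b) =>
      IsLowTri L ∧ L.transpose.mulVec v = w) = fib w := rfl
  rw [hfw, hpart]
  rw [Finset.sum_congr rfl (fun x hx => hstep x w hx hwEx)]
  rw [Finset.sum_const, smul_eq_mul]
  rw [mul_comm]

lemma fiber_empty {b n m : ℕ} [NeZero b] (hb : b.Prime) (hmn : m ≤ n) {c : ℕ}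
    (hc1 : 0 < c) (hcm : c ≤ m)
    (v : Fin n → ZMod b) (hvtop : v ⟨c-1, by omega⟩ ≠ 0)
    (hv0 : ∀ i : Fin n, c ≤ (i:ℕ) → v i = 0)
    (w : Fin m → ZMod b)
    (hnw : ¬(w ⟨c-1, by omega⟩ ≠ 0 ∧ ∀ a : Fin m, c ≤ (a:ℕ) → w a = 0)) :
    (Finset.univ.filter fun L : Matrix (Fin n) (Fin m) (ZMod b) =>
        IsLowTri L ∧ L.transpose.mulVec v = w) = ∅ := by
  haveI : Fact b.Prime := ⟨hb⟩
  rw [Finset.filter_eq_empty_iff]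
  rintro L - ⟨hL, hLv⟩
  apply hnw
  have hA := lowtri_mulVec_apply hc1 hcm hmn L hL.1 v hv0
  constructor
  · have hA2 : L.transpose.mulVec v ⟨c-1, by omega⟩ =
        L ⟨c-1, by omega⟩ ⟨c-1, by omega⟩ * v ⟨c-1, by omega⟩ := hA.2
    rw [hLv] at hA2
    rw [hA2]
    exact mul_ne_zero (hL.2 _ _ rfl) hvtop
  · intro a ha
    have := hA.1 a ha
    rwa [hLv] at this

lemma exCard {b : ℕ} [NeZero b] (m : ℕ) (hb : 1 < b) {c : ℕ} (hc1 : 0 < c) (hcm : c ≤ m) :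
    (Finset.univ.filter fun x : Fin m → ZMod b =>
        x ⟨c-1, by omega⟩ ≠ 0 ∧ ∀ a : Fin m, c ≤ (a:ℕ) → x a = 0).card
      = (b-1) * b^(c-1) := by
  set S : Fin m → Finset (ZMod b) := fun a =>
    if (a:ℕ) = c-1 then {0}ᶜ else if (a:ℕ) < c-1 then Finset.univ else {0} with hS
  have heq : (Finset.univ.filter fun x : Fin m → ZMod b =>
      x ⟨c-1, by omega⟩ ≠ 0 ∧ ∀ a : Fin m, c ≤ (a:ℕ) → x a = 0) = Fintype.piFinset S := by
    ext x
    simp only [Finset.mem_filter, Finset.mem_univ, true_and, Fintype.mem_piFinset]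
    constructor
    · rintro ⟨h1, h2⟩ a
      rw [hS]
      by_cases hac : (a:ℕ) = c-1
      · have ha' : a = ⟨c-1, by omega⟩ := Fin.ext hac
        simp only [hac, if_pos rfl]
        simp [ha', h1]
      · by_cases hlt : (a:ℕ) < c-1
        · simp [hac, hlt]
        · have := h2 a (by omega)
          simp [hac, hlt, this]
    · intro h
      constructor
      · have := h ⟨c-1, by omega⟩
        rw [hS] at this
        simp only [Fin.val_mk, if_pos rfl] at this
        simpa using this
      · intro a ha
        have := h a
        rw [hS] at this
        have hac : ¬((a:ℕ) = c-1) := by omega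
        have hlt : ¬((a:ℕ) < c-1) := by omega
        simp only [hac, hlt, if_false] at this
        simpa using this
  rw [heq, Fintype.card_piFinset]
  have hcard : ∀ a : Fin m, (S a).card =
      if (a:ℕ) = c-1 then b-1 else if (a:ℕ) < c-1 then b else 1 := by
    intro a
    rw [hS]
    by_cases hac : (a:ℕ) = c-1
    · simp only [hac, if_pos rfl, if_true, ite_true, eq_self_iff_true]
      rw [Finset.card_compl, Finset.card_singleton, ZMod.card]
    · by_cases hlt : (a:ℕ) < c-1
      · simp only [hac, hlt, if_false, if_true, if_pos hlt]
        rw [Finset.card_univ, ZMod.card]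
      · simp [hac, hlt]
  rw [Finset.prod_congr rfl (fun a _ => hcard a)]
  rw [Fin.prod_univ_eq_prod_range
    (fun x => if x = c-1 then b-1 else if x < c-1 then b else 1) m]
  have hmem : c - 1 ∈ Finset.range m := Finset.mem_range.2 (by omega)
  rw [← Finset.mul_prod_erase _ _ hmem, if_pos rfl]
  congr 1
  have : ∀ x ∈ (Finset.range m).erase (c-1),
      (if x = c-1 then b-1 else if x < c-1 then b else 1) = if x < c-1 then b else 1 := by
    intro x hx
    rw [if_neg (Finset.ne_of_mem_erase hx)]
  rw [Finset.prod_congr rfl this, Finset.prod_ite _ _]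
  rw [Finset.prod_const, Finset.prod_const, one_pow, mul_one]
  congr 1
  have : Finset.filter (fun x => x < c-1) ((Finset.range m).erase (c-1)) =
      Finset.range (c-1) := by
    ext x
    simp only [Finset.mem_filter, Finset.mem_erase, Finset.mem_range]
    omega
  rw [this, Finset.card_range]


lemma lowtri_card_pos {b n m : ℕ} [NeZero b] (hb : b.Prime) :
    0 < (Finset.univ.filter fun L : Matrix (Fin n) (Fin m) (ZMod b) => IsLowTri L).card := by
  haveI : Fact b.Prime := ⟨hb⟩
  apply Finset.card_pos.2
  refine ⟨Matrix.of fun (i : Fin n) (a : Fin m) => if (i:ℕ) = (a:ℕ) then 1 else 0, ?_⟩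
  rw [Finset.mem_filter]
  refine ⟨Finset.mem_univ _, ?_, ?_⟩
  · intro i a hia
    simp only [Matrix.of_apply]
    rw [if_neg (by omega)]
  · intro i a hia
    simp only [Matrix.of_apply]
    rw [if_pos hia]
    exact one_ne_zero

lemma exists_pointwise_le {α : Type*} (s : Finset α) (c : α → ℕ) :
    ∀ r : ℕ, r ≤ ∑ x ∈ s, c x →
      ∃ d : α → ℕ, (∀ x ∈ s, d x ≤ c x) ∧ ∑ x ∈ s, d x = r := by
  classical
  induction s using Finset.induction_on with
  | empty =>
    intro r hr
    simp only [Finset.sum_empty] at hr ⊢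
    exact ⟨fun _ => 0, by simp, by omega⟩
  | @insert a t hat IH =>
    intro r hr
    rw [Finset.sum_insert hat] at hr
    obtain ⟨d, hd1, hd2⟩ := IH (r - min r (c a)) (by omega)
    refine ⟨Function.update d a (min r (c a)), ?_, ?_⟩
    · intro x hx
      rcases Finset.mem_insert.1 hx with rfl | hx'
      · rw [Function.update_self]; omega
      · rw [Function.update_of_ne (by rintro rfl; exact hat hx')]
        exact hd1 x hx'
    · rw [Finset.sum_insert hat, Function.update_self]
      have : ∑ x ∈ t, Function.update d a (min r (c a)) x = ∑ x ∈ t, d x := by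
        apply Finset.sum_congr rfl
        intro x hx
        rw [Function.update_of_ne (by rintro rfl; exact hat hx)]
      rw [this, hd2]
      omega

lemma arith_exp {A r q m tu : ℕ} (h1 : r = m - tu) (h2 : tu ≤ m) (h3 : r < A)
    (h4 : 1 ≤ q) (h5 : q ≤ A) : (A - r) + m = ((q-1) + tu + (A-q)) + 1 := by
  omega

/-- Probability that a fixed nonzero `k` with all components `< b^m` lies in the
dual net of a randomly linearly scrambled digital net. The hypothesis `hnet`
encodes (via the dual-net characterization of the `t`-value) that the projection
of the unscrambled net onto `u = supp(k)` is a digital `(t_u, m, |u|)`-net. -/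
theorem stmt_11 (b s m n : ℕ) (hb : b.Prime) (hm : 0 < m) (hmn : m ≤ n)
    (C : Fin s → Matrix (Fin m) (Fin m) (ZMod b))
    (k : Fin s → ℕ) (hk : k ≠ 0) (hkm : ∀ j, k j < b ^ m)
    (u : Finset (Fin s)) (hu : ∀ j, j ∈ u ↔ k j ≠ 0)
    (tu : ℕ) (htu : tu ≤ m)
    (hnet : ∀ k' : Fin s → ℕ,
      k' ∈ dualNet C →
      k' ≠ 0 → (∀ j, j ∉ u → k' j = 0) → m - tu + 1 ≤ ∑ j, nrtWeight b (k' j)) :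
    ({L : Fin s → Matrix (Fin n) (Fin m) (ZMod b) |
        (∀ j, IsLowTri (L j)) ∧ k ∈ dualNet (fun j => L j * C j)}.ncard : ℝ) /
      ({L : Fin s → Matrix (Fin n) (Fin m) (ZMod b) |
        ∀ j, IsLowTri (L j)}.ncard : ℝ)
      ≤ ((b : ℝ) / ((b : ℝ) - 1)) ^ (u.card - 1) * (b : ℝ) ^ tu / (b : ℝ) ^ m := by
  classical
  haveI hfact : Fact b.Prime := ⟨hb⟩
  haveI : NeZero b := ⟨hb.pos.ne'⟩
  have hb1 : 1 < b := hb.one_lt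
  -- basic data
  have hune : u.Nonempty := by
    obtain ⟨j0, hj0⟩ := Function.ne_iff.1 hk
    exact ⟨j0, (hu j0).2 (by simpa using hj0)⟩
  set q := u.card with hq
  have hq1 : 1 ≤ q := Finset.card_pos.2 hune
  have hqs : q ≤ s := by
    have := Finset.card_le_univ u
    simpa using this
  set c : Fin s → ℕ := fun j => nrtWeight b (k j) with hcdef
  have hc1 : ∀ j ∈ u, 0 < c j := by
    intro j hj
    have : Nat.digits b (k j) ≠ [] := Nat.digits_ne_nil_iff_ne_zero.2 ((hu j).1 hj)
    exact List.length_pos_iff.2 this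
  have hcm : ∀ j, c j ≤ m := fun j => digits_len_le_of_lt_pow hb1 (hkm j)
  have hc0 : ∀ j ∉ u, c j = 0 := by
    intro j hj
    have hkj : k j = 0 := not_not.1 (fun h => hj ((hu j).2 h))
    simp [hcdef, nrtWeight, hkj]
  set v : Fin s → Fin n → ZMod b := fun j i => digitVec b (k j) i with hvdef
  have hv0 : ∀ j, ∀ i : Fin n, c j ≤ (i:ℕ) → v j i = 0 := by
    intro j i hi
    show ((Nat.digits b (k j)).getD i 0 : ZMod b) = 0
    rw [List.getD_eq_default _ _ hi]
    simp
  have hvz : ∀ j ∉ u, v j = 0 := by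
    intro j hj
    have hkj : k j = 0 := not_not.1 (fun h => hj ((hu j).2 h))
    funext i
    show ((Nat.digits b (k j)).getD i 0 : ZMod b) = 0
    rw [hkj]
    simp
  have hvtop : ∀ j, ∀ hj : j ∈ u,
      v j ⟨c j - 1, by have h1 := hc1 j hj; have h2 := hcm j; omega⟩ ≠ 0 := by
    intro j hj
    have hkj : k j ≠ 0 := (hu j).1 hj
    have hne : Nat.digits b (k j) ≠ [] := Nat.digits_ne_nil_iff_ne_zero.2 hkj
    have hlen : (Nat.digits b (k j)).length = c j := rfl
    have hlt : c j - 1 < (Nat.digits b (k j)).length := by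
      have := hc1 j hj; omega
    have hgetd : (Nat.digits b (k j)).getD (c j - 1) 0
        = (Nat.digits b (k j)).getLast hne := by
      rw [List.getD_eq_getElem _ _ hlt, List.getLast_eq_getElem]
      congr 1
    show ((Nat.digits b (k j)).getD (c j - 1) 0 : ZMod b) ≠ 0
    rw [hgetd]
    have hdig0 : (Nat.digits b (k j)).getLast hne ≠ 0 :=
      Nat.getLast_digit_ne_zero b hkj
    have hdiglt : (Nat.digits b (k j)).getLast hne < b :=
      Nat.digits_lt_base hb1 (List.getLast_mem hne)
    intro h0
    rw [ZMod.natCast_eq_zero_iff] at h0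
    have := Nat.le_of_dvd (Nat.pos_of_ne_zero hdig0) h0
    omega
  -- finsets
  set LT : Finset (Matrix (Fin n) (Fin m) (ZMod b)) :=
    Finset.univ.filter (fun L => IsLowTri L) with hLT
  set T0 := LT.card with hT0def
  have hT0 : 0 < T0 := lowtri_card_pos hb
  set fib : Fin s → (Fin m → ZMod b) → Finset (Matrix (Fin n) (Fin m) (ZMod b)) :=
    fun j x => Finset.univ.filter (fun L => IsLowTri L ∧ L.transpose.mulVec (v j) = x)
    with hfib
  set Wall : Finset (Fin s → Fin m → ZMod b) :=
    Finset.univ.filter (fun w => ∑ j, (C j).transpose.mulVec (w j) = 0) with hWall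
  set P : Fin s → (Fin m → ZMod b) → Prop := fun j x =>
    (∀ a : Fin m, (a:ℕ) = c j - 1 → x a ≠ 0) ∧ (∀ a : Fin m, c j ≤ (a:ℕ) → x a = 0)
    with hP
  set Z : Finset (Fin s → Fin m → ZMod b) :=
    Wall.filter (fun w => (∀ j ∈ u, P j (w j)) ∧ ∀ j ∉ u, w j = 0) with hZdef
  set Nfin : Finset (Fin s → Matrix (Fin n) (Fin m) (ZMod b)) :=
    Finset.univ.filter (fun L => (∀ j, IsLowTri (L j)) ∧
      ∑ j, (C j).transpose.mulVec ((L j).transpose.mulVec (v j)) = 0) with hNfin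
  obtain ⟨A, hA⟩ : ∃ A, A = ∑ j ∈ u, c j := ⟨_, rfl⟩
  set r := m - tu with hr
  obtain ⟨Eu, hEudef⟩ : ∃ E, E = ∏ j ∈ u, ((b-1) * b^(c j - 1)) := ⟨_, rfl⟩
  have hqA : q ≤ A := by
    rw [hq, Finset.card_eq_sum_ones, hA]
    exact Finset.sum_le_sum (fun j hj => hc1 j hj)
  have hEupos : 0 < Eu := by
    rw [hEudef]
    apply Finset.prod_pos
    intro j hj
    have : 0 < b - 1 := by omega
    positivity
  -- denominator
  have hDen : ({L : Fin s → Matrix (Fin n) (Fin m) (ZMod b) |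
      ∀ j, IsLowTri (L j)}.ncard) = T0 ^ s := by
    rw [Set.ncard_eq_toFinset_card', Set.toFinset_setOf]
    have heq : Finset.univ.filter
        (fun L : Fin s → Matrix (Fin n) (Fin m) (ZMod b) => ∀ j, IsLowTri (L j))
        = Fintype.piFinset (fun _ => LT) := by
      ext L
      simp only [Finset.mem_filter, Finset.mem_univ, true_and, Fintype.mem_piFinset, hLT]
    rw [heq, Fintype.card_piFinset]
    rw [Finset.prod_const, Finset.card_univ, Fintype.card_fin]
  -- numerator as finset
  have hNumcard : ({L : Fin s → Matrix (Fin n) (Fin m) (ZMod b) |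
      (∀ j, IsLowTri (L j)) ∧ k ∈ dualNet (fun j => L j * C j)}.ncard) = Nfin.card := by
    rw [Set.ncard_eq_toFinset_card', Set.toFinset_setOf]
    rw [hNfin]
    apply Finset.card_bij (fun L _ => L) <;> try (intro L h; exact h)
    · intro L h1
      rw [Finset.mem_filter] at h1 ⊢
      refine ⟨h1.1, h1.2.1, ?_⟩
      have hdn := h1.2.2
      have hterm : ∀ L' : Fin s → Matrix (Fin n) (Fin m) (ZMod b), ∀ j,
          (L' j * C j).transpose.mulVec (fun i : Fin n => digitVec b (k j) i)
          = (C j).transpose.mulVec ((L' j).transpose.mulVec (v j)) := by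
        intro L' j
        rw [Matrix.transpose_mul, ← Matrix.mulVec_mulVec]
      have := hdn
      rw [dualNet, Set.mem_setOf_eq] at this
      rw [← Finset.sum_congr rfl (fun j _ => hterm L j)]
      exact this
    · intro L1 L2 _ _ h
      exact h
    · intro L h1
      refine ⟨L, ?_, rfl⟩
      rw [Finset.mem_filter] at h1 ⊢
      refine ⟨h1.1, h1.2.1, ?_⟩
      have hterm : ∀ j,
          (L j * C j).transpose.mulVec (fun i : Fin n => digitVec b (k j) i)
          = (C j).transpose.mulVec ((L j).transpose.mulVec (v j)) := by
        intro j
        rw [Matrix.transpose_mul, ← Matrix.mulVec_mulVec]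
      rw [dualNet, Set.mem_setOf_eq]
      rw [Finset.sum_congr rfl (fun j _ => hterm j)]
      exact h1.2.2
  -- fiber counts
  have hfibE : ∀ j, ∀ hj : j ∈ u, ∀ x : Fin m → ZMod b, P j x →
      (fib j x).card * ((b-1) * b^(c j - 1)) = T0 := by
    intro j hj x hx
    have h1 := fiber_mul_card (n := n) hb hmn (hc1 j hj) (hcm j) (v j)
      (hvtop j hj) (hv0 j) x (hx.1 _ rfl) hx.2
    rw [exCard m hb1 (hc1 j hj) (hcm j)] at h1
    exact h1
  have hfib0 : ∀ j, ∀ hj : j ∈ u, ∀ x : Fin m → ZMod b, ¬ P j x →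
      (fib j x).card = 0 := by
    intro j hj x hx
    have hempty := fiber_empty (n := n) hb hmn (hc1 j hj) (hcm j) (v j)
      (hvtop j hj) (hv0 j) x ?_
    · show (Finset.univ.filter
        (fun L : Matrix (Fin n) (Fin m) (ZMod b) =>
          IsLowTri L ∧ L.transpose.mulVec (v j) = x)).card = 0
      rw [hempty]
      rfl
    · intro hcon
      apply hx
      rw [hP]
      refine ⟨?_, hcon.2⟩
      intro a ha
      have haa : a = ⟨c j - 1, lt_of_lt_of_le (Nat.sub_lt (hc1 j hj) Nat.one_pos) (hcm j)⟩ :=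
        Fin.ext ha
      rw [haa]
      exact hcon.1
  have hfibnotu : ∀ j ∉ u, ∀ x : Fin m → ZMod b,
      (fib j x).card = if x = 0 then T0 else 0 := by
    intro j hj x
    show (Finset.univ.filter
      (fun L : Matrix (Fin n) (Fin m) (ZMod b) =>
        IsLowTri L ∧ L.transpose.mulVec (v j) = x)).card = _
    by_cases hx : x = 0
    · rw [if_pos hx]
      have heq : (fun L : Matrix (Fin n) (Fin m) (ZMod b) =>
          IsLowTri L ∧ L.transpose.mulVec (v j) = x)
          = fun L => IsLowTri L := by
        funext L
        rw [hvz j hj, hx, Matrix.mulVec_zero]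
        simp
      have hcongr : Finset.univ.filter (fun L : Matrix (Fin n) (Fin m) (ZMod b) =>
          IsLowTri L ∧ L.transpose.mulVec (v j) = x)
          = Finset.univ.filter (fun L => IsLowTri L) := by
        apply Finset.filter_congr
        intro L _
        rw [hvz j hj, hx, Matrix.mulVec_zero]
        simp
      rw [hcongr]
    · rw [if_neg hx, Finset.card_eq_zero, Finset.filter_eq_empty_iff]
      rintro L - ⟨hL, hLe⟩
      apply hx
      rw [← hLe, hvz j hj, Matrix.mulVec_zero]
  -- numerator decomposition
  have hmap : ∀ L ∈ Nfin, (fun j => (L j).transpose.mulVec (v j)) ∈ Wall := by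
    intro L hL
    rw [hNfin, Finset.mem_filter] at hL
    rw [hWall, Finset.mem_filter]
    exact ⟨Finset.mem_univ _, hL.2.2⟩
  have hNumsum : Nfin.card = ∑ w ∈ Wall, ∏ j, (fib j (w j)).card := by
    rw [Finset.card_eq_sum_card_fiberwise hmap]
    apply Finset.sum_congr rfl
    intro w hw
    rw [← Fintype.card_piFinset]
    congr 1
    ext L
    rw [Finset.mem_filter, hNfin, Finset.mem_filter, Fintype.mem_piFinset]
    rw [hWall, Finset.mem_filter] at hw
    constructor
    · rintro ⟨⟨-, h1, h2⟩, h3⟩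
      intro j
      show L j ∈ Finset.univ.filter
        (fun M : Matrix (Fin n) (Fin m) (ZMod b) =>
          IsLowTri M ∧ M.transpose.mulVec (v j) = w j)
      rw [Finset.mem_filter]
      exact ⟨Finset.mem_univ _, h1 j, congrFun h3 j⟩
    · intro h
      have h' : ∀ j, IsLowTri (L j) ∧ (L j).transpose.mulVec (v j) = w j := by
        intro j
        have hLj := h j
        rw [hfib, Finset.mem_filter] at hLj
        exact hLj.2
      refine ⟨⟨Finset.mem_univ _, fun j => (h' j).1, ?_⟩, funext fun j => (h' j).2⟩
      rw [Finset.sum_congr rfl (fun j _ => by rw [(h' j).2])]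
      exact hw.2
  -- main counting identity
  have hkey : Nfin.card * Eu = Z.card * T0 ^ s := by
    rw [hNumsum, Finset.sum_mul]
    have hterm : ∀ w ∈ Wall, (∏ j, (fib j (w j)).card) * Eu
        = if ((∀ j ∈ u, P j (w j)) ∧ ∀ j ∉ u, w j = 0) then T0^s else 0 := by
      intro w _
      by_cases hQ : (∀ j ∈ u, P j (w j)) ∧ ∀ j ∉ u, w j = 0
      · rw [if_pos hQ]
        have hsplit : ∏ j, (fib j (w j)).card
            = (∏ j ∈ u, (fib j (w j)).card) * ∏ j ∈ uᶜ, (fib j (w j)).card :=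
          (Finset.prod_mul_prod_compl u _).symm
        rw [hsplit, hEudef]
        rw [mul_comm (∏ j ∈ u, (fib j (w j)).card) (∏ j ∈ uᶜ, (fib j (w j)).card),
          mul_assoc, ← Finset.prod_mul_distrib]
        have h1 : ∀ j ∈ u, (fib j (w j)).card * ((b-1) * b^(c j - 1)) = T0 :=
          fun j hj => hfibE j hj (w j) (hQ.1 j hj)
        rw [Finset.prod_congr rfl h1, Finset.prod_const]
        have h2 : ∀ j ∈ uᶜ, (fib j (w j)).card = T0 := by
          intro j hj
          rw [Finset.mem_compl] at hj
          rw [hfibnotu j hj (w j), if_pos (hQ.2 j hj)]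
        rw [Finset.prod_congr rfl h2, Finset.prod_const, Finset.card_compl]
        simp only [Fintype.card_fin]
        rw [← pow_add]
        congr 1
        rw [← hq]
        exact Nat.sub_add_cancel hqs
      · rw [if_neg hQ]
        rw [not_and_or] at hQ
        rcases hQ with hQ1 | hQ2
        · push_neg at hQ1
          obtain ⟨j, hj, hPj⟩ := hQ1
          rw [Finset.prod_eq_zero (Finset.mem_univ j) (hfib0 j hj (w j) hPj), zero_mul]
        · push_neg at hQ2
          obtain ⟨j, hj, hwj⟩ := hQ2
          have hz : (fib j (w j)).card = 0 := by
            rw [hfibnotu j hj (w j), if_neg hwj]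
          rw [Finset.prod_eq_zero (Finset.mem_univ j) hz, zero_mul]
    rw [Finset.sum_congr rfl hterm, ← Finset.sum_filter, Finset.sum_const, smul_eq_mul]
  -- the space W
  set W : Finset (Fin s → Fin m → ZMod b) := Finset.univ.filter (fun w =>
    (∑ j, (C j).transpose.mulVec (w j) = 0) ∧ (∀ j ∉ u, w j = 0) ∧
    ∀ j ∈ u, ∀ a : Fin m, c j ≤ (a:ℕ) → w j a = 0) with hWdef
  have hZW : Z ⊆ W := by
    intro w hw
    rw [hZdef, Finset.mem_filter] at hw
    have hw1 := hw.1
    rw [hWall, Finset.mem_filter] at hw1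
    rw [hWdef, Finset.mem_filter]
    exact ⟨Finset.mem_univ _, hw1.2, hw.2.2, fun j hj a ha => (hw.2.1 j hj).2 a ha⟩
  obtain ⟨j1, hj1⟩ := hune
  set a1 : Fin m := ⟨c j1 - 1,
    lt_of_lt_of_le (Nat.sub_lt (hc1 j1 hj1) Nat.one_pos) (hcm j1)⟩ with ha1
  have hZne1 : ∀ w ∈ Z, w j1 a1 ≠ 0 := by
    intro w hw
    rw [hZdef, Finset.mem_filter] at hw
    exact (hw.2.1 j1 hj1).1 a1 rfl
  have hWadd : ∀ w1 ∈ W, ∀ w2 ∈ W, ∀ e : ZMod b, w1 + e • w2 ∈ W := by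
    intro w1 h1 w2 h2 e
    rw [hWdef, Finset.mem_filter] at h1 h2 ⊢
    refine ⟨Finset.mem_univ _, ?_, ?_, ?_⟩
    · have hterm : ∀ j : Fin s, (C j).transpose.mulVec ((w1 + e • w2) j) =
          (C j).transpose.mulVec (w1 j) + e • (C j).transpose.mulVec (w2 j) := by
        intro j
        simp [Matrix.mulVec_add, Matrix.mulVec_smul]
      rw [Finset.sum_congr rfl (fun j _ => hterm j), Finset.sum_add_distrib,
        ← Finset.smul_sum, h1.2.1, h2.2.1]
      simp
    · intro j hj
      simp [h1.2.2.1 j hj, h2.2.2.1 j hj]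
    · intro j hj a ha
      simp [h1.2.2.2 j hj a ha, h2.2.2.2 j hj a ha]
  have hWsub : ∀ w1 ∈ W, ∀ w2 ∈ W, w1 - w2 ∈ W := by
    intro w1 h1 w2 h2
    have := hWadd w1 h1 w2 h2 (-1)
    simpa [sub_eq_add_neg] using this
  -- the key consequence of hnet
  have hkey5 : ∀ w ∈ W, w ≠ 0 → ∀ d : Fin s → ℕ,
      (∀ j ∈ u, ∀ a : Fin m, d j ≤ (a:ℕ) → w j a = 0) → (∀ j ∈ u, d j ≤ m) →
      r + 1 ≤ ∑ j ∈ u, d j := by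
    intro w hw hwne d hd hdm
    rw [hWdef, Finset.mem_filter] at hw
    set k' : Fin s → ℕ := fun j => numOf (w j) with hk'
    have hdig : ∀ j, (fun i : Fin m => digitVec b (k' j) i) = w j := by
      intro j
      funext i
      rw [hk']
      show digitVec b (numOf (w j)) i = w j i
      rw [digitVec_numOf hb1 (w j) i, dif_pos i.isLt]
    have hdual : k' ∈ dualNet C := by
      show ∑ j, (C j).transpose.mulVec (fun i : Fin m => digitVec b (k' j) i) = 0
      rw [Finset.sum_congr rfl (fun j _ => by rw [hdig j])]
      exact hw.2.1
    have hk'ne : k' ≠ 0 := by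
      intro h0
      apply hwne
      funext j
      have hj0 : numOf (w j) = 0 := congrFun h0 j
      have := (numOf_eq_zero_iff hb1 (w j)).1 hj0
      rw [this]
      rfl
    have hk'0 : ∀ j ∉ u, k' j = 0 := by
      intro j hj
      show numOf (w j) = 0
      exact (numOf_eq_zero_iff hb1 (w j)).2 (hw.2.2.1 j hj)
    have h5 := hnet k' hdual hk'ne hk'0
    have hsum0 : ∑ j, nrtWeight b (k' j) = ∑ j ∈ u, nrtWeight b (k' j) := by
      symm
      apply Finset.sum_subset (Finset.subset_univ u)
      intro j _ hj
      rw [hk'0 j hj]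
      simp [nrtWeight]
    have hwle : ∀ j ∈ u, nrtWeight b (k' j) ≤ d j := by
      intro j hj
      apply digits_len_le_of_lt_pow hb1
      exact numOf_lt_pow hb1 (w j) (hdm j hj) (hd j hj)
    calc r + 1 ≤ ∑ j, nrtWeight b (k' j) := h5
      _ = ∑ j ∈ u, nrtWeight b (k' j) := hsum0
      _ ≤ ∑ j ∈ u, d j := Finset.sum_le_sum hwle
  -- Eu value
  have hAq' : ∑ j ∈ u, (c j - 1) = A - q := by
    have h1 : ∑ j ∈ u, (c j - 1) + q = A := by
      rw [hq, Finset.card_eq_sum_ones, ← Finset.sum_add_distrib, hA]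
      apply Finset.sum_congr rfl
      intro j hj
      exact (Nat.succ_pred_eq_of_pos (hc1 j hj)).symm ▸ rfl
    exact Nat.eq_sub_of_add_eq h1
  have hEu : Eu = (b-1)^q * b^(A - q) := by
    rw [hEudef, Finset.prod_mul_distrib, Finset.prod_const, Finset.prod_pow_eq_pow_sum,
      hAq', hq]
  -- positivity facts over ℝ
  have hbR : (1:ℝ) < (b:ℝ) := by exact_mod_cast hb1
  have hRHS0 : (0:ℝ) ≤ ((b : ℝ) / ((b : ℝ) - 1)) ^ (q - 1) * (b : ℝ) ^ tu / (b : ℝ) ^ m := by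
    apply div_nonneg
    · apply mul_nonneg
      · apply pow_nonneg
        apply div_nonneg <;> linarith
      · apply pow_nonneg; linarith
    · apply pow_nonneg; linarith
  rw [hNumcard, hDen]
  rcases le_or_gt A r with hAr | hAr
  · -- degenerate case: Z is empty
    have hZempty : Z = ∅ := by
      rw [Finset.eq_empty_iff_forall_notMem]
      intro w hwZ
      have hwW : w ∈ W := hZW hwZ
      have hwne : w ≠ 0 := by
        intro h0
        exact hZne1 w hwZ (by rw [h0]; rfl)
      have htail : ∀ j ∈ u, ∀ a : Fin m, c j ≤ (a:ℕ) → w j a = 0 := by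
        intro j hj a ha
        rw [hZdef, Finset.mem_filter] at hwZ
        exact (hwZ.2.1 j hj).2 a ha
      have h6 := hkey5 w hwW hwne c htail (fun j _ => hcm j)
      rw [← hA] at h6
      exact Nat.not_succ_le_self r (le_trans h6 hAr)
    have hNfin0 : Nfin.card = 0 := by
      have hk2 := hkey
      rw [hZempty] at hk2
      simp only [Finset.card_empty, zero_mul] at hk2
      rcases Nat.mul_eq_zero.1 hk2 with h | h
      · exact h
      · exact absurd h hEupos.ne'
    rw [hNfin0]
    simpa using hRHS0
  · -- main case
    obtain ⟨d, hd1, hd2⟩ := exists_pointwise_le u c r (by rw [← hA]; exact hAr.le)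
    set D : Fin s → ℕ := fun j => if j ∈ u then d j else 0 with hDdef
    have hDc : ∀ j, D j ≤ c j := by
      intro j
      rw [hDdef]
      by_cases h : j ∈ u
      · simp only [if_pos h]; exact hd1 j h
      · simp only [if_neg h]; exact Nat.zero_le _
    have hDm : ∀ j ∈ u, D j ≤ m := fun j _ => le_trans (hDc j) (hcm j)
    have hsumD : ∑ j ∈ u, D j = r := by
      rw [← hd2]
      apply Finset.sum_congr rfl
      intro j hj
      rw [hDdef]
      simp [hj]
    -- cardinality of W via the injection
    have hWcard : W.card ≤ b ^ (A - r) := by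
      have hcardT : Fintype.card ((j : Fin s) → Fin (c j - D j) → ZMod b)
          = b ^ (A - r) := by
        rw [Fintype.card_pi]
        have hstep : ∀ j : Fin s,
            Fintype.card (Fin (c j - D j) → ZMod b) = b ^ (c j - D j) := by
          intro j
          rw [Fintype.card_fun, ZMod.card, Fintype.card_fin]
        rw [Finset.prod_congr rfl (fun j _ => hstep j), Finset.prod_pow_eq_pow_sum]
        congr 1
        have hz : ∀ j ∈ Finset.univ, j ∉ u → c j - D j = 0 := by
          intro j _ hj
          rw [hc0 j hj]
          exact Nat.zero_sub _
        rw [← Finset.sum_subset (Finset.subset_univ u) hz]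
        have h2 : ∑ j ∈ u, (c j - D j) + r = A := by
          rw [← hsumD, ← Finset.sum_add_distrib, hA]
          apply Finset.sum_congr rfl
          intro j _
          exact Nat.sub_add_cancel (hDc j)
        exact Nat.eq_sub_of_add_eq h2
      rw [← hcardT, ← Finset.card_univ]
      apply Finset.card_le_card_of_injOn (f := fun w (j : Fin s) (t : Fin (c j - D j)) =>
        w j ⟨D j + (t:ℕ), lt_of_lt_of_le (Nat.add_lt_of_lt_sub' t.isLt) (hcm j)⟩)
        (fun w _ => Finset.mem_univ _)
      intro w hwW w' hw'W hfeq
      rw [Finset.mem_coe] at hwW hw'W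
      have hδW : w - w' ∈ W := hWsub w hwW w' hw'W
      by_cases hδ : w - w' = 0
      · exact sub_eq_zero.1 hδ
      · exfalso
        have hδ0 : ∀ j ∈ u, ∀ a : Fin m, D j ≤ (a:ℕ) → (w - w') j a = 0 := by
          intro j hj a ha
          by_cases hac : (a:ℕ) < c j
          · have hlt2 : (a:ℕ) - D j < c j - D j := tsub_lt_tsub_right_of_le ha hac
            have hte := congrFun (congrFun hfeq j) ⟨(a:ℕ) - D j, hlt2⟩
            simp only at hte
            have hpf : D j + ((a:ℕ) - D j) < m :=
              lt_of_lt_of_le (Nat.add_lt_of_lt_sub' hlt2) (hcm j)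
            have hte2 : w j (⟨D j + ((a:ℕ) - D j), hpf⟩ : Fin m)
                = w' j ⟨D j + ((a:ℕ) - D j), hpf⟩ := hte
            have haa : (⟨D j + ((a:ℕ) - D j), hpf⟩ : Fin m) = a :=
              Fin.ext (Nat.add_sub_cancel' ha)
            rw [haa] at hte2
            simp [Pi.sub_apply, hte2]
          · have h1 : w j a = 0 := by
              rw [hWdef, Finset.mem_filter] at hwW
              exact hwW.2.2.2 j hj a (le_of_not_gt hac)
            have h2 : w' j a = 0 := by
              rw [hWdef, Finset.mem_filter] at hw'W
              exact hw'W.2.2.2 j hj a (le_of_not_gt hac)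
            simp [Pi.sub_apply, h1, h2]
        have h6 := hkey5 (w - w') hδW hδ D hδ0 hDm
        rw [hsumD] at h6
        exact Nat.not_succ_le_self r h6
    -- fibers of the evaluation at (j1, a1)
    by_cases hWall0 : ∀ w ∈ W, w j1 a1 = 0
    · have hZempty : Z = ∅ := by
        rw [Finset.eq_empty_iff_forall_notMem]
        intro w hwZ
        exact hZne1 w hwZ (hWall0 w (hZW hwZ))
      have hNfin0 : Nfin.card = 0 := by
        have hk2 := hkey
        rw [hZempty] at hk2
        simp only [Finset.card_empty, zero_mul] at hk2
        rcases Nat.mul_eq_zero.1 hk2 with h | h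
        · exact h
        · exact absurd h hEupos.ne'
      rw [hNfin0]
      simpa using hRHS0
    · push_neg at hWall0
      obtain ⟨w1, hw1W, hw1ne⟩ := hWall0
      have hfibers : ∀ t1 t2 : ZMod b, (W.filter (fun w => w j1 a1 = t1)).card
          = (W.filter (fun w => w j1 a1 = t2)).card := by
        intro t1 t2
        apply Finset.card_bij' (i := fun w _ => w + ((t2 - t1) * (w1 j1 a1)⁻¹) • w1)
          (j := fun w _ => w + ((t1 - t2) * (w1 j1 a1)⁻¹) • w1)
        · intro w hw
          rw [Finset.mem_filter] at hw ⊢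
          refine ⟨hWadd w hw.1 w1 hw1W _, ?_⟩
          simp only [Pi.add_apply, Pi.smul_apply, smul_eq_mul]
          rw [hw.2, mul_assoc, inv_mul_cancel₀ hw1ne, mul_one]
          ring
        · intro w hw
          rw [Finset.mem_filter] at hw ⊢
          refine ⟨hWadd w hw.1 w1 hw1W _, ?_⟩
          simp only [Pi.add_apply, Pi.smul_apply, smul_eq_mul]
          rw [hw.2, mul_assoc, inv_mul_cancel₀ hw1ne, mul_one]
          ring
        · intro w _
          funext j a
          simp only [Pi.add_apply, Pi.smul_apply, smul_eq_mul]
          ring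
        · intro w _
          funext j a
          simp only [Pi.add_apply, Pi.smul_apply, smul_eq_mul]
          ring
      obtain ⟨f0, hf0⟩ : ∃ f0, f0 = (W.filter (fun w => w j1 a1 = 0)).card := ⟨_, rfl⟩
      have hWb : W.card = b * f0 := by
        rw [Finset.card_eq_sum_card_fiberwise
          (f := fun w => w j1 a1) (t := Finset.univ) (fun w _ => Finset.mem_univ _)]
        rw [Finset.sum_congr rfl (fun t _ => (hfibers t 0).trans hf0.symm)]
        rw [Finset.sum_const, Finset.card_univ, ZMod.card, smul_eq_mul]
      have hZle : Z.card ≤ (b-1) * f0 := by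
        have hsub : Z ⊆ W.filter (fun w => ¬ (w j1 a1 = 0)) := by
          intro w hw
          rw [Finset.mem_filter]
          exact ⟨hZW hw, hZne1 w hw⟩
        have hpart2 := Finset.card_filter_add_card_filter_not
          (s := W) (p := fun w => w j1 a1 = 0)
        have h7 := Finset.card_le_card hsub
        have hX : (W.filter (fun w => ¬ (w j1 a1 = 0))).card = b * f0 - f0 := by
          rw [← hWb, ← hpart2, ← hf0, Nat.add_sub_cancel_left]
        calc Z.card ≤ _ := h7
          _ = b * f0 - f0 := hX
          _ = (b-1) * f0 := (Nat.sub_one_mul b f0).symm ▸ rfl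
      -- real algebra
      have hT0R : (0:ℝ) < (T0:ℝ)^s := by
        apply pow_pos
        exact_mod_cast hT0
      have hEuR : (0:ℝ) < (Eu:ℝ) := by exact_mod_cast hEupos
      have hDiv : ((Nfin.card:ℝ)) / (T0:ℝ)^s = (Z.card : ℝ) / (Eu:ℝ) := by
        rw [div_eq_div_iff hT0R.ne' hEuR.ne']
        exact_mod_cast hkey
      rw [Nat.cast_pow, hDiv]
      have hb0R : (0:ℝ) < (b:ℝ) := by linarith
      have hb1R : (0:ℝ) < (b:ℝ) - 1 := by linarith
      have hZR : (Z.card : ℝ) * b ≤ ((b:ℝ) - 1) * (b:ℝ)^(A - r) := by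
        have hnat : Z.card * b ≤ (b-1) * b^(A - r) := by
          calc Z.card * b ≤ ((b-1) * f0) * b := Nat.mul_le_mul_right b hZle
            _ = (b-1) * (b * f0) := by ring
            _ = (b-1) * W.card := by rw [hWb]
            _ ≤ (b-1) * b^(A-r) := Nat.mul_le_mul_left _ hWcard
        have hcast := (Nat.cast_le (α := ℝ)).2 hnat
        push_cast [Nat.cast_sub hb1.le] at hcast
        exact hcast
      have hEuReq : (Eu : ℝ) = ((b:ℝ)-1)^q * (b:ℝ)^(A-q) := by
        rw [hEu]
        push_cast [Nat.cast_sub hb1.le]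
        ring
      rw [hEuReq]
      rw [div_le_div_iff₀ (by positivity) (by positivity)]
      rw [div_pow]
      have hsplit : ((b:ℝ)-1)^q = ((b:ℝ)-1)^(q-1) * ((b:ℝ)-1) := by
        rw [← pow_succ]
        congr 1
        exact (Nat.succ_pred_eq_of_pos hq1).symm
      rw [hsplit]
      have hfinal : (b:ℝ)^(q-1) / ((b:ℝ)-1)^(q-1) * (b:ℝ)^tu
          * (((b:ℝ)-1)^(q-1) * ((b:ℝ)-1) * (b:ℝ)^(A-q))
          = ((b:ℝ)-1) * (b:ℝ)^((q-1) + tu + (A-q)) := by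
        rw [pow_add, pow_add]
        field_simp
      rw [hfinal]
      have hexp : (A - r) + m = ((q-1) + tu + (A-q)) + 1 :=
        arith_exp hr htu hAr hq1 hqA
      have hmul := mul_le_mul_of_nonneg_right hZR (le_of_lt (pow_pos hb0R m))
      have hcollapse : ((b:ℝ)-1) * (b:ℝ)^(A-r) * (b:ℝ)^m
          = ((b:ℝ)-1) * (b:ℝ)^((q-1)+tu+(A-q)) * (b:ℝ) := by
        rw [mul_assoc, ← pow_add, hexp, pow_succ]
        ring
      rw [hcollapse] at hmul
      have hre : (Z.card:ℝ) * (b:ℝ) * (b:ℝ)^m = ((Z.card:ℝ) * (b:ℝ)^m) * (b:ℝ) := by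
        ring
      rw [hre] at hmul
      exact le_of_mul_le_mul_right hmul hb0R
end

section
/- Let b be a prime, m a positive integer, and C_1,...,C_s ∈ F_b^{m×m} non-singular generating matrices of a digital net P. For any k = (k_1,...,k_s) ∈ ℕ_0^s such that k_j ≥ b^m for at least one index j, the probability that k lies in the dual net of P(L_1 C_1, ..., L_s C_s), when L_1,...,L_s are drawn independently and uniformly from lower-triangular matrices over F_b with nonzero diagonal entries (with sufficiently many rows n), equals exactly 1/b^m. -/
private lemma updRow_updRow {p q : ℕ} {α : Type} [CommRing α]
    (A : Matrix (Fin p) (Fin q) α) (i : Fin p) (r1 r2 : Fin q → α) :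
    (A.updateRow i r1).updateRow i r2 = A.updateRow i r2 := by
  ext a c
  by_cases h : a = i <;> simp [Matrix.updateRow_apply, h]

private lemma updRow_mulVec {p q : ℕ} {α : Type} [CommRing α]
    (M : Matrix (Fin p) (Fin q) α) (v : Fin p) (t : Fin q → α) (d : Fin p → α) :
    (M.updateRow v (M v + t)).transpose.mulVec d = M.transpose.mulVec d + d v • t := by
  funext i
  simp only [Matrix.mulVec, dotProduct, Matrix.transpose_apply,
    Matrix.updateRow_apply, Pi.add_apply, Pi.smul_apply, smul_eq_mul]
  rw [show (fun r => (if r = v then M v i + t i else M r i) * d r)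
      = Function.update (fun r => M r i * d r) v ((M v i + t i) * d v) from
    funext fun r => by by_cases h : r = v <;> simp [Function.update, h]]
  rw [Finset.sum_update_of_mem (Finset.mem_univ v),
    Finset.sum_eq_add_sum_sdiff_singleton_of_mem (Finset.mem_univ v) (fun r => M r i * d r)]
  ring

/-- For nonsingular square generating matrices `C j` and a vector `k` with some
component `k j ≥ b^m` (and enough rows `n` so that all digits of the `k j` are
seen), the probability that `k` lies in the dual of the randomly linearly
scrambled net equals exactly `1 / b^m`. -/
theorem stmt_12 (b s m n : ℕ) (hb : b.Prime) (hm : 0 < m) (hmn : m ≤ n)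
    (C : Fin s → Matrix (Fin m) (Fin m) (ZMod b)) (hC : ∀ j, IsUnit (C j))
    (k : Fin s → ℕ) (hbig : ∃ j, b ^ m ≤ k j) (hfit : ∀ j, k j < b ^ n) :
    ({L : Fin s → Matrix (Fin n) (Fin m) (ZMod b) |
        (∀ j, IsLowTri (L j)) ∧ k ∈ dualNet (fun j => L j * C j)}.ncard : ℝ) /
      ({L : Fin s → Matrix (Fin n) (Fin m) (ZMod b) |
        ∀ j, IsLowTri (L j)}.ncard : ℝ)
      = 1 / (b : ℝ) ^ m := by
  classical
  haveI : Fact b.Prime := ⟨hb⟩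
  have hb1 : 1 < b := hb.one_lt
  obtain ⟨j0, hj0⟩ := hbig
  set K := k j0 with hK
  have hK0 : K ≠ 0 := by
    have : 0 < b ^ m := Nat.pow_pos hb.pos
    omega
  have hvm : m ≤ Nat.log b K := (Nat.le_log_iff_pow_le hb1 hK0).mpr hj0
  have hvn : Nat.log b K < n := Nat.log_lt_of_lt_pow hK0 (hfit j0)
  set v : Fin n := ⟨Nat.log b K, hvn⟩ with hv
  -- the top digit is nonzero
  have hlen : (Nat.digits b K).length = Nat.log b K + 1 := Nat.digits_len b K hb1 hK0
  have hne : Nat.digits b K ≠ [] := Nat.digits_ne_nil_iff_ne_zero.mpr hK0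
  have hdig : (Nat.digits b K).getD (v : ℕ) 0 = (Nat.digits b K).getLast hne := by
    rw [List.getLast_eq_getElem, List.getD_eq_getElem]
    · congr 1
      simp [hv, hlen]
    · simp [hlen, hv]
  have hdnz : digitVec b K (v : ℕ) ≠ 0 := by
    unfold digitVec
    rw [hdig]
    intro h
    have hlt : (Nat.digits b K).getLast hne < b :=
      Nat.digits_lt_base hb1 (List.getLast_mem hne)
    have hz : b ∣ (Nat.digits b K).getLast hne :=
      (ZMod.natCast_eq_zero_iff _ b).mp h
    have hnz0 : (Nat.digits b K).getLast hne ≠ 0 := Nat.getLast_digit_ne_zero b hK0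
    exact absurd (Nat.le_of_dvd (Nat.pos_of_ne_zero hnz0) hz) (not_le.mpr hlt)
  set dv : ZMod b := digitVec b K (v : ℕ) with hdv
  -- abbreviations
  set Φ : (Fin s → Matrix (Fin n) (Fin m) (ZMod b)) → (Fin m → ZMod b) :=
    fun L => ∑ j, (L j * C j).transpose.mulVec (fun i : Fin n => digitVec b (k j) i)
    with hΦ
  set T : (Fin m → ZMod b) → (Fin s → Matrix (Fin n) (Fin m) (ZMod b)) →
      (Fin s → Matrix (Fin n) (Fin m) (ZMod b)) :=
    fun t L => Function.update L j0 ((L j0).updateRow v (L j0 v + t)) with hT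
  -- basic T laws
  have hT0 : ∀ L, T 0 L = L := by
    intro L
    simp [hT, Matrix.updateRow_eq_self]
  have hTadd : ∀ t u L, T t (T u L) = T (u + t) L := by
    intro t u L
    simp only [hT, Function.update_self, Function.update_idem]
    congr 1
    rw [Matrix.updateRow_self, updRow_updRow]
    congr 1
    abel
  have hTlow : ∀ t L, (∀ j, IsLowTri (L j)) → ∀ j, IsLowTri ((T t L) j) := by
    intro t L hL j
    by_cases h : j = j0
    · subst h
      simp only [hT, Function.update_self]
      obtain ⟨h1, h2⟩ := hL j
      constructor
      · intro i c hic
        rcases eq_or_ne i v with rfl | hi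
        · exfalso
          have hc : (c : ℕ) < m := c.isLt
          have hvv : (v : ℕ) = Nat.log b K := rfl
          omega
        · rw [Matrix.updateRow_ne hi]; exact h1 i c hic
      · intro i c hic
        rcases eq_or_ne i v with rfl | hi
        · exfalso
          have hc : (c : ℕ) < m := c.isLt
          have hvv : (v : ℕ) = Nat.log b K := rfl
          omega
        · rw [Matrix.updateRow_ne hi]; exact h2 i c hic
    · simpa [hT, Function.update_of_ne h] using hL j
  -- effect of T on Φ
  have hTphi : ∀ t L, Φ (T t L) = Φ L + dv • (C j0).transpose.mulVec t := by
    intro t L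
    have hfun : (fun j => ((T t L) j * C j).transpose.mulVec
          (fun i : Fin n => digitVec b (k j) i))
        = Function.update
            (fun j => (L j * C j).transpose.mulVec (fun i : Fin n => digitVec b (k j) i)) j0
            ((L j0 * C j0).transpose.mulVec (fun i : Fin n => digitVec b (k j0) i)
              + dv • (C j0).transpose.mulVec t) := by
      funext j
      rcases eq_or_ne j j0 with rfl | h
      · simp only [hT, Function.update_self]
        rw [Matrix.transpose_mul, ← Matrix.mulVec_mulVec, updRow_mulVec,
          Matrix.mulVec_add, Matrix.mulVec_smul, Matrix.transpose_mul,
          ← Matrix.mulVec_mulVec]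
      · simp [hT, Function.update_of_ne h]
    simp only [hΦ]
    rw [hfun, Finset.sum_update_of_mem (Finset.mem_univ j0),
      Finset.sum_eq_add_sum_sdiff_singleton_of_mem (Finset.mem_univ j0)
        (fun j => (L j * C j).transpose.mulVec (fun i : Fin n => digitVec b (k j) i))]
    abel
  -- inverse of the shift map
  have hCdet : IsUnit (C j0).det := (Matrix.isUnit_iff_isUnit_det _).mp (hC j0)
  set winv : (Fin m → ZMod b) → (Fin m → ZMod b) :=
    fun u => dv⁻¹ • ((C j0)⁻¹).transpose.mulVec u with hwinv
  have hpsi : ∀ u, dv • (C j0).transpose.mulVec (winv u) = u := by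
    intro u
    simp only [hwinv]
    rw [Matrix.mulVec_smul, smul_smul, mul_inv_cancel₀ hdnz, one_smul,
      Matrix.mulVec_mulVec, ← Matrix.transpose_mul, Matrix.nonsing_inv_mul _ hCdet,
      Matrix.transpose_one, Matrix.one_mulVec]
  -- sets
  set A : Set (Fin s → Matrix (Fin n) (Fin m) (ZMod b)) :=
    {L | (∀ j, IsLowTri (L j)) ∧ Φ L = 0} with hA
  set B : Set (Fin s → Matrix (Fin n) (Fin m) (ZMod b)) :=
    {L | ∀ j, IsLowTri (L j)} with hB
  -- the equivalence
  have hphiF : ∀ (u : Fin m → ZMod b) (L), Φ L = 0 → Φ (T (winv u) L) = u := by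
    intro u L h0
    rw [hTphi, h0, hpsi, zero_add]
  have hphiG : ∀ L, Φ (T (-(winv (Φ L))) L) = 0 := by
    intro L
    rw [hTphi]
    have : dv • (C j0).transpose.mulVec (-(winv (Φ L))) = -(Φ L) := by
      rw [Matrix.mulVec_neg, smul_neg, hpsi]
    rw [this, add_neg_cancel]
  let E : (A × (Fin m → ZMod b)) ≃ B :=
  { toFun := fun p => ⟨T (winv p.2) p.1.1, hTlow _ _ p.1.2.1⟩
    invFun := fun q => (⟨T (-(winv (Φ q.1))) q.1, hTlow _ _ q.2, hphiG _⟩, Φ q.1)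
    left_inv := by
      rintro ⟨⟨L, hL1, hL2⟩, u⟩
      have hu : Φ (T (winv u) L) = u := hphiF u L hL2
      refine Prod.ext (Subtype.ext ?_) ?_
      · show T (-(winv (Φ (T (winv u) L)))) (T (winv u) L) = L
        rw [hu, hTadd, add_neg_cancel, hT0]
      · exact hu
    right_inv := by
      rintro ⟨L, hL⟩
      refine Subtype.ext ?_
      show T (winv (Φ L)) (T (-(winv (Φ L))) L) = L
      rw [hTadd, neg_add_cancel, hT0] }
  -- cardinalities
  have hcard : Nat.card B = Nat.card A * b ^ m := by
    rw [← Nat.card_congr E, Nat.card_prod]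
    congr 1
    rw [Nat.card_eq_fintype_card, Fintype.card_fun, ZMod.card, Fintype.card_fin]
  -- B is nonempty
  have hBne : B.Nonempty := by
    refine ⟨fun _ => Matrix.of (fun i c => if (i : ℕ) = (c : ℕ) then 1 else 0), ?_⟩
    intro j
    constructor
    · intro i c hic
      simp only [Matrix.of_apply]
      rw [if_neg (by omega)]
    · intro i c hic
      simp only [Matrix.of_apply]
      rw [if_pos hic]
      exact one_ne_zero
  have hBfin : B.Finite := Set.toFinite _
  have hAfin : A.Finite := Set.toFinite _
  have hBpos : 0 < B.ncard := (Set.ncard_pos hBfin).mpr hBne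
  have hApos : A.ncard ≠ 0 := by
    intro h
    have hc2 := hcard
    rw [Nat.card_coe_set_eq, Nat.card_coe_set_eq, h, zero_mul] at hc2
    omega
  -- identify the sets in the goal
  have hsetA : {L : Fin s → Matrix (Fin n) (Fin m) (ZMod b) |
      (∀ j, IsLowTri (L j)) ∧ k ∈ dualNet (fun j => L j * C j)} = A := by
    ext L
    simp only [hA, Set.mem_setOf_eq, dualNet, hΦ]
  rw [hsetA]
  have hcard' : (B.ncard : ℝ) = (A.ncard : ℝ) * (b : ℝ) ^ m := by
    have := hcard
    rw [Nat.card_coe_set_eq, Nat.card_coe_set_eq] at this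
    rw [this]
    push_cast
    ring
  have hAR : (0:ℝ) < (A.ncard : ℝ) := by exact_mod_cast Nat.pos_of_ne_zero hApos
  rw [hcard', div_eq_div_iff (by positivity) (by positivity)]
  ring
end

section
/- Let b be a prime and m, s positive integers. For any nonzero k ∈ ℕ_0^s, the probability that k lies in the dual P^⊥(p, g) = {k : k(x)·g(x) ≡ 0 mod p(x)} of a random infinite-precision polynomial lattice point set, where p is uniform over monic irreducible polynomials of degree m over F_b and g is uniform over (G_m)^s, is at most 3 μ_1(k) / (b^m − 1), where μ_1(k) = ∑_j μ_1(k_j) is the total NRT weight. -/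
open Polynomial

/-- The polynomial over `F_b` whose coefficients are the base-`b` digits of `k`. -/
noncomputable def natPoly (b k : ℕ) : Polynomial (ZMod b) :=
  ∑ i ∈ Finset.range (Nat.digits b k).length,
    Polynomial.C (((Nat.digits b k).getD i 0 : ℕ) : ZMod b) * Polynomial.X ^ i

namespace Stmt14Aux

lemma my_ncard_univ_pi {ι : Type*} [Fintype ι] {α : ι → Type*} (t : ∀ i, Set (α i)) :
    (Set.univ.pi t).ncard = ∏ i, (t i).ncard := by
  rw [← Nat.card_coe_set_eq, Nat.card_congr (Equiv.Set.univPi t), Nat.card_pi]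
  simp [Nat.card_coe_set_eq]

lemma my_ncard_prod {α β : Type*} (s : Set α) (t : Set β) :
    (s ×ˢ t).ncard = s.ncard * t.ncard := by
  rw [← Nat.card_coe_set_eq, Nat.card_congr (Equiv.Set.prod s t), Nat.card_prod]
  simp [Nat.card_coe_set_eq]

lemma my_ncard_biUnion_le {α β : Type*} (s : Finset α) (t : α → Set β) :
    (⋃ a ∈ s, t a).ncard ≤ ∑ a ∈ s, (t a).ncard := by
  classical
  induction s using Finset.cons_induction with
  | empty => simp
  | cons a s ha ih =>
    rw [Finset.cons_eq_insert, Finset.set_biUnion_insert, Finset.sum_insert ha]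
    exact le_trans (Set.ncard_union_le _ _) (Nat.add_le_add le_rfl ih)

variable {b s m : ℕ} [hfb : Fact b.Prime]

local notation "F" => ZMod b


lemma natPoly_natDegree_lt (b k : ℕ) (hb : 1 < b) (hk : k ≠ 0) :
    (natPoly b k).natDegree < (Nat.digits b k).length := by
  have hlen : 0 < (Nat.digits b k).length := by
    rw [List.length_pos_iff]
    exact Nat.digits_ne_nil_iff_ne_zero.mpr hk
  refine lt_of_le_of_lt (natDegree_sum_le_of_forall_le _ _ fun i hi => ?_)
    (Nat.sub_lt hlen one_pos)
  exact le_trans (natDegree_C_mul_X_pow_le _ _)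
    (Nat.le_sub_one_of_lt (Finset.mem_range.mp hi))

lemma natPoly_coeff (b k i : ℕ) (hi : i < (Nat.digits b k).length) :
    (natPoly b k).coeff i = (((Nat.digits b k).getD i 0 : ℕ) : ZMod b) := by
  rw [natPoly, finset_sum_coeff]
  rw [Finset.sum_eq_single i]
  · simp
  · intro j hj hji
    rw [coeff_C_mul, coeff_X_pow, if_neg (Ne.symm hji), mul_zero]
  · intro h; exact absurd (Finset.mem_range.mpr hi) h

lemma natPoly_ne_zero (b k : ℕ) (hb : b.Prime) (hk : k ≠ 0) :
    natPoly b k ≠ 0 := by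
  have : Fact b.Prime := ⟨hb⟩
  have hlen : (Nat.digits b k) ≠ [] := Nat.digits_ne_nil_iff_ne_zero.mpr hk
  have hpos : 0 < (Nat.digits b k).length := List.length_pos_iff.mpr hlen
  intro h0
  have hc := natPoly_coeff b k ((Nat.digits b k).length - 1) (Nat.sub_lt hpos one_pos)
  rw [h0, coeff_zero] at hc
  have hlast : (Nat.digits b k).getD ((Nat.digits b k).length - 1) 0
      = (Nat.digits b k).getLast hlen := by
    rw [List.getLast_eq_getElem]
    rw [List.getD_eq_getElem _ _ (Nat.sub_lt hpos one_pos)]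
  have hne : (Nat.digits b k).getLast hlen ≠ 0 := Nat.getLast_digit_ne_zero b hk
  have hlt : (Nat.digits b k).getLast hlen < b :=
    Nat.digits_lt_base hb.one_lt (List.getLast_mem hlen)
  rw [hlast] at hc
  have := (ZMod.natCast_eq_zero_iff _ b).mp hc.symm
  exact hne (Nat.eq_zero_of_dvd_of_lt this hlt)


lemma ncard_degreeLT_set (m : ℕ) :
    Nat.card (degreeLT F m : Submodule F (Polynomial F)) = b ^ m := by
  rw [Nat.card_congr (degreeLTEquiv F m).toEquiv, Nat.card_pi]
  simp [Nat.card_eq_fintype_card, ZMod.card]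

lemma finite_degreeLT (m : ℕ) : (↑(degreeLT F m) : Set (Polynomial F)).Finite := by
  rw [← Set.finite_coe_iff]
  have e := (degreeLTEquiv F m).toEquiv
  exact Finite.of_equiv _ e.symm

lemma Gset_eq (m : ℕ) : {g : Polynomial F | g ≠ 0 ∧ g.natDegree < m}
    = (↑(degreeLT F m) : Set (Polynomial F)) \ {0} := by
  ext g
  simp only [Set.mem_setOf_eq, Set.mem_diff, SetLike.mem_coe, mem_degreeLT,
    Set.mem_singleton_iff]
  constructor
  · rintro ⟨h0, hd⟩
    exact ⟨(natDegree_lt_iff_degree_lt h0).mp hd, h0⟩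
  · rintro ⟨hd, h0⟩
    exact ⟨h0, (natDegree_lt_iff_degree_lt h0).mpr hd⟩

lemma Gset_finite (m : ℕ) : {g : Polynomial F | g ≠ 0 ∧ g.natDegree < m}.Finite := by
  rw [Gset_eq]; exact (finite_degreeLT m).diff

lemma Gset_ncard (m : ℕ) (hm : 0 < m) :
    {g : Polynomial F | g ≠ 0 ∧ g.natDegree < m}.ncard = b ^ m - 1 := by
  rw [Gset_eq]
  rw [Set.ncard_diff_singleton_of_mem _]
  · rw [← Nat.card_coe_set_eq]
    norm_cast
    rw [ncard_degreeLT_set m]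
  · simp only [SetLike.mem_coe, mem_degreeLT, degree_zero]
    exact_mod_cast WithBot.bot_lt_coe _


lemma fiber_bound (hm : 0 < m) (p : Polynomial F) (hmon : p.Monic)
    (hirr : Irreducible p) (hdeg : p.natDegree = m)
    (K : Fin s → Polynomial F) (j0 : Fin s) (hj0 : ¬ p ∣ K j0) :
    {g : Fin s → Polynomial F | (∀ j, g j ≠ 0 ∧ (g j).natDegree < m) ∧
        p ∣ ∑ j, K j * g j}.ncard ≤ (b ^ m - 1) ^ (s - 1) := by
  classical
  set G : Set (Polynomial F) := {g | g ≠ 0 ∧ g.natDegree < m} with hG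
  set T : Fin s → Set (Polynomial F) := Function.update (fun _ => G) j0 {0} with hT
  have hTfin : ∀ j, (T j).Finite := by
    intro j
    rcases eq_or_ne j j0 with rfl | h
    · simp [hT]
    · simpa [hT, Function.update_of_ne h] using Gset_finite m
  have htargetfin : (Set.univ.pi T).Finite := Set.Finite.pi hTfin
  have hmaps : ∀ g ∈ {g : Fin s → Polynomial F | (∀ j, g j ≠ 0 ∧ (g j).natDegree < m) ∧
      p ∣ ∑ j, K j * g j}, Function.update g j0 0 ∈ Set.univ.pi T := by
    rintro g ⟨hg, -⟩ j -
    rcases eq_or_ne j j0 with rfl | h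
    · simp [hT]
    · simpa [hT, hG, Function.update_of_ne h] using hg j
  have hinj : Set.InjOn (fun g => Function.update g j0 0)
      {g : Fin s → Polynomial F | (∀ j, g j ≠ 0 ∧ (g j).natDegree < m) ∧
        p ∣ ∑ j, K j * g j} := by
    rintro g ⟨hg, hdvd⟩ g' ⟨hg', hdvd'⟩ heq
    have hagree : ∀ j, j ≠ j0 → g j = g' j := by
      intro j hj
      have := congrFun heq j
      simpa [Function.update_of_ne hj] using this
    have hkey : p ∣ K j0 * (g j0 - g' j0) := by
      have : (∑ j, K j * g j) - (∑ j, K j * g' j) = K j0 * (g j0 - g' j0) := by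
        rw [← Finset.sum_sub_distrib]
        rw [Finset.sum_eq_single j0]
        · ring
        · intro j _ hj; rw [hagree j hj]; ring
        · simp
      rw [← this]
      exact dvd_sub hdvd hdvd'
    have hprime : Prime p := hirr.prime
    have hdvd2 : p ∣ g j0 - g' j0 := (hprime.dvd_or_dvd hkey).resolve_left hj0
    have hdlt : (g j0 - g' j0).degree < p.degree := by
      have h1 : (g j0).degree < (m : ℕ) := by
        exact (natDegree_lt_iff_degree_lt (hg j0).1).mp (hg j0).2
      have h2 : (g' j0).degree < (m : ℕ) := by
        exact (natDegree_lt_iff_degree_lt (hg' j0).1).mp (hg' j0).2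
      have : p.degree = (m : ℕ) := by
        rw [degree_eq_natDegree hirr.ne_zero, hdeg]
      rw [this]
      exact lt_of_le_of_lt (degree_sub_le _ _) (max_lt h1 h2)
    have hzero : g j0 - g' j0 = 0 := eq_zero_of_dvd_of_degree_lt hdvd2 hdlt
    funext j
    rcases eq_or_ne j j0 with rfl | h
    · exact sub_eq_zero.mp hzero
    · exact hagree j h
  calc {g : Fin s → Polynomial F | (∀ j, g j ≠ 0 ∧ (g j).natDegree < m) ∧
        p ∣ ∑ j, K j * g j}.ncard
      ≤ (Set.univ.pi T).ncard := Set.ncard_le_ncard_of_injOn _ hmaps hinj htargetfin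
    _ = ∏ j, (T j).ncard := my_ncard_univ_pi T
    _ = (b ^ m - 1) ^ (s - 1) := by
        have hGn : G.ncard = b ^ m - 1 := Gset_ncard m hm
        have hfac : ∀ j, (T j).ncard = if j = j0 then 1 else b ^ m - 1 := by
          intro j
          rcases eq_or_ne j j0 with rfl | h
          · simp [hT]
          · rw [hT, if_neg h, Function.update_of_ne h]; exact hGn
        rw [Finset.prod_congr rfl fun j _ => hfac j,
          ← Finset.mul_prod_erase _ _ (Finset.mem_univ j0), if_pos rfl, one_mul,
          Finset.prod_congr rfl (fun j hj => if_neg (Finset.mem_erase.mp hj).1),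
          Finset.prod_const, Finset.card_erase_of_mem (Finset.mem_univ j0),
          Finset.card_univ, Fintype.card_fin]


lemma mygeom_le (hb : 2 ≤ b) : ∀ n : ℕ, ∑ d ∈ Finset.range n, b ^ d ≤ b ^ n := by
  intro n
  induction n with
  | zero => simp
  | succ n ih =>
    rw [Finset.sum_range_succ, pow_succ]
    nlinarith [Nat.one_le_two_pow (n := n), pow_pos (lt_of_lt_of_le two_pos hb) n]

lemma proper_div_sum_le (hm : 0 < m) (hb : 2 ≤ b) :
    2 * ∑ d ∈ Nat.properDivisors m, b ^ d ≤ b ^ m := by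
  rcases eq_or_lt_of_le (Nat.succ_le_of_lt hm) with h1 | h2
  · simp [← h1]
  rcases eq_or_lt_of_le (Nat.succ_le_of_lt h2) with h2' | h3
  · have : m = 2 := by omega
    subst this
    have : Nat.properDivisors 2 = {1} := by decide
    rw [this, Finset.sum_singleton]
    nlinarith
  · -- m ≥ 3
    have hsub : Nat.properDivisors m ⊆ Finset.Ico 1 (m / 2 + 1) := by
      intro d hd
      rw [Nat.mem_properDivisors] at hd
      obtain ⟨⟨c, hc⟩, hlt⟩ := hd
      have hd0 : 0 < d := by
        rcases Nat.eq_zero_or_pos d with rfl | h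
        · simp at hc; omega
        · exact h
      have hc2 : 2 ≤ c := by
        rcases Nat.lt_or_ge c 2 with h | h
        · interval_cases c <;> omega
        · exact h
      have : 2 * d ≤ m := by nlinarith
      simp only [Finset.mem_Ico]
      omega
    have h1 : ∑ d ∈ Nat.properDivisors m, b ^ d ≤ ∑ d ∈ Finset.Ico 1 (m / 2 + 1), b ^ d :=
      Finset.sum_le_sum_of_subset hsub
    have h2 : ∑ d ∈ Finset.Ico 1 (m / 2 + 1), b ^ d ≤ ∑ d ∈ Finset.range (m / 2 + 1), b ^ d := by
      apply Finset.sum_le_sum_of_subset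
      intro x; simp only [Finset.mem_Ico, Finset.mem_range]; omega
    have h3' : ∑ d ∈ Finset.range (m / 2 + 1), b ^ d ≤ b ^ (m / 2 + 1) := mygeom_le hb _
    have h4 : 2 * b ^ (m / 2 + 1) ≤ b ^ (m / 2 + 2) := by
      have : b ^ (m / 2 + 2) = b * b ^ (m / 2 + 1) := by ring
      rw [this]
      exact Nat.mul_le_mul_right _ hb
    have h5 : b ^ (m / 2 + 2) ≤ b ^ m := Nat.pow_le_pow_right (by omega) (by omega)
    omega


lemma gauss_bound (hm : 0 < m) (P : Finset (Polynomial F))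
    (hP : ∀ q, q ∈ P ↔ q.Monic ∧ Irreducible q ∧ q.natDegree = m) :
    b ^ m ≤ 2 * (m * P.card) := by
  classical
  have hb2 : 2 ≤ b := hfb.out.two_le
  let K := GaloisField b m
  letI : Fintype K := Fintype.ofFinite K
  have hcardK : Fintype.card K = b ^ m := by
    rw [← Nat.card_eq_fintype_card]; exact GaloisField.card b m hm.ne'
  have hint : ∀ α : K, IsIntegral F α := fun α => IsIntegral.of_finite F α
  set Sm : Finset K := Finset.univ.filter (fun α : K => (minpoly F α).natDegree = m) with hSm
  set Sc : Finset K := Finset.univ.filter (fun α : K => ¬ (minpoly F α).natDegree = m) with hSc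
  have hsplit : Sm.card + Sc.card = b ^ m := by
    rw [hSm, hSc, Finset.card_filter_add_card_filter_not, Finset.card_univ, hcardK]
  -- bound on Sm
  have hSmcard : Sm.card ≤ m * P.card := by
    have h1 : Sm.card ≤ m * (Sm.image (fun α => minpoly F α)).card := by
      apply Finset.card_le_mul_card_image
      intro q hq
      obtain ⟨α0, hα0, rfl⟩ := Finset.mem_image.mp hq
      have hα0m : (minpoly F α0).natDegree = m := (Finset.mem_filter.mp hα0).2
      have hq0 : minpoly F α0 ≠ 0 := minpoly.ne_zero (hint α0)
      have hmapne : (minpoly F α0).map (algebraMap F K) ≠ 0 :=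
        (Polynomial.map_ne_zero_iff (algebraMap F K).injective).mpr hq0
      set qm : Polynomial K := (minpoly F α0).map (algebraMap F K) with hqm
      have hsub2 : Sm.filter (fun α => minpoly F α = minpoly F α0) ⊆ qm.roots.toFinset := by
        intro α hα
        obtain ⟨hα1, hα2⟩ := Finset.mem_filter.mp hα
        rw [Multiset.mem_toFinset, mem_roots hmapne]
        show eval α qm = 0
        rw [hqm, eval_map, ← aeval_def, ← hα2, minpoly.aeval]
      calc (Sm.filter (fun α => minpoly F α = minpoly F α0)).card
          ≤ qm.roots.toFinset.card := Finset.card_le_card hsub2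
        _ ≤ Multiset.card qm.roots := Multiset.toFinset_card_le _
        _ ≤ qm.natDegree := card_roots' _
        _ = m := by rw [hqm, natDegree_map, hα0m]
    refine le_trans h1 (Nat.mul_le_mul_left m (Finset.card_le_card ?_))
    intro q hq
    obtain ⟨α, hα, rfl⟩ := Finset.mem_image.mp hq
    exact (hP _).mpr ⟨minpoly.monic (hint α), minpoly.irreducible (hint α),
      (Finset.mem_filter.mp hα).2⟩
  -- bound on Sc
  have hSccard : Sc.card ≤ ∑ d ∈ Nat.properDivisors m, b ^ d := by
    have hsub : Sc ⊆ (Nat.properDivisors m).biUnion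
        (fun d => Finset.univ.filter (fun α : K => α ^ b ^ d = α)) := by
      intro α hα
      have hne : (minpoly F α).natDegree ≠ m := (Finset.mem_filter.mp hα).2
      set d := (minpoly F α).natDegree with hd
      have hd0 : 0 < d := minpoly.natDegree_pos (hint α)
      have hfr : Module.finrank F (IntermediateField.adjoin F {α} : IntermediateField F K) = d :=
        IntermediateField.adjoin.finrank (hint α)
      have hdvd : d ∣ m := by
        refine ⟨Module.finrank (IntermediateField.adjoin F {α} : IntermediateField F K) K, ?_⟩
        rw [← hfr, Module.finrank_mul_finrank F _ K, GaloisField.finrank b hm.ne']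
      have hdm : d < m := lt_of_le_of_ne (Nat.le_of_dvd hm hdvd) hne
      rw [Finset.mem_biUnion]
      refine ⟨d, Nat.mem_properDivisors.mpr ⟨hdvd, hdm⟩, Finset.mem_filter.mpr
        ⟨Finset.mem_univ _, ?_⟩⟩
      -- α ^ b ^ d = α
      set E := (IntermediateField.adjoin F {α} : IntermediateField F K)
      letI : Fintype E := Fintype.ofFinite E
      have hcardE : Fintype.card E = b ^ d := by
        rw [Module.card_eq_pow_finrank (K := F) (V := E), ZMod.card, hfr]
      have hgen : (IntermediateField.AdjoinSimple.gen F α) ^ b ^ d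
          = IntermediateField.AdjoinSimple.gen F α := by
        rw [← hcardE]; exact FiniteField.pow_card _
      have := congrArg (algebraMap E K) hgen
      rwa [map_pow, IntermediateField.AdjoinSimple.algebraMap_gen] at this
    refine le_trans (Finset.card_le_card hsub) (le_trans (Finset.card_biUnion_le) ?_)
    apply Finset.sum_le_sum
    intro d hd
    have hd1 : 1 ≤ d := (Nat.pos_of_mem_properDivisors hd)
    have hbd : 2 ≤ b ^ d := le_trans hb2 (Nat.le_self_pow (by omega) b)
    set q : Polynomial K := X ^ (b ^ d) - X with hq
    have hqdeg : q.natDegree = b ^ d := by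
      rw [hq]
      rw [natDegree_sub_eq_left_of_natDegree_lt]
      · exact natDegree_X_pow _
      · rw [natDegree_X, natDegree_X_pow]; omega
    have hqne : q ≠ 0 := by
      intro h; rw [h] at hqdeg; simp at hqdeg; omega
    refine le_trans (Finset.card_le_card ?_) (le_trans (Multiset.toFinset_card_le q.roots)
      (le_trans (card_roots' _) hqdeg.le))
    intro α hα
    have hαq : α ^ b ^ d = α := (Finset.mem_filter.mp hα).2
    rw [Multiset.mem_toFinset, mem_roots hqne]
    show eval α q = 0
    simp [hq, sub_eq_zero, hαq]
  have := proper_div_sum_le hm hb2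
  omega


lemma bad_bound (K0 : Polynomial F) (hK0 : K0 ≠ 0) (B : Finset (Polynomial F))
    (hB : ∀ p ∈ B, p.Monic ∧ Irreducible p ∧ p.natDegree = m)
    (hdvd : ∀ p ∈ B, p ∣ K0) : m * B.card ≤ K0.natDegree := by
  classical
  have hprod : ∏ p ∈ B, p ∣ K0 := by
    apply Finset.prod_dvd_of_coprime _ hdvd
    intro p hp q hq hpq
    simp only [Function.onFun, id] 
    refine (Irreducible.coprime_iff_not_dvd (hB p hp).2.1).mpr ?_
    intro hdvd'
    exact hpq (Polynomial.eq_of_monic_of_associated (hB p hp).1 (hB q hq).1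
      ((hB p hp).2.1.associated_of_dvd (hB q hq).2.1 hdvd'))
  have h1 : (∏ p ∈ B, p).natDegree ≤ K0.natDegree := natDegree_le_of_dvd hprod hK0
  have h2 : (∏ p ∈ B, p).natDegree = ∑ p ∈ B, p.natDegree :=
    natDegree_prod _ _ (fun p hp => (hB p hp).2.1.ne_zero)
  have h3 : ∑ p ∈ B, p.natDegree = m * B.card := by
    rw [Finset.sum_congr rfl (fun p hp => (hB p hp).2.2), Finset.sum_const, smul_eq_mul,
      mul_comm]
  omega


end Stmt14Aux

/-- For any nonzero `k ∈ ℕ₀^s`, the probability (over uniform monic irreducible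
`p` of degree `m` and uniform `g ∈ G_m^s`) that `k` lies in the dual of the
infinite-precision polynomial lattice point set is at most
`3 μ₁(k) / (b^m - 1)`, where `μ₁(k) = ∑_j μ₁(k_j)`. -/
theorem stmt_14 (b s m : ℕ) (hb : b.Prime) (hs : 0 < s) (hm : 0 < m)
    (k : Fin s → ℕ) (hk : k ≠ 0) :
    ({pg : Polynomial (ZMod b) × (Fin s → Polynomial (ZMod b)) |
        (pg.1.Monic ∧ Irreducible pg.1 ∧ pg.1.natDegree = m) ∧
        (∀ j, pg.2 j ≠ 0 ∧ (pg.2 j).natDegree < m) ∧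
        pg.1 ∣ ∑ j, natPoly b (k j) * pg.2 j}.ncard : ℝ) /
      ({pg : Polynomial (ZMod b) × (Fin s → Polynomial (ZMod b)) |
        (pg.1.Monic ∧ Irreducible pg.1 ∧ pg.1.natDegree = m) ∧
        ∀ j, pg.2 j ≠ 0 ∧ (pg.2 j).natDegree < m}.ncard : ℝ)
      ≤ 3 * (∑ j, nrtWeight b (k j) : ℝ) / ((b : ℝ) ^ m - 1) := by
  classical
  haveI hfb : Fact b.Prime := ⟨hb⟩
  have hb2 : 2 ≤ b := hb.two_le
  set Pset : Set (Polynomial (ZMod b)) := {p | p.Monic ∧ Irreducible p ∧ p.natDegree = m}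
    with hPset
  set Gs : Set (Polynomial (ZMod b)) := {g | g ≠ 0 ∧ g.natDegree < m} with hGs
  set GPi : Set (Fin s → Polynomial (ZMod b)) := Set.univ.pi (fun _ => Gs) with hGPi
  have hGsfin : Gs.Finite := Stmt14Aux.Gset_finite m
  have hGPifin : GPi.Finite := Set.Finite.pi (fun _ => hGsfin)
  have hPfin : Pset.Finite := by
    apply (Stmt14Aux.finite_degreeLT (m + 1)).subset
    rintro p ⟨hmon, -, hdeg⟩
    simp only [SetLike.mem_coe, mem_degreeLT]
    rw [degree_eq_natDegree hmon.ne_zero, hdeg]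
    exact_mod_cast Nat.lt_succ_self m
  set PFin := hPfin.toFinset with hPFin
  have hPmem : ∀ q, q ∈ PFin ↔ (q.Monic ∧ Irreducible q ∧ q.natDegree = m) := by
    intro q; rw [hPFin, Set.Finite.mem_toFinset]; exact Iff.rfl
  have hgauss : b ^ m ≤ 2 * (m * PFin.card) := Stmt14Aux.gauss_bound hm PFin hPmem
  set N := PFin.card with hN
  set G := b ^ m - 1 with hGdef
  have hbm2 : 2 ≤ b ^ m := le_trans hb2 (Nat.le_self_pow hm.ne' b)
  have hG1 : 1 ≤ G := by omega
  have hN1 : 1 ≤ N := by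
    rcases Nat.eq_zero_or_pos N with h0 | h; · rw [h0] at hgauss; simp at hgauss; omega
    exact h
  set w := ∑ j, nrtWeight b (k j) with hw
  obtain ⟨j0, hj0⟩ : ∃ j, k j ≠ 0 := by
    by_contra h; push_neg at h; exact hk (funext h)
  have hK0ne : natPoly b (k j0) ≠ 0 := Stmt14Aux.natPoly_ne_zero b (k j0) hb hj0
  have hK0deg : (natPoly b (k j0)).natDegree < nrtWeight b (k j0) :=
    Stmt14Aux.natPoly_natDegree_lt b (k j0) hb.one_lt hj0
  have hwj0 : nrtWeight b (k j0) ≤ w := by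
    rw [hw]
    exact Finset.single_le_sum (f := fun j => nrtWeight b (k j))
      (fun j _ => Nat.zero_le _) (Finset.mem_univ j0)
  have hw1 : 1 ≤ w := by omega
  -- the denominator set
  have hDen : {pg : Polynomial (ZMod b) × (Fin s → Polynomial (ZMod b)) |
      (pg.1.Monic ∧ Irreducible pg.1 ∧ pg.1.natDegree = m) ∧
      ∀ j, pg.2 j ≠ 0 ∧ (pg.2 j).natDegree < m} = Pset ×ˢ GPi := by
    ext pg
    simp only [Set.mem_setOf_eq, Set.mem_prod, hGPi, Set.mem_univ_pi, hGs, hPset]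
  have hGscard : Gs.ncard = G := Stmt14Aux.Gset_ncard m hm
  have hGPicard : GPi.ncard = G ^ s := by
    rw [hGPi, Stmt14Aux.my_ncard_univ_pi]
    simp [hGscard]
  have hDcard : (Pset ×ˢ GPi).ncard = N * G ^ s := by
    rw [Stmt14Aux.my_ncard_prod, hGPicard, Set.ncard_eq_toFinset_card _ hPfin]
  -- the numerator set
  set fib : Polynomial (ZMod b) → Set (Fin s → Polynomial (ZMod b)) := fun p =>
    {g | (∀ j, g j ≠ 0 ∧ (g j).natDegree < m) ∧ p ∣ ∑ j, natPoly b (k j) * g j} with hfib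
  have hfibsub : ∀ p, fib p ⊆ GPi := by
    rintro p g ⟨hg, -⟩
    rw [hGPi, Set.mem_univ_pi]
    exact fun j => hg j
  have hAsub : {pg : Polynomial (ZMod b) × (Fin s → Polynomial (ZMod b)) |
      (pg.1.Monic ∧ Irreducible pg.1 ∧ pg.1.natDegree = m) ∧
      (∀ j, pg.2 j ≠ 0 ∧ (pg.2 j).natDegree < m) ∧
      pg.1 ∣ ∑ j, natPoly b (k j) * pg.2 j} ⊆ ⋃ p ∈ PFin, ({p} : Set _) ×ˢ fib p := by
    rintro pg ⟨h1, h2, h3⟩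
    refine Set.mem_biUnion ((hPmem pg.1).mpr h1) ?_
    exact ⟨rfl, h2, h3⟩
  have hAcard : {pg : Polynomial (ZMod b) × (Fin s → Polynomial (ZMod b)) |
      (pg.1.Monic ∧ Irreducible pg.1 ∧ pg.1.natDegree = m) ∧
      (∀ j, pg.2 j ≠ 0 ∧ (pg.2 j).natDegree < m) ∧
      pg.1 ∣ ∑ j, natPoly b (k j) * pg.2 j}.ncard ≤ ∑ p ∈ PFin, (fib p).ncard := by
    refine le_trans (Set.ncard_le_ncard hAsub ?_) ?_
    · exact Set.Finite.biUnion PFin.finite_toSet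
        (fun p _ => (Set.finite_singleton p).prod ((hGPifin).subset (hfibsub p)))
    · refine le_trans (Stmt14Aux.my_ncard_biUnion_le PFin _) ?_
      refine Finset.sum_le_sum fun p _ => ?_
      rw [Stmt14Aux.my_ncard_prod, Set.ncard_singleton, one_mul]
  set BFin := PFin.filter (fun p => ∀ j, p ∣ natPoly b (k j)) with hBFin
  have hfibbound : ∀ p ∈ PFin,
      (fib p).ncard ≤ (if p ∈ BFin then G ^ s else 0) + G ^ (s - 1) := by
    intro p hp
    rcases em (∀ j, p ∣ natPoly b (k j)) with hall | hnot
    · rw [if_pos (Finset.mem_filter.mpr ⟨hp, hall⟩)]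
      exact le_trans (le_trans (Set.ncard_le_ncard (hfibsub p) hGPifin) hGPicard.le)
        (Nat.le_add_right _ _)
    · rw [if_neg (fun hmem => hnot (Finset.mem_filter.mp hmem).2), zero_add]
      push_neg at hnot
      obtain ⟨j1, hj1⟩ := hnot
      obtain ⟨hmon, hirr, hdeg⟩ := (hPmem p).mp hp
      exact Stmt14Aux.fiber_bound hm p hmon hirr hdeg (fun j => natPoly b (k j)) j1 hj1
  have hsum : ∑ p ∈ PFin, (fib p).ncard ≤ BFin.card * G ^ s + N * G ^ (s - 1) := by
    refine le_trans (Finset.sum_le_sum hfibbound) ?_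
    rw [Finset.sum_add_distrib, Finset.sum_const, smul_eq_mul]
    have : ∑ p ∈ PFin, (if p ∈ BFin then G ^ s else 0) = BFin.card * G ^ s := by
      rw [Finset.sum_ite_mem, Finset.inter_eq_right.mpr (Finset.filter_subset _ _),
        Finset.sum_const, smul_eq_mul]
    rw [this]
  have hbad : m * BFin.card + 1 ≤ w := by
    have hbb := Stmt14Aux.bad_bound (natPoly b (k j0)) hK0ne BFin
      (fun p hp => (hPmem p).mp (Finset.mem_filter.mp hp).1)
      (fun p hp => (Finset.mem_filter.mp hp).2 j0)
    omega
  -- final ℕ inequality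
  have hnat : {pg : Polynomial (ZMod b) × (Fin s → Polynomial (ZMod b)) |
      (pg.1.Monic ∧ Irreducible pg.1 ∧ pg.1.natDegree = m) ∧
      (∀ j, pg.2 j ≠ 0 ∧ (pg.2 j).natDegree < m) ∧
      pg.1 ∣ ∑ j, natPoly b (k j) * pg.2 j}.ncard * G ≤ 3 * w * (N * G ^ s) := by
    have hGs' : G ^ (s - 1) * G = G ^ s := by
      rw [← pow_succ]; congr 1; omega
    have h1 : BFin.card * G + N ≤ 3 * w * N := by
      have h2 : BFin.card * G ≤ BFin.card * (2 * (m * N)) :=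
        Nat.mul_le_mul_left _ (le_trans (by omega) hgauss)
      have h6 : 2 * (m * BFin.card) + 1 ≤ 3 * w := by omega
      calc BFin.card * G + N ≤ BFin.card * (2 * (m * N)) + N := by omega
        _ = (2 * (m * BFin.card) + 1) * N := by ring
        _ ≤ 3 * w * N := Nat.mul_le_mul_right _ h6
    calc {pg : Polynomial (ZMod b) × (Fin s → Polynomial (ZMod b)) |
        (pg.1.Monic ∧ Irreducible pg.1 ∧ pg.1.natDegree = m) ∧
        (∀ j, pg.2 j ≠ 0 ∧ (pg.2 j).natDegree < m) ∧
        pg.1 ∣ ∑ j, natPoly b (k j) * pg.2 j}.ncard * G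
        ≤ (BFin.card * G ^ s + N * G ^ (s - 1)) * G :=
          Nat.mul_le_mul_right _ (le_trans hAcard hsum)
      _ = BFin.card * G * G ^ s + N * (G ^ (s - 1) * G) := by ring
      _ = (BFin.card * G + N) * G ^ s := by rw [hGs']; ring
      _ ≤ 3 * w * N * G ^ s := Nat.mul_le_mul_right _ h1
      _ = 3 * w * (N * G ^ s) := by ring
  -- conclude over ℝ
  rw [hDen, hDcard]
  have hpos1 : (0 : ℝ) < ((N * G ^ s : ℕ) : ℝ) := by
    have : 0 < N * G ^ s := Nat.mul_pos hN1 (pow_pos (by omega : 0 < G) s)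
    exact_mod_cast this
  have hpos2 : (0 : ℝ) < (b : ℝ) ^ m - 1 := by
    have : (2 : ℝ) ≤ (b : ℝ) ^ m := by exact_mod_cast hbm2
    linarith
  rw [div_le_div_iff₀ hpos1 hpos2]
  have hGcast : ((G : ℕ) : ℝ) = (b : ℝ) ^ m - 1 := by
    rw [hGdef]
    push_cast [Nat.cast_sub (by omega : 1 ≤ b ^ m)]
    ring
  rw [← hGcast]
  have hwcast : (∑ j, (nrtWeight b (k j) : ℝ)) = (w : ℝ) := by
    rw [hw]; push_cast; ring
  rw [hwcast]
  exact_mod_cast hnat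
end

section
/- Let b be a prime, s a positive integer, and a = (a_1,...,a_s) with a_j ≥ 0 for all j. For i ∈ ℕ define vol_a(i) as the number of nonzero k ∈ ℕ_0^s with i ≤ μ_{∞,a}(k) < i+1, where μ_{∞,a}(k) = ∑_j μ_{∞,a_j}(k_j) and μ_{∞,a_j}(k_j) = μ_∞(k_j) + a_j v_j with v_j the number of nonzero base-b digits of k_j. Then for any x ∈ (0,1), vol_a(i) ≤ x^{−(i+1)} ∏_{j=1}^s ∏_{ℓ=1}^∞ (1 + (b−1) x^{ℓ + a_j}), and consequently log vol_a(i) ≤ −(i+1) log x − ((b−1)/log x) ∑_{j=1}^s x^{a_j}. In the unweighted case a_1 = ... = a_s = a ≥ 0, choosing x = exp(−√(s(b−1)/(i+1))) yields vol_a(i) ≤ exp(2√(s(b−1)(i+1))). -/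
/-- The infinite Dick weight `μ_∞(k)`: the sum of the positions (counting
from 1) of all nonzero base-`b` digits of `k`. -/
def infDickWeight (b k : ℕ) : ℕ :=
  ((((List.range (Nat.digits b k).length).filter
      (fun i => (Nat.digits b k).getD i 0 ≠ 0))).map (· + 1)).sum

/-- The number of nonzero base-`b` digits of `k`. -/
def numNZDigits (b k : ℕ) : ℕ := ((Nat.digits b k).filter (· ≠ 0)).length

/-- The modified infinite Dick weight `μ_{∞,a}(k) = ∑_j (μ_∞(k_j) + a_j v_j)`
where `v_j` is the number of nonzero base-`b` digits of `k_j`. -/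
noncomputable def muInfA {s : ℕ} (b : ℕ) (a : Fin s → ℝ) (k : Fin s → ℕ) : ℝ :=
  ∑ j, ((infDickWeight b (k j) : ℝ) + a j * (numNZDigits b (k j) : ℝ))

/-- `vol_a(i)`: the number of nonzero `k ∈ ℕ₀^s` with `i ≤ μ_{∞,a}(k) < i + 1`. -/
noncomputable def volA {s : ℕ} (b : ℕ) (a : Fin s → ℝ) (i : ℕ) : ℕ :=
  {k : Fin s → ℕ | k ≠ 0 ∧ (i : ℝ) ≤ muInfA b a k ∧ muInfA b a k < (i : ℝ) + 1}.ncard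

-- generic list lemma
lemma list_filter_map_sum (p : ℕ → Bool) (f : ℕ → ℕ) (L : ℕ) :
    (((List.range L).filter p).map f).sum
      = ∑ ℓ ∈ Finset.range L, if p ℓ then f ℓ else 0 := by
  induction L with
  | zero => simp
  | succ n ih =>
    rw [List.range_succ, List.filter_append, List.map_append, List.sum_append,
      Finset.sum_range_succ, ih]
    by_cases h : p n <;> simp [h]

-- digit formula
lemma getD_digits {b : ℕ} (hb : 2 ≤ b) (ℓ : ℕ) : ∀ k, (Nat.digits b k).getD ℓ 0 = k / b ^ ℓ % b := by
  induction ℓ with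
  | zero =>
    intro k
    rcases Nat.eq_zero_or_pos k with rfl | hk
    · simp
    · rw [Nat.digits_def' (by omega : 1 < b) hk]; simp
  | succ n ih =>
    intro k
    rcases Nat.eq_zero_or_pos k with rfl | hk
    · simp
    · rw [Nat.digits_def' (by omega : 1 < b) hk]
      simp only [List.getD_cons_succ, ih (k / b), Nat.div_div_eq_div_mul]
      rw [pow_succ']

lemma digits_len_le_of_lt {b : ℕ} (hb : 2 ≤ b) {k N : ℕ} (hk : k < b ^ N) :
    (Nat.digits b k).length ≤ N := by
  rcases Nat.eq_zero_or_pos k with rfl | hk0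
  · simp
  · rw [Nat.digits_len b k (by omega) (by omega)]
    have := Nat.log_lt_of_lt_pow (by omega : k ≠ 0) hk
    omega

lemma infDickWeight_eq {b : ℕ} (hb : 2 ≤ b) {k N : ℕ} (hk : k < b ^ N) :
    infDickWeight b k = ∑ ℓ ∈ Finset.range N, if k / b ^ ℓ % b ≠ 0 then ℓ + 1 else 0 := by
  rw [infDickWeight, list_filter_map_sum]
  have hlen := digits_len_le_of_lt hb hk
  rw [Finset.sum_subset (Finset.range_subset_range.2 hlen)]
  · apply Finset.sum_congr rfl
    intro ℓ _
    rw [getD_digits hb]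
    simp
  · intro ℓ _ hℓ
    simp only [Finset.mem_range, not_lt] at hℓ
    rw [List.getD_eq_default _ _ hℓ]
    simp


lemma filter_len_eq (l : List ℕ) :
    (l.filter (· ≠ 0)).length = ∑ i ∈ Finset.range l.length, if l.getD i 0 ≠ 0 then 1 else 0 := by
  induction l with
  | nil => simp
  | cons hd tl ih =>
    rw [List.length_cons, Finset.sum_range_succ']
    simp only [List.getD_cons_succ, List.getD_cons_zero, List.filter_cons]
    simp only [List.getD_eq_getElem?_getD, ne_eq, decide_not, ite_not] at ih
    by_cases h : hd = 0 <;>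
      simp [List.filter_cons, h, ih, add_comm, List.getD_eq_getElem?_getD]

lemma numNZDigits_eq {b : ℕ} (hb : 2 ≤ b) {k N : ℕ} (hk : k < b ^ N) :
    numNZDigits b k = ∑ ℓ ∈ Finset.range N, if k / b ^ ℓ % b ≠ 0 then 1 else 0 := by
  rw [numNZDigits, filter_len_eq]
  have hlen := digits_len_le_of_lt hb hk
  rw [Finset.sum_subset (Finset.range_subset_range.2 hlen)]
  · exact Finset.sum_congr rfl fun ℓ _ => by rw [getD_digits hb]
  · intro ℓ _ hℓ
    simp only [Finset.mem_range, not_lt] at hℓ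
    rw [List.getD_eq_default _ _ hℓ]
    simp

lemma len_le_infDickWeight {b : ℕ} (hb : 2 ≤ b) (k : ℕ) :
    (Nat.digits b k).length ≤ infDickWeight b k := by
  rcases Nat.eq_zero_or_pos k with rfl | hk0
  · simp
  set L := (Nat.digits b k).length with hL
  have hLpos : 0 < L := by
    rw [hL, List.length_pos_iff]
    exact Nat.digits_ne_nil_iff_ne_zero.mpr (by omega)
  have hkL : k < b ^ L := Nat.lt_base_pow_length_digits (by omega)
  rw [infDickWeight_eq hb hkL]
  have hmem : L - 1 ∈ Finset.range L := Finset.mem_range.2 (by omega)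
  have hne : k / b ^ (L - 1) % b ≠ 0 := by
    rw [← getD_digits hb]
    have h1 : L - 1 < L := by omega
    rw [List.getD_eq_getElem _ _ (by omega)]
    have := Nat.getLast_digit_ne_zero b (m := k) (by omega)
    rwa [List.getLast_eq_getElem] at this
  calc L = (if k / b ^ (L - 1) % b ≠ 0 then (L - 1) + 1 else 0) := by simp [hne]; omega
    _ ≤ _ := Finset.single_le_sum (f := fun ℓ => if k / b ^ ℓ % b ≠ 0 then ℓ + 1 else 0)
        (fun _ _ => by positivity) hmem


lemma digit_low {b N r d ℓ : ℕ} (hb : 2 ≤ b) (hr : r < b ^ N) (hℓ : ℓ < N) :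
    (r + d * b ^ N) / b ^ ℓ % b = r / b ^ ℓ % b := by
  have h1 : d * b ^ N = d * b ^ (N - ℓ - 1) * b * b ^ ℓ := by
    rw [mul_assoc, mul_assoc, ← pow_succ', ← pow_add]
    congr 2
    omega
  rw [h1, Nat.add_mul_div_right _ _ (Nat.pow_pos (by omega : 0 < b)), Nat.add_mul_mod_self_right]

lemma digit_high {b N r d : ℕ} (hr : r < b ^ N) (hd : d < b) :
    (r + d * b ^ N) / b ^ N % b = d := by
  rw [Nat.add_mul_div_right _ _ (Nat.pow_pos (by omega : 0 < b)), Nat.div_eq_of_lt hr, zero_add,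
    Nat.mod_eq_of_lt hd]

lemma sum_pow_digits {b : ℕ} (hb : 2 ≤ b) (g : ℕ → ℕ → ℝ) :
    ∀ N : ℕ, ∑ k ∈ Finset.range (b ^ N), ∏ ℓ ∈ Finset.range N, g ℓ (k / b ^ ℓ % b)
      = ∏ ℓ ∈ Finset.range N, ∑ d ∈ Finset.range b, g ℓ d := by
  intro N
  induction N with
  | zero => simp
  | succ N ih =>
    have hbij : ∑ k ∈ Finset.range (b ^ (N + 1)), ∏ ℓ ∈ Finset.range (N + 1), g ℓ (k / b ^ ℓ % b)
        = ∑ p ∈ Finset.range b ×ˢ Finset.range (b ^ N),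
            ∏ ℓ ∈ Finset.range (N + 1), g ℓ ((p.2 + p.1 * b ^ N) / b ^ ℓ % b) := by
      apply Finset.sum_nbij' (i := fun k => (k / b ^ N, k % b ^ N))
        (j := fun p => p.2 + p.1 * b ^ N)
      · intro k hk
        simp only [Finset.mem_range] at hk
        simp only [Finset.mem_product, Finset.mem_range]
        constructor
        · rw [Nat.div_lt_iff_lt_mul (Nat.pow_pos (by omega : 0 < b))]
          calc k < b ^ (N + 1) := hk
            _ = b * b ^ N := by ring
        · exact Nat.mod_lt _ (Nat.pow_pos (by omega : 0 < b))
      · intro p hp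
        simp only [Finset.mem_product, Finset.mem_range] at hp
        simp only [Finset.mem_range]
        calc p.2 + p.1 * b ^ N < b ^ N + p.1 * b ^ N := by omega
          _ ≤ b ^ N + (b - 1) * b ^ N := by
            have : p.1 ≤ b - 1 := by omega
            exact Nat.add_le_add_left (Nat.mul_le_mul_right _ this) _
          _ = b ^ (N + 1) := by
            have : b ^ N + (b - 1) * b ^ N = (1 + (b - 1)) * b ^ N := by ring
            rw [this, pow_succ']
            congr 1
            omega
      · intro k _; exact Nat.mod_add_div' k (b ^ N)
      · intro p hp
        simp only [Finset.mem_product, Finset.mem_range] at hp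
        have h1 : (p.2 + p.1 * b ^ N) / b ^ N = p.1 := by
          rw [Nat.add_mul_div_right _ _ (Nat.pow_pos (by omega : 0 < b)),
            Nat.div_eq_of_lt hp.2, zero_add]
        have h2 : (p.2 + p.1 * b ^ N) % b ^ N = p.2 := by
          rw [Nat.add_mul_mod_self_right, Nat.mod_eq_of_lt hp.2]
        simp [h1, h2]
      · intro k _
        rw [Nat.mod_add_div']
    rw [hbij]
    have hval : ∀ p ∈ Finset.range b ×ˢ Finset.range (b ^ N),
        ∏ ℓ ∈ Finset.range (N + 1), g ℓ ((p.2 + p.1 * b ^ N) / b ^ ℓ % b)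
          = (∏ ℓ ∈ Finset.range N, g ℓ (p.2 / b ^ ℓ % b)) * g N p.1 := by
      intro p hp
      simp only [Finset.mem_product, Finset.mem_range] at hp
      rw [Finset.prod_range_succ, digit_high hp.2 hp.1]
      congr 1
      exact Finset.prod_congr rfl fun ℓ hℓ => by
        rw [digit_low hb hp.2 (Finset.mem_range.1 hℓ)]
    rw [Finset.sum_congr rfl hval, Finset.sum_product, Finset.prod_range_succ, ← ih]
    rw [Finset.sum_comm]
    simp only [← Finset.mul_sum]
    rw [← Finset.sum_mul]


lemma mu_eq {b : ℕ} (hb : 2 ≤ b) {k N : ℕ} (hk : k < b ^ N) (a : ℝ) :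
    (infDickWeight b k : ℝ) + a * (numNZDigits b k : ℝ)
      = ∑ ℓ ∈ Finset.range N, if k / b ^ ℓ % b ≠ 0 then ((ℓ : ℝ) + 1 + a) else 0 := by
  rw [infDickWeight_eq hb hk, numNZDigits_eq hb hk]
  push_cast
  rw [Finset.mul_sum, ← Finset.sum_add_distrib]
  apply Finset.sum_congr rfl
  intro ℓ _
  split_ifs <;> push_cast <;> ring

lemma rpow_fsum {x : ℝ} (hx : 0 < x) {ι : Type*} (s : Finset ι) (f : ι → ℝ) :
    x ^ (∑ i ∈ s, f i) = ∏ i ∈ s, x ^ (f i) := by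
  rw [Real.rpow_def_of_pos hx, Finset.mul_sum, Real.exp_sum]
  exact Finset.prod_congr rfl fun i _ => (Real.rpow_def_of_pos hx _).symm

lemma onedim {b : ℕ} (hb : 2 ≤ b) {x : ℝ} (hx : 0 < x) (a : ℝ) (N : ℕ) :
    ∑ k ∈ Finset.range (b ^ N), x ^ ((infDickWeight b k : ℝ) + a * (numNZDigits b k : ℝ))
      = ∏ ℓ ∈ Finset.range N, (1 + ((b : ℝ) - 1) * x ^ (((ℓ : ℝ) + 1) + a)) := by
  set g : ℕ → ℕ → ℝ := fun ℓ d => if d ≠ 0 then x ^ (((ℓ : ℝ) + 1) + a) else 1 with hg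
  have step1 : ∀ k ∈ Finset.range (b ^ N),
      x ^ ((infDickWeight b k : ℝ) + a * (numNZDigits b k : ℝ))
        = ∏ ℓ ∈ Finset.range N, g ℓ (k / b ^ ℓ % b) := by
    intro k hk
    rw [mu_eq hb (Finset.mem_range.1 hk) a, rpow_fsum hx]
    apply Finset.prod_congr rfl
    intro ℓ _
    simp only [hg]
    split_ifs with h
    · rfl
    · exact Real.rpow_zero x
  rw [Finset.sum_congr rfl step1, sum_pow_digits hb]
  apply Finset.prod_congr rfl
  intro ℓ _
  simp only [hg]
  obtain ⟨m, rfl⟩ : ∃ m, b = m + 1 := ⟨b - 1, by omega⟩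
  rw [Finset.sum_range_succ']
  simp only [Nat.succ_ne_zero, ne_eq, not_true_eq_false, if_true, if_false]
  rw [Finset.sum_const, nsmul_eq_mul]
  simp only [not_false_iff, if_true, Finset.card_range]
  push_cast
  ring

lemma sdim {b s : ℕ} (hb : 2 ≤ b) {x : ℝ} (hx : 0 < x) (a : Fin s → ℝ) (N : ℕ) :
    ∑ k ∈ Fintype.piFinset (fun _ : Fin s => Finset.range (b ^ N)), x ^ (muInfA b a k)
      = ∏ j, ∏ ℓ ∈ Finset.range N, (1 + ((b : ℝ) - 1) * x ^ (((ℓ : ℝ) + 1) + a j)) := by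
  have : ∀ k : Fin s → ℕ, x ^ (muInfA b a k)
      = ∏ j, x ^ ((infDickWeight b (k j) : ℝ) + a j * (numNZDigits b (k j) : ℝ)) := by
    intro k
    rw [muInfA, rpow_fsum hx]
  rw [Finset.sum_congr rfl fun k _ => this k,
    ← Finset.prod_univ_sum (fun _ : Fin s => Finset.range (b ^ N))
      (fun j m => x ^ ((infDickWeight b m : ℝ) + a j * (numNZDigits b m : ℝ)))]
  exact Finset.prod_congr rfl fun j _ => onedim hb hx (a j) N


lemma mu_nonneg_terms {b s : ℕ} {a : Fin s → ℝ} (ha : ∀ j, 0 ≤ a j) (k : Fin s → ℕ) (j : Fin s) :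
    (0 : ℝ) ≤ (infDickWeight b (k j) : ℝ) + a j * (numNZDigits b (k j) : ℝ) := by
  have := ha j
  positivity

lemma set_subset {b s : ℕ} (hb : 2 ≤ b) {a : Fin s → ℝ} (ha : ∀ j, 0 ≤ a j) (i : ℕ) :
    {k : Fin s → ℕ | k ≠ 0 ∧ (i : ℝ) ≤ muInfA b a k ∧ muInfA b a k < (i : ℝ) + 1}
      ⊆ ↑(Fintype.piFinset (fun _ : Fin s => Finset.range (b ^ (i + 1)))) := by
  intro k hk
  obtain ⟨-, -, hub⟩ := hk
  simp only [Finset.coe_sort_coe, Finset.mem_coe, Fintype.mem_piFinset, Finset.mem_range]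
  intro j
  have h1 : (infDickWeight b (k j) : ℝ) ≤ muInfA b a k := by
    calc (infDickWeight b (k j) : ℝ)
        ≤ (infDickWeight b (k j) : ℝ) + a j * (numNZDigits b (k j) : ℝ) := by
          have := mul_nonneg (ha j) (Nat.cast_nonneg (numNZDigits b (k j)) : (0:ℝ) ≤ _)
          linarith
      _ ≤ muInfA b a k :=
          Finset.single_le_sum (fun l _ => mu_nonneg_terms ha k l) (Finset.mem_univ j)
  have h2 : (infDickWeight b (k j) : ℝ) < (i : ℝ) + 1 := lt_of_le_of_lt h1 hub
  have h3 : infDickWeight b (k j) < i + 1 := by exact_mod_cast h2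
  calc k j < b ^ (Nat.digits b (k j)).length := Nat.lt_base_pow_length_digits (by omega)
    _ ≤ b ^ (i + 1) := Nat.pow_le_pow_right (by omega)
        (le_trans (len_le_infDickWeight hb _) (by omega))

lemma key_bound {b s : ℕ} (hb : 2 ≤ b) {a : Fin s → ℝ} (ha : ∀ j, 0 ≤ a j) (i : ℕ)
    {x : ℝ} (hx : x ∈ Set.Ioo (0 : ℝ) 1) :
    (volA b a i : ℝ) * x ^ ((i : ℝ) + 1)
      ≤ ∏ j, ∏ ℓ ∈ Finset.range (i + 1), (1 + ((b : ℝ) - 1) * x ^ (((ℓ : ℝ) + 1) + a j)) := by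
  obtain ⟨hx0, hx1⟩ := hx
  set S := {k : Fin s → ℕ | k ≠ 0 ∧ (i : ℝ) ≤ muInfA b a k ∧ muInfA b a k < (i : ℝ) + 1}
    with hS
  have hsub := set_subset hb ha i
  have hfin : S.Finite :=
    Set.Finite.subset (Fintype.piFinset (fun _ : Fin s => Finset.range (b ^ (i + 1)))).finite_toSet
      hsub
  have hcard : (volA b a i : ℝ) = (hfin.toFinset.card : ℝ) := by
    rw [volA, ← hS, Set.ncard_eq_toFinset_card S hfin]
  rw [hcard]
  calc (hfin.toFinset.card : ℝ) * x ^ ((i : ℝ) + 1)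
      = ∑ _k ∈ hfin.toFinset, x ^ ((i : ℝ) + 1) := by
        rw [Finset.sum_const, nsmul_eq_mul]
    _ ≤ ∑ k ∈ hfin.toFinset, x ^ (muInfA b a k) := by
        apply Finset.sum_le_sum
        intro k hk
        have hk' : k ∈ S := hfin.mem_toFinset.1 hk
        exact Real.rpow_le_rpow_of_exponent_ge hx0 hx1.le hk'.2.2.le
    _ ≤ ∑ k ∈ Fintype.piFinset (fun _ : Fin s => Finset.range (b ^ (i + 1))),
          x ^ (muInfA b a k) := by
        apply Finset.sum_le_sum_of_subset_of_nonneg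
        · intro k hk
          exact hsub (hfin.mem_toFinset.1 hk)
        · intro k _ _
          positivity
    _ = _ := sdim hb hx0 a (i + 1)



lemma summable_c {b : ℕ} (hb : 2 ≤ b) {x : ℝ} (hx0 : 0 < x) (hx1 : x < 1) (a : ℝ) :
    Summable (fun ℓ : ℕ => ((b : ℝ) - 1) * x ^ (((ℓ : ℝ) + 1) + a)) := by
  have h : ∀ ℓ : ℕ, ((b : ℝ) - 1) * x ^ (((ℓ : ℝ) + 1) + a)
      = (((b : ℝ) - 1) * x ^ ((1 : ℝ) + a)) * x ^ ℓ := by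
    intro ℓ
    rw [show ((ℓ : ℝ) + 1) + a = (ℓ : ℝ) + ((1 : ℝ) + a) by ring, Real.rpow_add hx0,
      Real.rpow_natCast]
    ring
  simp_rw [h]
  exact (summable_geometric_of_lt_one hx0.le hx1).mul_left _

lemma multipliable_f {b : ℕ} (hb : 2 ≤ b) {x : ℝ} (hx0 : 0 < x) (hx1 : x < 1) (a : ℝ) :
    Multipliable (fun ℓ : ℕ => 1 + ((b : ℝ) - 1) * x ^ (((ℓ : ℝ) + 1) + a)) := by
  set c : ℕ → ℝ := fun ℓ => ((b : ℝ) - 1) * x ^ (((ℓ : ℝ) + 1) + a) with hc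
  have hcnn : ∀ ℓ, 0 ≤ c ℓ := by
    intro ℓ
    have hb1 : (1 : ℝ) ≤ (b : ℝ) := by exact_mod_cast (by omega : 1 ≤ b)
    exact mul_nonneg (by linarith) (Real.rpow_nonneg hx0.le _)
  have hpos : ∀ ℓ, (0 : ℝ) < 1 + c ℓ := fun ℓ => by linarith [hcnn ℓ]
  have hsum : Summable (fun ℓ => Real.log (1 + c ℓ)) := by
    apply Summable.of_nonneg_of_le (fun ℓ => Real.log_nonneg (by linarith [hcnn ℓ]))
      (fun ℓ => ?_) (summable_c hb hx0 hx1 a)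
    calc Real.log (1 + c ℓ) ≤ (1 + c ℓ) - 1 := Real.log_le_sub_one_of_pos (hpos ℓ)
      _ = c ℓ := by ring
  have hprod := hsum.hasSum.rexp
  have : (Real.exp ∘ fun ℓ => Real.log (1 + c ℓ)) = fun ℓ => 1 + c ℓ := by
    funext ℓ
    simp [Real.exp_log (hpos ℓ)]
  rw [this] at hprod
  exact ⟨_, hprod⟩

lemma finprod_le_tprod {b : ℕ} (hb : 2 ≤ b) {x : ℝ} (hx0 : 0 < x) (hx1 : x < 1) (a : ℝ) (N : ℕ) :
    ∏ ℓ ∈ Finset.range N, (1 + ((b : ℝ) - 1) * x ^ (((ℓ : ℝ) + 1) + a))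
      ≤ ∏' ℓ : ℕ, (1 + ((b : ℝ) - 1) * x ^ (((ℓ : ℝ) + 1) + a)) := by
  set f : ℕ → ℝ := fun ℓ => 1 + ((b : ℝ) - 1) * x ^ (((ℓ : ℝ) + 1) + a) with hf
  have h1f : ∀ ℓ, (1 : ℝ) ≤ f ℓ := by
    intro ℓ
    have hb1 : (1 : ℝ) ≤ (b : ℝ) := by exact_mod_cast (by omega : 1 ≤ b)
    have := Real.rpow_nonneg hx0.le (((ℓ : ℝ) + 1) + a)
    simp only [hf]
    nlinarith
  have hmul := (multipliable_f hb hx0 hx1 a).hasProd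
  apply ge_of_tendsto hmul
  rw [SummationFilter.unconditional_filter, Filter.eventually_atTop]
  refine ⟨Finset.range N, fun t ht => ?_⟩
  have : ∏ ℓ ∈ Finset.range N, f ℓ ≤ ∏ ℓ ∈ t, f ℓ := by
    rw [← Finset.prod_sdiff ht]
    have h1 : (1 : ℝ) ≤ ∏ ℓ ∈ t \ Finset.range N, f ℓ := by
      calc (1 : ℝ) = ∏ _ℓ ∈ t \ Finset.range N, (1 : ℝ) := by rw [Finset.prod_const_one]
        _ ≤ _ := Finset.prod_le_prod (fun _ _ => zero_le_one) (fun ℓ _ => h1f ℓ)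
    nlinarith [Finset.prod_le_prod (s := Finset.range N) (f := fun _ => (1:ℝ)) (g := f)
      (fun _ _ => zero_le_one) (fun ℓ _ => h1f ℓ), Finset.prod_const_one (s := Finset.range N) (M := ℝ)]
  exact this


lemma one_le_factor {b : ℕ} (hb : 2 ≤ b) {x : ℝ} (hx0 : 0 < x) (a : ℝ) (ℓ : ℕ) :
    (1 : ℝ) ≤ 1 + ((b : ℝ) - 1) * x ^ (((ℓ : ℝ) + 1) + a) := by
  have hb1 : (1 : ℝ) ≤ (b : ℝ) := by exact_mod_cast (by omega : 1 ≤ b)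
  nlinarith [Real.rpow_nonneg hx0.le (((ℓ : ℝ) + 1) + a)]

lemma one_le_finprod_range {b : ℕ} (hb : 2 ≤ b) {x : ℝ} (hx0 : 0 < x) (a : ℝ) (N : ℕ) :
    (1 : ℝ) ≤ ∏ ℓ ∈ Finset.range N, (1 + ((b : ℝ) - 1) * x ^ (((ℓ : ℝ) + 1) + a)) := by
  calc (1:ℝ) = ∏ _ℓ ∈ Finset.range N, (1 : ℝ) := (Finset.prod_const_one).symm
    _ ≤ _ := Finset.prod_le_prod (fun _ _ => zero_le_one) (fun ℓ _ => one_le_factor hb hx0 a ℓ)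

lemma part1 {b s : ℕ} (hb : 2 ≤ b) {a : Fin s → ℝ} (ha : ∀ j, 0 ≤ a j) (i : ℕ)
    {x : ℝ} (hx : x ∈ Set.Ioo (0 : ℝ) 1) :
    (volA b a i : ℝ) ≤ x ^ (-((i : ℝ) + 1)) *
      ∏ j, ∏' ℓ : ℕ, (1 + ((b : ℝ) - 1) * x ^ (((ℓ : ℝ) + 1) + a j)) := by
  obtain ⟨hx0, hx1⟩ := hx
  have hxp : (0 : ℝ) < x ^ ((i : ℝ) + 1) := Real.rpow_pos_of_pos hx0 _
  have h2 : ∏ j, ∏ ℓ ∈ Finset.range (i + 1), (1 + ((b : ℝ) - 1) * x ^ (((ℓ : ℝ) + 1) + a j))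
      ≤ ∏ j, ∏' ℓ : ℕ, (1 + ((b : ℝ) - 1) * x ^ (((ℓ : ℝ) + 1) + a j)) :=
    Finset.prod_le_prod (fun j _ => le_trans zero_le_one (one_le_finprod_range hb hx0 (a j) _))
      (fun j _ => finprod_le_tprod hb hx0 hx1 (a j) _)
  have hkey := le_trans (key_bound hb ha i ⟨hx0, hx1⟩) h2
  rw [Real.rpow_neg hx0.le, ← div_eq_inv_mul, le_div_iff₀ hxp]
  exact hkey

lemma part2 {b s : ℕ} (hb : 2 ≤ b) {a : Fin s → ℝ} (ha : ∀ j, 0 ≤ a j) (i : ℕ)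
    {x : ℝ} (hx : x ∈ Set.Ioo (0 : ℝ) 1) :
    Real.log (volA b a i) ≤ -((i : ℝ) + 1) * Real.log x -
      (((b : ℝ) - 1) / Real.log x) * ∑ j, x ^ (a j) := by
  obtain ⟨hx0, hx1⟩ := hx
  have hb1 : (1 : ℝ) ≤ (b : ℝ) := by exact_mod_cast (by omega : 1 ≤ b)
  have hlogx : Real.log x < 0 := Real.log_neg hx0 hx1
  have hsumnn : (0:ℝ) ≤ ∑ j, x ^ (a j) :=
    Finset.sum_nonneg fun j _ => Real.rpow_nonneg hx0.le _
  -- key analytic fact : x / (1 - x) ≤ -1 / log x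
  have hA : -Real.log x ≤ (1 - x) / x := by
    have := Real.log_le_sub_one_of_pos (x := x⁻¹) (by positivity)
    rw [Real.log_inv] at this
    rw [sub_div]
    field_simp at this ⊢
    linarith
  have hxlog : x / (1 - x) ≤ -1 / Real.log x := by
    rw [show (-1 : ℝ) / Real.log x = 1 / (-Real.log x) by ring,
      div_le_div_iff₀ (by linarith) (by linarith : (0:ℝ) < -Real.log x)]
    have hx' : x * -Real.log x ≤ x * ((1 - x) / x) := by
      apply mul_le_mul_of_nonneg_left hA hx0.le
    rw [mul_div_cancel₀ _ hx0.ne'] at hx'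
    linarith
  set P : Fin s → ℝ := fun j =>
    ∏ ℓ ∈ Finset.range (i + 1), (1 + ((b : ℝ) - 1) * x ^ (((ℓ : ℝ) + 1) + a j)) with hP
  have hP1 : ∀ j, (1 : ℝ) ≤ P j := fun j => one_le_finprod_range hb hx0 (a j) _
  have hgeom : ∑ ℓ ∈ Finset.range (i + 1), x ^ ℓ ≤ 1 / (1 - x) := by
    rw [geom_sum_eq (by linarith : x ≠ 1),
      show (x ^ (i + 1) - 1) / (x - 1) = (1 - x ^ (i + 1)) / (1 - x) by
        rw [← neg_div_neg_eq]; congr 1 <;> ring]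
    exact div_le_div₀ (by norm_num) (by nlinarith [pow_nonneg hx0.le (i + 1)])
      (by linarith) le_rfl
  have hlogP : ∀ j, Real.log (P j) ≤ -(((b : ℝ) - 1) / Real.log x) * x ^ (a j) := by
    intro j
    have hfac := fun ℓ : ℕ => one_le_factor hb hx0 (a j) ℓ
    have h1 : Real.log (P j)
        = ∑ ℓ ∈ Finset.range (i + 1),
            Real.log (1 + ((b : ℝ) - 1) * x ^ (((ℓ : ℝ) + 1) + a j)) :=
      Real.log_prod (fun ℓ _ => by linarith [hfac ℓ])
    have h2 : Real.log (P j)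
        ≤ ∑ ℓ ∈ Finset.range (i + 1), ((b : ℝ) - 1) * x ^ (((ℓ : ℝ) + 1) + a j) := by
      rw [h1]
      apply Finset.sum_le_sum
      intro ℓ _
      have := Real.log_le_sub_one_of_pos (x := 1 + ((b : ℝ) - 1) * x ^ (((ℓ : ℝ) + 1) + a j))
        (by linarith [hfac ℓ])
      linarith
    have h3 : ∑ ℓ ∈ Finset.range (i + 1), ((b : ℝ) - 1) * x ^ (((ℓ : ℝ) + 1) + a j)
        = (((b : ℝ) - 1) * (x * x ^ (a j))) * ∑ ℓ ∈ Finset.range (i + 1), x ^ ℓ := by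
      rw [Finset.mul_sum]
      apply Finset.sum_congr rfl
      intro ℓ _
      rw [show ((ℓ : ℝ) + 1) + a j = (ℓ : ℝ) + ((1 : ℝ) + a j) by ring, Real.rpow_add hx0,
        Real.rpow_natCast, Real.rpow_add hx0, Real.rpow_one]
      ring
    have hnn : (0 : ℝ) ≤ ((b : ℝ) - 1) * x ^ (a j) :=
      mul_nonneg (by linarith) (Real.rpow_nonneg hx0.le _)
    calc Real.log (P j)
        ≤ (((b : ℝ) - 1) * (x * x ^ (a j))) * ∑ ℓ ∈ Finset.range (i + 1), x ^ ℓ := by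
          rw [← h3]; exact h2
      _ ≤ (((b : ℝ) - 1) * (x * x ^ (a j))) * (1 / (1 - x)) := by
          apply mul_le_mul_of_nonneg_left hgeom
          have := Real.rpow_nonneg hx0.le (a j)
          nlinarith
      _ = (((b : ℝ) - 1) * x ^ (a j)) * (x / (1 - x)) := by ring
      _ ≤ (((b : ℝ) - 1) * x ^ (a j)) * (-1 / Real.log x) :=
          mul_le_mul_of_nonneg_left hxlog hnn
      _ = -(((b : ℝ) - 1) / Real.log x) * x ^ (a j) := by ring
  rcases Nat.eq_zero_or_pos (volA b a i) with hv | hv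
  · rw [hv]
    push_cast
    rw [Real.log_zero]
    have h1 : 0 ≤ -((i : ℝ) + 1) * Real.log x := by nlinarith
    have h2 : ((b : ℝ) - 1) / Real.log x ≤ 0 :=
      div_nonpos_of_nonneg_of_nonpos (by linarith) hlogx.le
    have h3 := mul_nonneg (neg_nonneg.2 h2) hsumnn
    rw [neg_mul] at h3
    linarith
  · have hxp : (0 : ℝ) < x ^ ((i : ℝ) + 1) := Real.rpow_pos_of_pos hx0 _
    have hv1 : (1 : ℝ) ≤ (volA b a i : ℝ) := by exact_mod_cast hv
    have hkey := key_bound hb ha i ⟨hx0, hx1⟩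
    have hle : (volA b a i : ℝ) ≤ (∏ j, P j) / x ^ ((i : ℝ) + 1) := by
      rw [le_div_iff₀ hxp]; exact hkey
    have hprodP : (1 : ℝ) ≤ ∏ j, P j := by
      calc (1 : ℝ) = ∏ _j : Fin s, (1 : ℝ) := (Finset.prod_const_one).symm
        _ ≤ _ := Finset.prod_le_prod (fun _ _ => zero_le_one) (fun j _ => hP1 j)
    have hlog1 : Real.log (volA b a i) ≤ Real.log ((∏ j, P j) / x ^ ((i : ℝ) + 1)) :=
      (Real.log_le_log_iff (by linarith) (by positivity)).2 hle
    rw [Real.log_div (by linarith) hxp.ne', Real.log_prod (fun j _ => by linarith [hP1 j]),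
      Real.log_rpow hx0] at hlog1
    have hsum := Finset.sum_le_sum (fun j (_ : j ∈ Finset.univ) => hlogP j)
    calc Real.log (volA b a i)
        ≤ ∑ j, (-(((b : ℝ) - 1) / Real.log x) * x ^ (a j)) - ((i : ℝ) + 1) * Real.log x := by
          linarith
      _ = _ := by rw [← Finset.mul_sum]; ring


lemma part3 {b s : ℕ} (hb : 2 ≤ b) (hs : 0 < s) {a : Fin s → ℝ} (ha : ∀ j, 0 ≤ a j) (i : ℕ)
    (a₀ : ℝ) (ha₀ : 0 ≤ a₀) (haeq : ∀ j, a j = a₀) :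
    (volA b a i : ℝ) ≤
      Real.exp (2 * Real.sqrt ((s : ℝ) * ((b : ℝ) - 1) * ((i : ℝ) + 1))) := by
  set A : ℝ := (s : ℝ) * ((b : ℝ) - 1) with hA
  set B : ℝ := (i : ℝ) + 1 with hB
  have hApos : 0 < A := by
    have h1 : (1 : ℝ) ≤ (s : ℝ) := by exact_mod_cast hs
    have h2 : (2 : ℝ) ≤ (b : ℝ) := by exact_mod_cast hb
    nlinarith
  have hBpos : 0 < B := by positivity
  set t : ℝ := Real.sqrt (A / B) with htdef
  have ht : 0 < t := Real.sqrt_pos.2 (div_pos hApos hBpos)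
  set x : ℝ := Real.exp (-t) with hxdef
  have hx0 : 0 < x := Real.exp_pos _
  have hx1 : x < 1 := Real.exp_lt_one_iff.2 (by linarith)
  have hlogx : Real.log x = -t := Real.log_exp _
  have h2 := part2 hb ha i (x := x) ⟨hx0, hx1⟩
  rw [hlogx] at h2
  have hsum : ∑ j, x ^ (a j) ≤ (s : ℝ) := by
    calc ∑ j, x ^ (a j) ≤ ∑ _j : Fin s, (1 : ℝ) := by
          apply Finset.sum_le_sum
          intro j _
          rw [haeq j]
          exact Real.rpow_le_one hx0.le hx1.le ha₀
      _ = (s : ℝ) := by simp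
  have ht2 : t ^ 2 = A / B := Real.sq_sqrt (div_pos hApos hBpos).le
  have hBt2 : B * t ^ 2 = A := by rw [ht2]; field_simp
  have hst : Real.sqrt (A * B) * t = A := by
    rw [htdef, ← Real.sqrt_mul (by positivity)]
    rw [show A * B * (A / B) = A ^ 2 by field_simp]
    exact Real.sqrt_sq hApos.le
  have hfinal : Real.log (volA b a i) ≤ 2 * Real.sqrt (A * B) := by
    have hb1 : (1 : ℝ) ≤ (b : ℝ) := by exact_mod_cast (by omega : 1 ≤ b)
    have hdiv : (((b : ℝ) - 1) / t) * ∑ j, x ^ (a j) ≤ (((b : ℝ) - 1) / t) * (s : ℝ) :=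
      mul_le_mul_of_nonneg_left hsum (div_nonneg (by linarith) ht.le)
    have heq : B * t + (((b : ℝ) - 1) / t) * (s : ℝ) = 2 * Real.sqrt (A * B) := by
      have h1 : A / t = Real.sqrt (A * B) := by
        rw [div_eq_iff ht.ne']; linarith [hst]
      have h2' : B * t = Real.sqrt (A * B) := by
        have hmul : (B * t) * t = Real.sqrt (A * B) * t := by
          rw [hst]; nlinarith [hBt2]
        exact mul_right_cancel₀ ht.ne' hmul
      rw [show (((b : ℝ) - 1) / t) * (s : ℝ) = A / t by rw [hA]; ring, h1, h2']
      ring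
    calc Real.log (volA b a i)
        ≤ -B * -t - (((b : ℝ) - 1) / -t) * ∑ j, x ^ (a j) := h2
      _ = B * t + (((b : ℝ) - 1) / t) * ∑ j, x ^ (a j) := by ring
      _ ≤ B * t + (((b : ℝ) - 1) / t) * (s : ℝ) := by linarith
      _ = 2 * Real.sqrt (A * B) := heq
  rcases Nat.eq_zero_or_pos (volA b a i) with hv | hv
  · rw [hv]
    push_cast
    positivity
  · have hvpos : (0 : ℝ) < (volA b a i : ℝ) := by exact_mod_cast hv
    calc (volA b a i : ℝ) = Real.exp (Real.log (volA b a i)) := (Real.exp_log hvpos).symm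
      _ ≤ _ := Real.exp_le_exp.2 hfinal

/-- Counting bounds for `vol_a(i)`: the generating-function bound for any
`x ∈ (0,1)`, the resulting logarithmic bound, and in the unweighted case
(`a_j ≡ a₀ ≥ 0`) the bound `exp(2√(s(b-1)(i+1)))`. -/
theorem stmt_17 (b s : ℕ) (hb : b.Prime) (hs : 0 < s)
    (a : Fin s → ℝ) (ha : ∀ j, 0 ≤ a j) (i : ℕ) (hi : 1 ≤ i) :
    (∀ x ∈ Set.Ioo (0 : ℝ) 1,
      (volA b a i : ℝ) ≤ x ^ (-((i : ℝ) + 1)) *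
        ∏ j, ∏' ℓ : ℕ, (1 + ((b : ℝ) - 1) * x ^ (((ℓ : ℝ) + 1) + a j))) ∧
    (∀ x ∈ Set.Ioo (0 : ℝ) 1,
      Real.log (volA b a i) ≤ -((i : ℝ) + 1) * Real.log x -
        (((b : ℝ) - 1) / Real.log x) * ∑ j, x ^ (a j)) ∧
    (∀ a₀ : ℝ, 0 ≤ a₀ → (∀ j, a j = a₀) →
      (volA b a i : ℝ) ≤
        Real.exp (2 * Real.sqrt ((s : ℝ) * ((b : ℝ) - 1) * ((i : ℝ) + 1)))) := by
  have hb2 : 2 ≤ b := hb.two_le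
  exact ⟨fun x hx => part1 hb2 ha i hx, fun x hx => part2 hb2 ha i hx,
    fun a₀ h0 heq => part3 hb2 hs ha i a₀ h0 heq⟩
end

section
/- Let a, q > 0 and x ∈ (0,1). Then ∑_{j=1}^s x^{a(j−1)^q} ≤ 1 + Γ(1/q) / (q a^{1/q} (−log x)^{1/q}) for every positive integer s, where Γ is the Gamma function. -/
open Real Set MeasureTheory

set_option maxHeartbeats 1000000 in
lemma aux_integrable_exp_neg_mul_rpow {c q : ℝ} (hc : 0 < c) (hq : 0 < q) :
    IntegrableOn (fun t : ℝ => Real.exp (-(c * t ^ q))) (Set.Ioi 0) := by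
  have h0 : (1 / q : ℝ) ≠ 0 := one_div_ne_zero hq.ne'
  have base : IntegrableOn (fun t : ℝ => Real.exp (-t) * t ^ (1 / q - 1)) (Set.Ioi 0) :=
    Real.GammaIntegral_convergent (by positivity)
  have scaled : IntegrableOn (fun t : ℝ => Real.exp (-(c * t)) * (c * t) ^ (1 / q - 1))
      (Set.Ioi 0) := by
    have := (integrableOn_Ioi_comp_mul_left_iff
      (fun t : ℝ => Real.exp (-t) * t ^ (1 / q - 1)) 0 hc).mpr (by simpa using base)
    simpa using this
  have scaled2 : IntegrableOn
      (fun t : ℝ => (|1 / q| * t ^ (1 / q - 1)) •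
        Real.exp (-(c * (t ^ (1 / q)) ^ q))) (Set.Ioi 0) := by
    have h1 : IntegrableOn
        (fun t : ℝ => (|1 / q| * c ^ (1 - 1 / q)) *
          (Real.exp (-(c * t)) * (c * t) ^ (1 / q - 1))) (Set.Ioi 0) :=
      scaled.const_mul _
    refine h1.congr_fun (fun t ht => ?_) measurableSet_Ioi
    have ht' : (0:ℝ) < t := ht
    have hq' : (t ^ (1/q)) ^ q = t := by
      rw [← Real.rpow_mul ht'.le, one_div_mul_cancel hq.ne', Real.rpow_one]
    have hcc : c ^ ((1:ℝ) - 1/q) * c ^ ((1:ℝ)/q - 1) = 1 := by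
      rw [← Real.rpow_add hc]; norm_num
    beta_reduce
    rw [hq', Real.mul_rpow hc.le ht'.le]
    simp only [smul_eq_mul]
    linear_combination (|1/q| * t ^ ((1:ℝ)/q - 1) * Real.exp (-(c * t))) * hcc
  have := (integrableOn_Ioi_comp_rpow_iff
    (fun t : ℝ => Real.exp (-(c * t ^ q))) h0).mp scaled2
  exact this

/-- For `a, q > 0` and `x ∈ (0,1)`:
`∑_{j=1}^{s} x^{a (j-1)^q} ≤ 1 + Γ(1/q) / (q a^{1/q} (-log x)^{1/q})`. -/
theorem stmt_18 (a q x : ℝ) (ha : 0 < a) (hq : 0 < q)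
    (hx : x ∈ Set.Ioo (0 : ℝ) 1) (s : ℕ) (hs : 0 < s) :
    ∑ j ∈ Finset.range s, x ^ (a * (j : ℝ) ^ q) ≤
      1 + Real.Gamma (1 / q) / (q * a ^ (1 / q) * (-Real.log x) ^ (1 / q)) := by
  obtain ⟨hx0, hx1⟩ := hx
  have hlog : Real.log x < 0 := Real.log_neg hx0 hx1
  set c : ℝ := a * (-Real.log x) with hc_def
  have hc : 0 < c := mul_pos ha (by linarith)
  -- rewrite terms as exponentials
  have hterm : ∀ j : ℕ, x ^ (a * (j : ℝ) ^ q) = Real.exp (-(c * (j : ℝ) ^ q)) := by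
    intro j
    rw [Real.rpow_def_of_pos hx0]
    congr 1
    rw [hc_def]; ring
  simp_rw [hterm]
  -- split off the first term
  obtain ⟨n, rfl⟩ : ∃ n, s = n + 1 := ⟨s - 1, (Nat.succ_pred_eq_of_pos hs).symm⟩
  rw [Finset.sum_range_succ']
  have h0 : Real.exp (-(c * (0:ℕ) ^ q)) = 1 := by
    simp [Real.zero_rpow hq.ne']
  rw [h0, add_comm (1:ℝ)]
  gcongr
  -- sum over j ≥ 1 bounded by integral
  set f : ℝ → ℝ := fun t => Real.exp (-(c * t ^ q)) with hf_def
  have hanti : AntitoneOn f (Set.Icc (0:ℝ) (0 + n)) := by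
    intro u hu v hv huv
    have : u ^ q ≤ v ^ q := Real.rpow_le_rpow hu.1 huv hq.le
    exact Real.exp_le_exp.mpr (by nlinarith)
  have hsum : ∑ i ∈ Finset.range n, f ((0:ℝ) + (i + 1 : ℕ)) ≤
      ∫ t in (0:ℝ)..(0 + n), f t := hanti.sum_le_integral
  have hint : IntegrableOn f (Set.Ioi 0) := aux_integrable_exp_neg_mul_rpow hc hq
  have hIoi : ∫ t in (0:ℝ)..(0 + n), f t ≤ ∫ t in Set.Ioi (0:ℝ), f t := by
    rw [intervalIntegral.integral_of_le (by positivity)]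
    refine setIntegral_mono_set hint ?_ ?_
    · filter_upwards with t using Real.exp_nonneg _
    · filter_upwards with t using fun h => Set.Ioc_subset_Ioi_self h
  have hval : ∫ t in Set.Ioi (0:ℝ), f t =
      Real.Gamma (1 / q) / (q * a ^ (1 / q) * (-Real.log x) ^ (1 / q)) := by
    have := integral_exp_neg_mul_rpow hq hc
    simp_rw [hf_def, neg_mul] at this ⊢
    rw [this, Real.Gamma_add_one (one_div_ne_zero hq.ne'), hc_def]
    have hca : (a * (-Real.log x)) ^ (-1/q : ℝ)
        = (a ^ (1/q : ℝ) * (-Real.log x) ^ (1/q : ℝ))⁻¹ := by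
      rw [show (-1/q : ℝ) = -(1/q) by ring, Real.rpow_neg (by positivity),
        Real.mul_rpow ha.le (by linarith : (0:ℝ) ≤ -Real.log x)]
    rw [hca]
    have hA : (a:ℝ) ^ (1/q : ℝ) ≠ 0 := (Real.rpow_pos_of_pos ha _).ne'
    have hB : (-Real.log x) ^ (1/q : ℝ) ≠ 0 :=
      (Real.rpow_pos_of_pos (by linarith) _).ne'
    field_simp
  calc ∑ k ∈ Finset.range n, Real.exp (-(c * ((k + 1 : ℕ) : ℝ) ^ q))
      = ∑ i ∈ Finset.range n, f ((0:ℝ) + (i + 1 : ℕ)) := by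
        refine Finset.sum_congr rfl fun i _ => ?_
        simp [hf_def]
    _ ≤ ∫ t in (0:ℝ)..(0 + n), f t := hsum
    _ ≤ ∫ t in Set.Ioi (0:ℝ), f t := hIoi
    _ = _ := hval
end
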